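/- arXiv:2109.14771 — 7 statements merged into one kernel-verified Lean document; each statement's English description precedes it below -/
import Mathlib

section
/- Let M̄ > 0, μ > 0, ρ > 1. Then there exist constants c, C, α > 0, depending only on M̄, μ, ρ (and not on N or D), with the following property: for every N ≥ 1, every symmetric continuous function f on [-1,1]^N admitting a uniformly convergent Chebyshev expansion f = Σ_{v ∈ ℕ^N} f̂_v T_v with Σ_v ρ^{‖v‖₁}|f̂_v| ≤ M̄ μ^N, and every integer D ≥ cN, the total-degree truncation f_D := Σ_{‖v‖₁ ≤ D} f̂_v T_v satisfies sup_{x ∈ [-1,1]^N} |f(x) − f_D(x)| ≤ C·exp(−α·(log P(N,D))²), where P(N,D) is the number of nondecreasing tuples 𝐯 ∈ ℕ^N with ‖𝐯‖₁ ≤ D. -/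
open scoped BigOperators Classical

/-- The Chebyshev tensor product basis function `T_v(x) = ∏_t T_{v_t}(x_t)`. -/
noncomputable def chebProd {N : ℕ} (v : Fin N → ℕ) (x : Fin N → ℝ) : ℝ :=
  ∏ t : Fin N, (Polynomial.Chebyshev.T ℝ (v t : ℤ)).eval (x t)

/-- The total-degree `D` truncation of the Chebyshev series with coefficients `fhat`. -/
noncomputable def chebTrunc {N : ℕ} (fhat : (Fin N → ℕ) → ℝ) (D : ℕ)
    (x : Fin N → ℝ) : ℝ :=
  ∑' v : Fin N → ℕ, if (∑ t, v t) ≤ D then fhat v * chebProd v x else 0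

/-- The finite set of nondecreasing tuples `𝐯 ∈ ℕ^N` with `‖𝐯‖₁ ≤ D`;
its cardinality is `P(N,D)`. -/
noncomputable def ordTuples (N D : ℕ) : Finset (Fin N → ℕ) :=
  (Fintype.piFinset fun _ : Fin N => Finset.range (D + 1)).filter
    (fun v => Monotone v ∧ ∑ t, v t ≤ D)

noncomputable def multSet (D : ℕ) : Finset (Fin D → ℕ) :=
  (Fintype.piFinset fun _ : Fin D => Finset.range (D + 1)).filter
    (fun m => ∑ k : Fin D, ((k : ℕ) + 1) * m k ≤ D)

noncomputable def multOf {N : ℕ} (D : ℕ) (v : Fin N → ℕ) : Fin D → ℕ :=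
  fun k => (Finset.univ.filter (fun t => v t = (k : ℕ) + 1)).card

lemma ordTuples_le_bound {N D : ℕ} {v : Fin N → ℕ} (hv : v ∈ ordTuples N D) :
    ∀ t, v t ≤ D := by
  intro t
  simp only [ordTuples, Finset.mem_filter] at hv
  exact le_trans (Finset.single_le_sum (f := v) (fun _ _ => Nat.zero_le _) (Finset.mem_univ t))
    hv.2.2

lemma multOf_weight {N D : ℕ} {v : Fin N → ℕ} (hvD : ∀ t, v t ≤ D) :
    ∑ k : Fin D, ((k : ℕ) + 1) * multOf D v k = ∑ t, v t := by
  have key : ∀ t : Fin N,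
      (∑ k : Fin D, if v t = (k : ℕ) + 1 then ((k : ℕ) + 1) else 0) = v t := by
    intro t
    rcases Nat.eq_zero_or_pos (v t) with h0 | hpos
    · rw [h0]
      apply Finset.sum_eq_zero
      intro k _
      simp [h0]
    · have hlt : v t - 1 < D := by have := hvD t; omega
      rw [Finset.sum_eq_single (⟨v t - 1, hlt⟩ : Fin D)]
      · simp only [Fin.val_mk]
        rw [if_pos (by omega)]
        omega
      · intro k _ hk
        rw [if_neg]
        intro hEq
        apply hk
        apply Fin.ext
        simp only [Fin.val_mk]
        omega
      · intro h; exact absurd (Finset.mem_univ _) h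
  calc ∑ k : Fin D, ((k : ℕ) + 1) * multOf D v k
      = ∑ k : Fin D, ∑ t : Fin N, (if v t = (k : ℕ) + 1 then ((k : ℕ) + 1) else 0) := by
        apply Finset.sum_congr rfl
        intro k _
        rw [multOf, Finset.card_eq_sum_ones, Finset.sum_filter, Finset.mul_sum]
        simp [mul_ite]
    _ = ∑ t : Fin N, ∑ k : Fin D, (if v t = (k : ℕ) + 1 then ((k : ℕ) + 1) else 0) :=
        Finset.sum_comm
    _ = ∑ t, v t := Finset.sum_congr rfl (fun t _ => key t)

lemma multOf_mem {N D : ℕ} {v : Fin N → ℕ} (hv : v ∈ ordTuples N D) :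
    multOf D v ∈ multSet D := by
  have hvD := ordTuples_le_bound hv
  simp only [ordTuples, Finset.mem_filter] at hv
  have hw : ∑ k : Fin D, ((k : ℕ) + 1) * multOf D v k ≤ D := by
    rw [multOf_weight hvD]; exact hv.2.2
  simp only [multSet, Finset.mem_filter, Fintype.mem_piFinset, Finset.mem_range]
  refine ⟨fun k => ?_, hw⟩
  have h1 : ((k : ℕ) + 1) * multOf D v k ≤ D :=
    le_trans (Finset.single_le_sum (f := fun k : Fin D => ((k : ℕ) + 1) * multOf D v k)
      (fun _ _ => Nat.zero_le _) (Finset.mem_univ k)) hw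
  have : multOf D v k ≤ ((k : ℕ) + 1) * multOf D v k := Nat.le_mul_of_pos_left _ (by omega)
  omega


lemma count_eq_multOf {N D : ℕ} (v : Fin N → ℕ) {a : ℕ} (ha : 1 ≤ a) (haD : a ≤ D) :
    (Multiset.map v Finset.univ.val).count a = multOf D v ⟨a - 1, by omega⟩ := by
  rw [Multiset.count_map, ← Finset.filter_val, ← Finset.card_def, multOf]
  congr 1
  apply Finset.filter_congr
  intro t _
  simp only [Fin.val_mk]
  constructor <;> (intro h; omega)

lemma sum_counts {N D : ℕ} (v : Fin N → ℕ) (hvD : ∀ t, v t ≤ D) :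
    ∑ a ∈ Finset.range (D + 1), (Multiset.map v Finset.univ.val).count a = N := by
  set M := Multiset.map v Finset.univ.val with hM
  have hsub : M.toFinset ⊆ Finset.range (D + 1) := by
    intro a ha
    rw [Multiset.mem_toFinset, hM, Multiset.mem_map] at ha
    obtain ⟨t, _, rfl⟩ := ha
    simp only [Finset.mem_range]
    exact Nat.lt_succ_of_le (hvD t)
  have h1 : ∑ a ∈ M.toFinset, M.count a = ∑ a ∈ Finset.range (D + 1), M.count a :=
    Finset.sum_subset hsub (fun a _ ha => Multiset.count_eq_zero_of_notMem
      (fun h => ha (Multiset.mem_toFinset.mpr h)))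
  rw [← h1, Multiset.toFinset_sum_count_eq, hM, Multiset.card_map]
  simp

lemma multOf_inj {N D : ℕ} {v w : Fin N → ℕ} (hv : v ∈ ordTuples N D)
    (hw : w ∈ ordTuples N D) (h : multOf D v = multOf D w) : v = w := by
  have hvD := ordTuples_le_bound hv
  have hwD := ordTuples_le_bound hw
  simp only [ordTuples, Finset.mem_filter] at hv hw
  have hvm : Monotone v := hv.2.1
  have hwm : Monotone w := hw.2.1
  have hcount : ∀ a : ℕ, 1 ≤ a →
      (Multiset.map v Finset.univ.val).count a = (Multiset.map w Finset.univ.val).count a := by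
    intro a ha
    rcases le_or_gt a D with haD | haD
    · rw [count_eq_multOf v ha haD, count_eq_multOf w ha haD, h]
    · have h1 : a ∉ Multiset.map v Finset.univ.val := by
        rw [Multiset.mem_map]
        rintro ⟨t, _, rfl⟩
        exact absurd (hvD t) (by omega)
      have h2 : a ∉ Multiset.map w Finset.univ.val := by
        rw [Multiset.mem_map]
        rintro ⟨t, _, rfl⟩
        exact absurd (hwD t) (by omega)
      rw [Multiset.count_eq_zero_of_notMem h1, Multiset.count_eq_zero_of_notMem h2]
  have hMvw : Multiset.map v Finset.univ.val = Multiset.map w Finset.univ.val := by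
    have h0mem : (0 : ℕ) ∈ Finset.range (D + 1) := by simp
    have hs : ∑ a ∈ (Finset.range (D + 1)).erase 0,
          (Multiset.map v Finset.univ.val).count a
        = ∑ a ∈ (Finset.range (D + 1)).erase 0,
          (Multiset.map w Finset.univ.val).count a := by
      apply Finset.sum_congr rfl
      intro a ha
      exact hcount a (Nat.one_le_iff_ne_zero.mpr (Finset.ne_of_mem_erase ha))
    have hc0 : (Multiset.map v Finset.univ.val).count 0
        = (Multiset.map w Finset.univ.val).count 0 := by
      have e1 := sum_counts v hvD
      have e2 := sum_counts w hwD
      rw [← Finset.sum_erase_add _ _ h0mem] at e1 e2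
      omega
    refine Multiset.ext.mpr (fun a => ?_)
    rcases Nat.eq_zero_or_pos a with rfl | ha
    · exact hc0
    · exact hcount a ha
  have hlist : (↑(List.ofFn v) : Multiset ℕ) = (↑(List.ofFn w) : Multiset ℕ) := by
    have huniv : (Finset.univ : Finset (Fin N)).val = ↑(List.finRange N) := rfl
    rw [List.ofFn_eq_map, List.ofFn_eq_map, ← Multiset.map_coe, ← Multiset.map_coe, ← huniv]
    exact hMvw
  have hperm : List.Perm (List.ofFn v) (List.ofFn w) := Multiset.coe_eq_coe.mp hlist
  exact List.ofFn_injective (List.Perm.eq_of_sortedLE hvm.sortedLE_ofFn hwm.sortedLE_ofFn hperm)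

lemma card_ordTuples_le (N D : ℕ) : (ordTuples N D).card ≤ (multSet D).card :=
  Finset.card_le_card_of_injOn (multOf D) (fun v hv => multOf_mem hv)
    (fun v hv w hw h => multOf_inj hv hw h)

lemma card_multSet_le (D : ℕ) {x : ℝ} (hx0 : 0 < x) (hx1 : x < 1) :
    ((multSet D).card : ℝ) * x ^ D ≤ ∏ k : Fin D, (1 - x ^ ((k : ℕ) + 1))⁻¹ := by
  calc ((multSet D).card : ℝ) * x ^ D = ∑ _m ∈ multSet D, x ^ D := by
        rw [Finset.sum_const, nsmul_eq_mul]
    _ ≤ ∑ m ∈ multSet D, x ^ (∑ k : Fin D, ((k : ℕ) + 1) * m k) := by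
        apply Finset.sum_le_sum
        intro m hm
        have hmem : ∑ k : Fin D, ((k : ℕ) + 1) * m k ≤ D := by
          simp only [multSet, Finset.mem_filter] at hm; exact hm.2
        exact pow_le_pow_of_le_one hx0.le hx1.le hmem
    _ ≤ ∑ m ∈ Fintype.piFinset (fun _ : Fin D => Finset.range (D + 1)),
          x ^ (∑ k : Fin D, ((k : ℕ) + 1) * m k) :=
        Finset.sum_le_sum_of_subset_of_nonneg (Finset.filter_subset _ _)
          (fun m _ _ => pow_nonneg hx0.le _)
    _ = ∑ m ∈ Fintype.piFinset (fun _ : Fin D => Finset.range (D + 1)),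
          ∏ k : Fin D, x ^ (((k : ℕ) + 1) * m k) := by
        refine Finset.sum_congr rfl (fun m _ => ?_)
        rw [Finset.prod_pow_eq_pow_sum]
    _ = ∏ k : Fin D, ∑ j ∈ Finset.range (D + 1), x ^ (((k : ℕ) + 1) * j) :=
        (Finset.prod_univ_sum (fun _ : Fin D => Finset.range (D + 1))
          (fun k j => x ^ (((k : ℕ) + 1) * j))).symm
    _ ≤ ∏ k : Fin D, (1 - x ^ ((k : ℕ) + 1))⁻¹ := by
        apply Finset.prod_le_prod
        · intro k _; exact Finset.sum_nonneg fun j _ => pow_nonneg hx0.le _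
        · intro k _
          have hy0 : (0 : ℝ) ≤ x ^ ((k : ℕ) + 1) := pow_nonneg hx0.le _
          have hy1 : x ^ ((k : ℕ) + 1) < 1 := pow_lt_one₀ hx0.le hx1 (by omega)
          calc ∑ j ∈ Finset.range (D + 1), x ^ (((k : ℕ) + 1) * j)
              = ∑ j ∈ Finset.range (D + 1), (x ^ ((k : ℕ) + 1)) ^ j := by
                refine Finset.sum_congr rfl fun j _ => ?_; rw [← pow_mul]
            _ ≤ ∑' j : ℕ, (x ^ ((k : ℕ) + 1)) ^ j :=
                Summable.sum_le_tsum _ (fun j _ => pow_nonneg hy0 _)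
                  (summable_geometric_of_lt_one hy0 hy1)
            _ = (1 - x ^ ((k : ℕ) + 1))⁻¹ := tsum_geometric_of_lt_one hy0 hy1


lemma basel_shift : HasSum (fun j : ℕ => 1 / ((j : ℝ) + 1) ^ 2) (Real.pi ^ 2 / 6) := by
  have h := (hasSum_nat_add_iff (f := fun n : ℕ => 1 / (n : ℝ) ^ 2) 1).mpr
    (by simpa using hasSum_zeta_two)
  simpa using h

lemma log_one_sub_sum_le (D : ℕ) {x : ℝ} (hx0 : 0 < x) (hx1 : x < 1) :
    ∑ k : Fin D, -Real.log (1 - x ^ ((k : ℕ) + 1)) ≤ 2 / (1 - x) := by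
  have hxabs : ∀ k : Fin D, |x ^ ((k : ℕ) + 1)| < 1 := by
    intro k
    rw [abs_of_pos (pow_pos hx0 _)]
    exact pow_lt_one₀ hx0.le hx1 (by omega)
  set g : Fin D → ℕ → ℝ := fun k j => (x ^ ((k : ℕ) + 1)) ^ (j + 1) / (j + 1) with hg
  have hHS : ∀ k : Fin D, HasSum (g k) (-Real.log (1 - x ^ ((k : ℕ) + 1))) := fun k =>
    Real.hasSum_pow_div_log_of_abs_lt_one (hxabs k)
  have hb : ∀ j : ℕ, ∑ k : Fin D, g k j ≤ (1 - x)⁻¹ * (1 / ((j : ℝ) + 1) ^ 2) := by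
    intro j
    have hj : (0 : ℝ) < (j : ℝ) + 1 := by positivity
    set y : ℝ := x ^ (j + 1) with hy
    have hy0 : 0 < y := pow_pos hx0 _
    have hy1 : y < 1 := pow_lt_one₀ hx0.le hx1 (by omega)
    have h1y : (0 : ℝ) < 1 - y := by linarith
    have hsum_g : ∑ k : Fin D, g k j = (∑ k : Fin D, y ^ ((k : ℕ) + 1)) / ((j : ℝ) + 1) := by
      rw [Finset.sum_div]
      refine Finset.sum_congr rfl fun k _ => ?_
      show (x ^ ((k : ℕ) + 1)) ^ (j + 1) / ((j : ℝ) + 1) = y ^ ((k : ℕ) + 1) / ((j : ℝ) + 1)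
      rw [hy, ← pow_mul, ← pow_mul, mul_comm]
    have hSy : ∑ k : Fin D, y ^ ((k : ℕ) + 1) ≤ y / (1 - y) := by
      calc ∑ k : Fin D, y ^ ((k : ℕ) + 1)
          = (∑ k ∈ Finset.range D, y ^ k) * y := by
            rw [Fin.sum_univ_eq_sum_range (fun k => y ^ (k + 1)), Finset.sum_mul]
            exact Finset.sum_congr rfl fun k _ => (pow_succ y k)
        _ ≤ (1 - y)⁻¹ * y := by
            apply mul_le_mul_of_nonneg_right _ hy0.le
            exact le_trans (Summable.sum_le_tsum _ (fun k _ => pow_nonneg hy0.le _)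
              (summable_geometric_of_lt_one hy0.le hy1))
              (le_of_eq (tsum_geometric_of_lt_one hy0.le hy1))
        _ = y / (1 - y) := by rw [div_eq_mul_inv, mul_comm]
    have key : ((j : ℝ) + 1) * (1 - x) * y ≤ 1 - y := by
      have hgeom : (1 - x) * ∑ i ∈ Finset.range (j + 1), x ^ i = 1 - y := by
        have := geom_sum_mul (x := x) (n := j + 1)
        rw [hy]; nlinarith [this]
      have hterm : ((j : ℝ) + 1) * x ^ j ≤ ∑ i ∈ Finset.range (j + 1), x ^ i := by
        have := Finset.card_nsmul_le_sum (Finset.range (j + 1)) (fun i => x ^ i) (x ^ j)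
          (fun i hi => pow_le_pow_of_le_one hx0.le hx1.le
            (by simp only [Finset.mem_range] at hi; omega))
        simpa [nsmul_eq_mul] using this
      have hxj : y ≤ x ^ j := by
        rw [hy]; exact pow_le_pow_of_le_one hx0.le hx1.le (by omega)
      have h1xpos : (0 : ℝ) ≤ 1 - x := by linarith
      nlinarith [mul_le_mul_of_nonneg_left hterm h1xpos,
        mul_le_mul_of_nonneg_left hxj (mul_nonneg (le_of_lt hj) h1xpos)]
    have goal2 : y / (1 - y) ≤ 1 / (((j : ℝ) + 1) * (1 - x)) := by
      rw [div_le_div_iff₀ h1y (by nlinarith)]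
      nlinarith [key]
    calc ∑ k : Fin D, g k j = (∑ k : Fin D, y ^ ((k : ℕ) + 1)) / ((j : ℝ) + 1) := hsum_g
      _ ≤ (y / (1 - y)) / ((j : ℝ) + 1) := (div_le_div_iff_of_pos_right hj).mpr hSy
      _ ≤ (1 / (((j : ℝ) + 1) * (1 - x))) / ((j : ℝ) + 1) := (div_le_div_iff_of_pos_right hj).mpr goal2
      _ = (1 - x)⁻¹ * (1 / ((j : ℝ) + 1) ^ 2) := by
          field_simp
  have h1xp : (0 : ℝ) < 1 - x := by linarith
  have hswap : ∑ k : Fin D, -Real.log (1 - x ^ ((k : ℕ) + 1)) = ∑' j : ℕ, ∑ k : Fin D, g k j := by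
    rw [Summable.tsum_finsetSum (fun k _ => (hHS k).summable)]
    exact Finset.sum_congr rfl fun k _ => ((hHS k).tsum_eq).symm
  rw [hswap]
  have hsumb : Summable (fun j : ℕ => (1 - x)⁻¹ * (1 / ((j : ℝ) + 1) ^ 2)) :=
    basel_shift.summable.mul_left _
  have hsumL : Summable (fun j : ℕ => ∑ k : Fin D, g k j) :=
    summable_sum (fun k _ => (hHS k).summable)
  calc ∑' j : ℕ, ∑ k : Fin D, g k j
      ≤ ∑' j : ℕ, (1 - x)⁻¹ * (1 / ((j : ℝ) + 1) ^ 2) := Summable.tsum_le_tsum hb hsumL hsumb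
    _ = (1 - x)⁻¹ * (Real.pi ^ 2 / 6) := by rw [tsum_mul_left, basel_shift.tsum_eq]
    _ ≤ (1 - x)⁻¹ * 2 := by
        apply mul_le_mul_of_nonneg_left _ (le_of_lt (inv_pos.mpr h1xp))
        nlinarith [Real.pi_lt_d2, Real.pi_pos]
    _ = 2 / (1 - x) := by rw [div_eq_mul_inv, mul_comm]


lemma log_card_ordTuples {N D : ℕ} (hD : 4 ≤ D) :
    Real.log ((ordTuples N D).card : ℝ) ≤ 4 * Real.sqrt D := by
  rcases Nat.eq_zero_or_pos (ordTuples N D).card with h0 | hpos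
  · rw [h0]
    simp only [Nat.cast_zero, Real.log_zero]
    positivity
  obtain ⟨s, hs⟩ : ∃ s : ℝ, s = Real.sqrt (D : ℝ) := ⟨_, rfl⟩
  have hs2 : 2 ≤ s := by
    have h4 : (4 : ℝ) ≤ (D : ℝ) := by exact_mod_cast hD
    have : Real.sqrt 4 ≤ s := hs ▸ Real.sqrt_le_sqrt h4
    rwa [show (4:ℝ) = 2 ^ 2 by norm_num, Real.sqrt_sq (by norm_num : (0:ℝ) ≤ 2)] at this
  have hs0 : (0:ℝ) < s := by linarith
  obtain ⟨x, hxdef⟩ : ∃ x : ℝ, x = 1 - 1 / s := ⟨_, rfl⟩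
  have h1x : 1 - x = 1 / s := by rw [hxdef]; ring
  have hsinv : 1 / s ≤ 1 / 2 := by
    apply one_div_le_one_div_of_le (by norm_num) hs2
  have hsinv0 : 0 < 1 / s := by positivity
  have hxhalf : 1 / 2 ≤ x := by rw [hxdef]; linarith
  have hx0 : (0:ℝ) < x := by linarith
  have hx1 : x < 1 := by rw [hxdef]; linarith
  have hDs : (D : ℝ) = s * s := by
    rw [hs]; exact (Real.mul_self_sqrt (by positivity)).symm
  rw [← hs]
  have hcmpos : 0 < (multSet D).card := lt_of_lt_of_le hpos (card_ordTuples_le N D)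
  have hlog1 : Real.log ((ordTuples N D).card : ℝ) ≤ Real.log ((multSet D).card : ℝ) := by
    apply Real.log_le_log (by exact_mod_cast hpos)
    exact_mod_cast card_ordTuples_le N D
  have hppos : ∀ k : Fin D, (0:ℝ) < 1 - x ^ ((k : ℕ) + 1) := by
    intro k
    have : x ^ ((k : ℕ) + 1) < 1 := pow_lt_one₀ hx0.le hx1 (by omega)
    linarith
  have hProdPos : (0:ℝ) < ∏ k : Fin D, (1 - x ^ ((k : ℕ) + 1))⁻¹ :=
    Finset.prod_pos (fun k _ => inv_pos.mpr (hppos k))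
  have hcm' : ((multSet D).card : ℝ)
      ≤ (∏ k : Fin D, (1 - x ^ ((k : ℕ) + 1))⁻¹) / x ^ D := by
    rw [le_div_iff₀ (pow_pos hx0 D)]
    exact card_multSet_le D hx0 hx1
  have hlog2 : Real.log ((multSet D).card : ℝ)
      ≤ Real.log ((∏ k : Fin D, (1 - x ^ ((k : ℕ) + 1))⁻¹) / x ^ D) :=
    Real.log_le_log (by exact_mod_cast hcmpos) hcm'
  rw [Real.log_div hProdPos.ne' (pow_ne_zero _ hx0.ne'),
    Real.log_prod (fun k _ => (inv_pos.mpr (hppos k)).ne'), Real.log_pow] at hlog2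
  have hterm : ∀ k : Fin D, Real.log ((1 - x ^ ((k : ℕ) + 1))⁻¹)
      = -Real.log (1 - x ^ ((k : ℕ) + 1)) := fun k => Real.log_inv _
  rw [Finset.sum_congr rfl (fun k _ => hterm k)] at hlog2
  have hsum := log_one_sub_sum_le D hx0 hx1
  have hlogx : -Real.log x ≤ 2 * (1 - x) := by
    have hlx := Real.log_le_sub_one_of_pos (show (0:ℝ) < x⁻¹ by positivity)
    rw [Real.log_inv] at hlx
    have h2x : x⁻¹ ≤ 2 := by
      rw [inv_le_comm₀ (by linarith) (by norm_num)]
      linarith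
    have hxx : x * x⁻¹ = 1 := mul_inv_cancel₀ hx0.ne'
    nlinarith [mul_le_mul_of_nonneg_left h2x (show (0:ℝ) ≤ 1 - x by linarith)]
  have hDlogx : -((D : ℝ) * Real.log x) ≤ 2 * s := by
    have : (D : ℝ) * (-Real.log x) ≤ (D : ℝ) * (2 * (1 - x)) :=
      mul_le_mul_of_nonneg_left hlogx (by positivity)
    have heq : (D : ℝ) * (2 * (1 - x)) = 2 * s := by
      rw [h1x, hDs]; field_simp
    nlinarith [this]
  have h2s : 2 / (1 - x) = 2 * s := by rw [h1x]; field_simp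
  calc Real.log ((ordTuples N D).card : ℝ)
      ≤ ∑ k : Fin D, -Real.log (1 - x ^ ((k : ℕ) + 1)) - (D : ℝ) * Real.log x :=
        le_trans hlog1 hlog2
    _ ≤ 2 * s + 2 * s := by
        have := hsum
        rw [h2s] at this
        linarith
    _ = 4 * s := by ring


lemma cheb_abs_le (n : ℤ) {y : ℝ} (hy : y ∈ Set.Icc (-1:ℝ) 1) :
    |(Polynomial.Chebyshev.T ℝ n).eval y| ≤ 1 := by
  obtain ⟨h1, h2⟩ := hy
  have h := Polynomial.Chebyshev.T_real_cos (Real.arccos y) n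
  rw [Real.cos_arccos h1 h2] at h
  rw [h]; exact Real.abs_cos_le_one _

lemma chebProd_abs_le {N : ℕ} (v : Fin N → ℕ) {x : Fin N → ℝ}
    (hx : ∀ t, x t ∈ Set.Icc (-1:ℝ) 1) : |chebProd v x| ≤ 1 := by
  rw [chebProd, Finset.abs_prod]
  exact Finset.prod_le_one (fun t _ => abs_nonneg _) (fun t _ => cheb_abs_le _ (hx t))

/-- for fixed `M̄, μ > 0`, `ρ > 1` there exist `c, C, α > 0`, independent
of `N` and `D`, such that for every `N ≥ 1`, every symmetric `f` on `[-1,1]^N` in the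
Korobov class `𝒦(M̄,μ,ρ)` and every `D ≥ cN`, the total-degree truncation `f_D`
satisfies `‖f − f_D‖_∞ ≤ C exp(−α (log P(N,D))²)`. -/
theorem symmetric_cheb_rate_in_parameters
    (Mb μ ρ : ℝ) (hM : 0 < Mb) (hμ : 0 < μ) (hρ : 1 < ρ) :
    ∃ c C α : ℝ, 0 < c ∧ 0 < C ∧ 0 < α ∧
      ∀ N : ℕ, 1 ≤ N →
      ∀ (f : (Fin N → ℝ) → ℝ) (fhat : (Fin N → ℕ) → ℝ),
        (∀ σ : Equiv.Perm (Fin N), ∀ x : Fin N → ℝ,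
          (∀ t, x t ∈ Set.Icc (-1 : ℝ) 1) → f (x ∘ σ) = f x) →
        (∀ x : Fin N → ℝ, (∀ t, x t ∈ Set.Icc (-1 : ℝ) 1) →
          HasSum (fun v : Fin N → ℕ => fhat v * chebProd v x) (f x)) →
        Summable (fun v : Fin N → ℕ => ρ ^ (∑ t, v t) * |fhat v|) →
        (∑' v : Fin N → ℕ, ρ ^ (∑ t, v t) * |fhat v|) ≤ Mb * μ ^ N →
        ∀ D : ℕ, c * N ≤ (D : ℝ) →
          ∀ x : Fin N → ℝ, (∀ t, x t ∈ Set.Icc (-1 : ℝ) 1) →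
            |f x - chebTrunc fhat D x|
              ≤ C * Real.exp (-α * (Real.log ((ordTuples N D).card : ℝ)) ^ 2) := by
  have hlρ : 0 < Real.log ρ := Real.log_pos hρ
  obtain ⟨c, hc4, hcμ⟩ : ∃ c : ℝ, 4 ≤ c ∧ 2 * Real.log μ / Real.log ρ + 1 ≤ c :=
    ⟨max 4 (2 * Real.log μ / Real.log ρ + 1), le_max_left _ _, le_max_right _ _⟩
  refine ⟨c, Mb, Real.log ρ / 32, by linarith, hM, by positivity, ?_⟩
  intro N hN f fhat _hsymm hHS hSummable hKor D hD x hx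
  have hρ0 : (0:ℝ) < ρ := by linarith
  have hρ1 : (1:ℝ) ≤ ρ := hρ.le
  have hN0 : (0:ℝ) < (N:ℝ) := by exact_mod_cast hN
  have hDc : (4:ℝ) ≤ (D:ℝ) := by
    have h41 : (4:ℝ) * 1 ≤ c * (N:ℝ) :=
      mul_le_mul hc4 (by exact_mod_cast hN) zero_le_one (by linarith)
    linarith
  have hD4 : 4 ≤ D := by exact_mod_cast hDc
  -- tail bound
  have hcheb : ∀ v : Fin N → ℕ, |chebProd v x| ≤ 1 := fun v => chebProd_abs_le v hx
  have habs_le : ∀ v : Fin N → ℕ, |fhat v * chebProd v x| ≤ ρ ^ (∑ t, v t) * |fhat v| := by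
    intro v
    rw [abs_mul]
    calc |fhat v| * |chebProd v x| ≤ |fhat v| * 1 :=
          mul_le_mul_of_nonneg_left (hcheb v) (abs_nonneg _)
      _ = |fhat v| := mul_one _
      _ ≤ ρ ^ (∑ t, v t) * |fhat v| :=
          le_mul_of_one_le_left (abs_nonneg _) (one_le_pow₀ hρ1)
  have hs1 : Summable (fun v : Fin N → ℕ => fhat v * chebProd v x) := (hHS x hx).summable
  have hg : Summable (fun v : Fin N → ℕ =>
      if (∑ t, v t) ≤ D then fhat v * chebProd v x else 0) := by
    apply Summable.of_norm
    apply Summable.of_nonneg_of_le (fun v => norm_nonneg _) _ hSummable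
    intro v
    rw [Real.norm_eq_abs]
    by_cases h : (∑ t, v t) ≤ D
    · rw [if_pos h]; exact habs_le v
    · rw [if_neg h, abs_zero]; positivity
  have hdiff : f x - chebTrunc fhat D x = ∑' v : Fin N → ℕ,
      (fhat v * chebProd v x - if (∑ t, v t) ≤ D then fhat v * chebProd v x else 0) := by
    rw [Summable.tsum_sub hs1 hg, (hHS x hx).tsum_eq, chebTrunc]
  have hbound : ∀ v : Fin N → ℕ,
      |fhat v * chebProd v x - if (∑ t, v t) ≤ D then fhat v * chebProd v x else 0|
      ≤ (ρ ^ (D + 1))⁻¹ * (ρ ^ (∑ t, v t) * |fhat v|) := by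
    intro v
    by_cases h : (∑ t, v t) ≤ D
    · rw [if_pos h, sub_self, abs_zero]; positivity
    · rw [if_neg h, sub_zero]
      have h1 : ρ ^ (D + 1) ≤ ρ ^ (∑ t, v t) := pow_le_pow_right₀ hρ1 (by omega)
      have hfv : |fhat v * chebProd v x| ≤ |fhat v| := by
        rw [abs_mul]; exact mul_le_of_le_one_right (abs_nonneg _) (hcheb v)
      have h3 : |fhat v| ≤ (ρ ^ (D + 1))⁻¹ * (ρ ^ (∑ t, v t) * |fhat v|) := by
        rw [← mul_assoc]
        apply le_mul_of_one_le_left (abs_nonneg _)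
        rw [inv_mul_eq_div, le_div_iff₀ (pow_pos hρ0 _), one_mul]
        exact h1
      exact le_trans hfv h3
  have hd : Summable (fun v : Fin N → ℕ =>
      fhat v * chebProd v x - if (∑ t, v t) ≤ D then fhat v * chebProd v x else 0) :=
    hs1.sub hg
  have htail : |f x - chebTrunc fhat D x| ≤ (ρ ^ (D + 1))⁻¹ * (Mb * μ ^ N) := by
    rw [hdiff]
    calc |∑' v : Fin N → ℕ, (fhat v * chebProd v x -
            if (∑ t, v t) ≤ D then fhat v * chebProd v x else 0)|
        = ‖∑' v : Fin N → ℕ, (fhat v * chebProd v x -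
            if (∑ t, v t) ≤ D then fhat v * chebProd v x else 0)‖ :=
          (Real.norm_eq_abs _).symm
      _ ≤ ∑' v : Fin N → ℕ, ‖fhat v * chebProd v x -
            if (∑ t, v t) ≤ D then fhat v * chebProd v x else 0‖ :=
          norm_tsum_le_tsum_norm (by simpa only [Real.norm_eq_abs] using hd.abs)
      _ = ∑' v : Fin N → ℕ, |fhat v * chebProd v x -
            if (∑ t, v t) ≤ D then fhat v * chebProd v x else 0| := by
          simp only [Real.norm_eq_abs]
      _ ≤ ∑' v : Fin N → ℕ, (ρ ^ (D + 1))⁻¹ * (ρ ^ (∑ t, v t) * |fhat v|) :=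
          Summable.tsum_le_tsum hbound hd.abs (hSummable.mul_left _)
      _ = (ρ ^ (D + 1))⁻¹ * ∑' v : Fin N → ℕ, ρ ^ (∑ t, v t) * |fhat v| := tsum_mul_left
      _ ≤ (ρ ^ (D + 1))⁻¹ * (Mb * μ ^ N) :=
          mul_le_mul_of_nonneg_left hKor (by positivity)
  -- log card facts
  have hcard1 : 1 ≤ (ordTuples N D).card := by
    apply Finset.card_pos.mpr
    refine ⟨fun _ => 0, ?_⟩
    simp [ordTuples, Fintype.mem_piFinset, monotone_const]
  have hL0 : 0 ≤ Real.log ((ordTuples N D).card : ℝ) :=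
    Real.log_nonneg (by exact_mod_cast hcard1)
  have hL : Real.log ((ordTuples N D).card : ℝ) ≤ 4 * Real.sqrt D := log_card_ordTuples hD4
  have hsqD : Real.sqrt (D:ℝ) * Real.sqrt (D:ℝ) = (D:ℝ) :=
    Real.mul_self_sqrt (by positivity)
  have hL2 : (Real.log ((ordTuples N D).card : ℝ)) ^ 2 ≤ 16 * (D:ℝ) := by
    nlinarith [mul_self_le_mul_self hL0 hL]
  have hαL : (Real.log ρ / 32) * (Real.log ((ordTuples N D).card : ℝ)) ^ 2
      ≤ ((D:ℝ) / 2) * Real.log ρ := by nlinarith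
  have hfinal : (ρ ^ (D + 1))⁻¹ * (Mb * μ ^ N)
      ≤ Mb * Real.exp (-(Real.log ρ / 32) * (Real.log ((ordTuples N D).card : ℝ)) ^ 2) := by
    rw [show (ρ ^ (D + 1))⁻¹ * (Mb * μ ^ N) = Mb * (μ ^ N / ρ ^ (D + 1)) by ring]
    apply mul_le_mul_of_nonneg_left _ hM.le
    have hpos : (0:ℝ) < μ ^ N / ρ ^ (D + 1) := by positivity
    rw [← Real.exp_log hpos]
    apply Real.exp_le_exp.mpr
    rw [Real.log_div (by positivity) (by positivity), Real.log_pow, Real.log_pow]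
    have hNμ : (N:ℝ) * Real.log μ ≤ ((D:ℝ) / 2) * Real.log ρ := by
      have h1 : (2 * Real.log μ / Real.log ρ + 1) * (N:ℝ) ≤ c * N :=
        mul_le_mul_of_nonneg_right hcμ hN0.le
      have h3 : (2 * Real.log μ / Real.log ρ + 1) * (N:ℝ) ≤ (D:ℝ) := le_trans h1 hD
      have h4 := mul_le_mul_of_nonneg_right h3 hlρ.le
      have h5 : (2 * Real.log μ / Real.log ρ + 1) * (N:ℝ) * Real.log ρ
          = 2 * (N:ℝ) * Real.log μ + (N:ℝ) * Real.log ρ := by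
        field_simp
      rw [h5] at h4
      linarith [mul_pos hN0 hlρ]
    push_cast
    linarith [hαL, hNμ, hlρ, hDc, mul_pos (show (0:ℝ) < (D:ℝ)/2 by linarith) hlρ]
  exact le_trans htail hfinal
end

section
/- Fix an integer d ≥ 1 and a constant c > 0, and let c_d : {1,2,3,…} → ℕ satisfy c_d(i) ≤ c·(i+1)(i+2)⋯(i+d−1) for all i ≥ 1 (for d = 1 the empty product equals 1, i.e. c_d(i) ≤ c). Let f(n) denote the number of multisets of letters from an alphabet having exactly c_d(i) distinct letters of degree i for each i ≥ 1, whose degrees sum to n (with f(0) = 1). Then f(n) ≤ exp(β_d · n^{d/(d+1)}) for all n ∈ ℕ, where β_d := ((d+1)/d) · (c · d! · p_d · ζ(d+1))^{1/(d+1)}, p_d := sup_{x > 0} x^{d+1} e^{−x}/(1 − e^{−x})^{d+1}, and ζ is the Riemann zeta function. -/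
open scoped BigOperators

/-- The alphabet with exactly `c_d i` distinct letters of each degree `i ≥ 1`. -/
def Letter (c_d : ℕ → ℕ) : Type := Σ i : {i : ℕ // 0 < i}, Fin (c_d i.1)

/-- Total degree of a multiset of letters (a finitely supported multiplicity
function): the sum of multiplicity × degree over all letters. -/
def msetDegree {c_d : ℕ → ℕ} (m : Letter c_d →₀ ℕ) : ℕ :=
  m.sum fun ℓ k => k * ℓ.1.1

/-- `partCount c_d n` = number of multisets of letters of total degree exactly `n`. -/
noncomputable def partCount (c_d : ℕ → ℕ) (n : ℕ) : ℕ :=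
  Nat.card {m : Letter c_d →₀ ℕ // msetDegree m = n}

namespace PC
open Real Finset


/-- The function whose sup is `p_d`. -/
noncomputable def fp (d : ℕ) (x : ℝ) : ℝ := x ^ (d + 1) * exp (-x) / (1 - exp (-x)) ^ (d + 1)

lemma one_sub_exp_neg_pos {x : ℝ} (hx : 0 < x) : 0 < 1 - exp (-x) := by
  have : exp (-x) < 1 := exp_lt_one_iff.2 (by linarith)
  linarith

lemma one_sub_exp_neg_le_one {x : ℝ} (hx : 0 < x) : 1 - exp (-x) ≤ 1 := by
  have := exp_pos (-x); linarith

lemma one_sub_exp_neg_le {x : ℝ} (hx : 0 < x) : 1 - exp (-x) ≤ x := by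
  have h := add_one_le_exp (-x)
  nlinarith [exp_pos (-x)]

lemma fp_le (d : ℕ) {x : ℝ} (hx : 0 < x) : fp d x ≤ (d + 1).factorial * exp 1 := by
  have hu : 0 < 1 - exp (-x) := one_sub_exp_neg_pos hx
  have hx1 : x ≤ (1 + x) * (1 - exp (-x)) := by
    have h := add_one_le_exp x
    have h2 : (1 + x) * exp (-x) ≤ 1 := by
      rw [exp_neg]
      rw [mul_inv_le_iff₀ (exp_pos x), one_mul]
      linarith
    nlinarith
  have h1 : x ^ (d + 1) ≤ ((1 + x) * (1 - exp (-x))) ^ (d + 1) :=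
    pow_le_pow_left₀ hx.le hx1 _
  have h2 : fp d x ≤ (1 + x) ^ (d + 1) * exp (-x) := by
    unfold fp
    rw [div_le_iff₀ (by positivity)]
    calc x ^ (d + 1) * exp (-x) ≤ ((1 + x) * (1 - exp (-x))) ^ (d + 1) * exp (-x) := by
          exact mul_le_mul_of_nonneg_right h1 (exp_pos _).le
      _ = (1 + x) ^ (d + 1) * exp (-x) * (1 - exp (-x)) ^ (d + 1) := by
          rw [mul_pow]; ring
  refine h2.trans ?_
  have h3 : (1 + x) ^ (d + 1) ≤ (d + 1).factorial * exp (1 + x) := by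
    have h4 : (1 + x) ^ (d + 1) / (d + 1).factorial ≤ exp (1 + x) := by
      calc (1 + x) ^ (d + 1) / (d + 1).factorial
          ≤ ∑ i ∈ range (d + 2), (1 + x) ^ i / i.factorial := by
            exact Finset.single_le_sum (f := fun i => (1 + x) ^ i / (i.factorial : ℝ))
              (fun i _ => by positivity) (Finset.self_mem_range_succ _)
        _ ≤ exp (1 + x) := Real.sum_le_exp_of_nonneg (by linarith) _
    rw [div_le_iff₀ (by positivity)] at h4
    linarith [h4]
  calc (1 + x) ^ (d + 1) * exp (-x) ≤ ((d + 1).factorial * exp (1 + x)) * exp (-x) :=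
        mul_le_mul_of_nonneg_right h3 (exp_pos _).le
    _ = (d + 1).factorial * exp 1 := by rw [mul_assoc, ← exp_add]; ring_nf

noncomputable def pSet (d : ℕ) : Set ℝ :=
  {y : ℝ | ∃ x : ℝ, 0 < x ∧ y = x ^ (d + 1) * exp (-x) / (1 - exp (-x)) ^ (d + 1)}

lemma pSet_bddAbove (d : ℕ) : BddAbove (pSet d) := by
  refine ⟨(d + 1).factorial * exp 1, ?_⟩
  rintro y ⟨x, hx, rfl⟩
  exact fp_le d hx

lemma fp_le_sSup (d : ℕ) {x : ℝ} (hx : 0 < x) : fp d x ≤ sSup (pSet d) :=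
  le_csSup (pSet_bddAbove d) ⟨x, hx, rfl⟩

lemma pd_pos (d : ℕ) : 0 < sSup (pSet d) := by
  have h1 : fp d 1 ≤ sSup (pSet d) := fp_le_sSup d one_pos
  have : 0 < fp d 1 := by
    unfold fp
    have := one_sub_exp_neg_pos (x := 1) one_pos
    positivity
  linarith


lemma psi_le (d : ℕ) (hd : 1 ≤ d) {s : ℝ} (hs : 0 < s) :
    ((1 - exp (-s)) ^ d)⁻¹ - 1 ≤ sSup (pSet d) / s ^ d := by
  set p := sSup (pSet d) with hp
  set f : ℝ → ℝ := fun x => p * x ^ (-(d : ℤ)) - (1 - exp (-x)) ^ (-(d : ℤ)) + 1 with hf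
  have hderiv : ∀ x : ℝ, 0 < x →
      HasDerivAt f (p * ((-(d : ℤ) : ℝ) * x ^ (-(d : ℤ) - 1))
        - (-(d : ℤ) : ℝ) * (1 - exp (-x)) ^ (-(d : ℤ) - 1) * exp (-x)) x := by
    intro x hx
    have hu : 0 < 1 - exp (-x) := one_sub_exp_neg_pos hx
    have h2 : HasDerivAt (fun x : ℝ => 1 - exp (-x)) (exp (-x)) x := by
      have := ((Real.hasDerivAt_exp (-x)).comp x ((hasDerivAt_id x).neg)).const_sub 1
      simpa using this
    have h1 := hasDerivAt_zpow (-(d : ℤ)) x (Or.inl hx.ne')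
    have h3 := (hasDerivAt_zpow (-(d : ℤ)) (1 - exp (-x)) (Or.inl hu.ne')).comp x h2
    have H := ((h1.const_mul p).sub h3).add_const 1
    refine H.congr_deriv ?_
    push_cast
    ring
  have hderiv_nonpos : ∀ x ∈ Set.Ioi (0:ℝ), deriv f x ≤ 0 := by
    intro x hx
    have hx : 0 < x := hx
    have hu : 0 < 1 - exp (-x) := one_sub_exp_neg_pos hx
    rw [(hderiv x hx).deriv]
    have h : x ^ (d + 1) * exp (-x) / (1 - exp (-x)) ^ (d + 1) ≤ p := fp_le_sSup d hx
    have h2 : x ^ (d+1) * exp (-x) ≤ p * (1 - exp (-x)) ^ (d+1) := by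
      rwa [div_le_iff₀ (by positivity)] at h
    have key : (d : ℝ) * ((1 - exp (-x)) ^ (d + 1))⁻¹ * exp (-x)
        ≤ (d : ℝ) * (p * (x ^ (d + 1))⁻¹) := by
      rw [mul_assoc]
      refine mul_le_mul_of_nonneg_left ?_ (by positivity)
      rw [inv_mul_eq_div, ← div_eq_mul_inv, div_le_div_iff₀ (by positivity) (by positivity)]
      nlinarith [h2]
    have e1 : x ^ (-(d : ℤ) - 1) = (x ^ (d + 1))⁻¹ := by
      rw [show -(d:ℤ) - 1 = -((d+1 : ℕ) : ℤ) by push_cast; ring, zpow_neg, zpow_natCast]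
    have e2 : (1 - exp (-x)) ^ (-(d : ℤ) - 1) = ((1 - exp (-x)) ^ (d + 1))⁻¹ := by
      rw [show -(d:ℤ) - 1 = -((d+1 : ℕ) : ℤ) by push_cast; ring, zpow_neg, zpow_natCast]
    rw [e1, e2]
    push_cast
    nlinarith [key]
  have hanti : AntitoneOn f (Set.Ioi (0:ℝ)) := by
    refine antitoneOn_of_deriv_nonpos (convex_Ioi 0) ?_ ?_ ?_
    · intro x hx
      exact ((hderiv x hx).differentiableAt).continuousAt.continuousWithinAt
    · intro x hx
      rw [interior_Ioi] at hx
      exact ((hderiv x hx).differentiableAt).differentiableWithinAt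
    · intro x hx
      rw [interior_Ioi] at hx
      exact hderiv_nonpos x hx
  have hlim : Filter.Tendsto f Filter.atTop (nhds 0) := by
    have t1 : Filter.Tendsto (fun x : ℝ => p * x ^ (-(d : ℤ))) Filter.atTop (nhds (p * 0)) :=
      (tendsto_zpow_atTop_zero (n := -(d : ℤ)) (by omega)).const_mul p
    have t0 : Filter.Tendsto (fun x : ℝ => 1 - exp (-x)) Filter.atTop (nhds 1) := by
      have : Filter.Tendsto (fun x : ℝ => exp (-x)) Filter.atTop (nhds 0) :=
        Real.tendsto_exp_neg_atTop_nhds_zero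
      simpa using (tendsto_const_nhds.sub this)
    have t2 : Filter.Tendsto (fun x : ℝ => (1 - exp (-x)) ^ (-(d : ℤ))) Filter.atTop (nhds 1) := by
      have hc : ContinuousAt (fun y : ℝ => y ^ (-(d : ℤ))) 1 :=
        continuousAt_zpow₀ 1 _ (Or.inl one_ne_zero)
      have := hc.tendsto.comp t0
      simpa only [Function.comp_def, one_zpow] using this
    have H := (t1.sub t2).add_const 1
    simpa only [mul_zero, zero_sub, neg_add_cancel] using H
  have hnonneg : 0 ≤ f s := by
    refine le_of_tendsto hlim ?_
    filter_upwards [Filter.eventually_ge_atTop s] with x hx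
    exact hanti hs (lt_of_lt_of_le hs hx) hx
  have e1 : s ^ (-(d : ℤ)) = (s ^ d)⁻¹ := by rw [zpow_neg, zpow_natCast]
  have e2 : (1 - exp (-s)) ^ (-(d : ℤ)) = ((1 - exp (-s)) ^ d)⁻¹ := by
    rw [zpow_neg, zpow_natCast]
  have hfs : 0 ≤ p * (s ^ d)⁻¹ - ((1 - exp (-s)) ^ d)⁻¹ + 1 := by
    rw [hf] at hnonneg
    simpa only [e1, e2] using hnonneg
  rw [div_eq_mul_inv]
  linarith

def Pn (d i : ℕ) : ℕ := ∏ j ∈ Ico 1 d, (i + j)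

lemma Pn_step (d : ℕ) (hd : 1 ≤ d) (i : ℕ) :
    Pn (d + 1) (i + 1) = Pn (d + 1) i + d * Pn d (i + 1) := by
  have A1 : Pn d (i + 1) = ∏ k ∈ range (d - 1), (i + 2 + k) := by
    rw [Pn, Finset.prod_Ico_eq_prod_range]
    exact Finset.prod_congr rfl fun k _ => by omega
  have A2 : Pn (d + 1) i = (i + 1) * ∏ k ∈ range (d - 1), (i + 2 + k) := by
    rw [Pn, Finset.prod_eq_prod_Ico_succ_bot (by omega : 1 < d + 1)]
    congr 1
    rw [Finset.prod_Ico_eq_prod_range, show d + 1 - 2 = d - 1 by omega]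
    exact Finset.prod_congr rfl fun k _ => by omega
  have A3 : Pn (d + 1) (i + 1) = (∏ k ∈ range (d - 1), (i + 2 + k)) * (i + 1 + d) := by
    rw [Pn, Finset.prod_Ico_succ_top (by omega : 1 ≤ d), ← Pn, A1]
  rw [A1, A2, A3]
  ring

lemma Pn_succ (d : ℕ) (hd : 1 ≤ d) (i : ℕ) :
    Pn (d + 1) i = d.factorial + d * ∑ l ∈ Icc 1 i, Pn d l := by
  induction i with
  | zero => simp [Pn, Finset.prod_Ico_id_eq_factorial]
  | succ i ih =>
      rw [Pn_step d hd i, ih, Finset.sum_Icc_succ_top (by omega : 1 ≤ i + 1)]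
      ring

lemma geom_le {x : ℝ} (hx0 : 0 ≤ x) (hx1 : x < 1) (n : ℕ) :
    ∑ i ∈ range n, x ^ i ≤ (1 - x)⁻¹ := by
  have h1x : (0:ℝ) < 1 - x := by linarith
  rw [geom_sum_eq hx1.ne n]
  have e : (x ^ n - 1) / (x - 1) = (1 - x ^ n) * (1 - x)⁻¹ := by
    rw [div_eq_iff (by intro h; apply hx1.ne; linarith : x - 1 ≠ 0)]
    field_simp
    ring
  rw [e]
  have hxn : (0:ℝ) ≤ x ^ n := by positivity
  calc (1 - x ^ n) * (1 - x)⁻¹ ≤ 1 * (1 - x)⁻¹ :=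
        mul_le_mul_of_nonneg_right (by linarith) (by positivity)
    _ = (1 - x)⁻¹ := one_mul _

lemma key_sum {x : ℝ} (hx0 : 0 ≤ x) (hx1 : x < 1) :
    ∀ d : ℕ, 1 ≤ d → ∀ n : ℕ,
      ∑ i ∈ range n, (Pn d (i + 1) : ℝ) * x ^ (i + 1)
        ≤ (d - 1).factorial * (((1 - x) ^ d)⁻¹ - 1) := by
  have h1x : (0:ℝ) < 1 - x := by linarith
  intro d hd
  induction d, hd using Nat.le_induction with
  | base =>
      intro n
      have : ∀ i ∈ range n, (Pn 1 (i + 1) : ℝ) * x ^ (i + 1) = x * x ^ i := by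
        intro i _
        simp [Pn, pow_succ]
        ring
      rw [Finset.sum_congr rfl this, ← Finset.mul_sum]
      have hg := geom_le hx0 hx1 n
      have : x * ∑ i ∈ range n, x ^ i ≤ x * (1 - x)⁻¹ :=
        mul_le_mul_of_nonneg_left hg hx0
      refine this.trans ?_
      simp only [Nat.sub_self, Nat.factorial_zero, Nat.cast_one, one_mul, pow_one]
      rw [← sub_nonneg]
      have h0 : (1 - x)⁻¹ - 1 - x * (1 - x)⁻¹ = 0 := by field_simp; ring
      linarith [h0]
  | succ d hd ih =>
      intro n
      have expand : ∀ i ∈ range n, (Pn (d + 1) (i + 1) : ℝ) * x ^ (i + 1)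
          = (d.factorial : ℝ) * x ^ (i + 1)
            + (d : ℝ) * ∑ l ∈ Icc 1 (i + 1), (Pn d l : ℝ) * x ^ (i + 1) := by
        intro i _
        rw [Pn_succ d hd (i + 1)]
        push_cast
        rw [add_mul, mul_assoc, Finset.sum_mul]
      rw [Finset.sum_congr rfl expand, Finset.sum_add_distrib]
      -- first piece
      have P1 : ∑ i ∈ range n, (d.factorial : ℝ) * x ^ (i + 1)
          ≤ (d.factorial : ℝ) * ((1 - x)⁻¹ - 1) := by
        rw [← Finset.mul_sum]
        refine mul_le_mul_of_nonneg_left ?_ (by positivity)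
        have : ∀ i ∈ range n, x ^ (i + 1) = x * x ^ i := fun i _ => by rw [pow_succ]; ring
        rw [Finset.sum_congr rfl this, ← Finset.mul_sum]
        have hg := geom_le hx0 hx1 n
        have h2 : x * ∑ i ∈ range n, x ^ i ≤ x * (1 - x)⁻¹ :=
          mul_le_mul_of_nonneg_left hg hx0
        refine h2.trans ?_
        rw [← sub_nonneg]
        have : (1 - x)⁻¹ - 1 - x * (1 - x)⁻¹ = 0 := by field_simp; ring
        linarith [this]
      -- second piece: swap sums
      have swap : ∑ i ∈ range n, ∑ l ∈ Icc 1 (i + 1), (Pn d l : ℝ) * x ^ (i + 1)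
          = ∑ l ∈ range n, ∑ i ∈ Ico l n, (Pn d (l + 1) : ℝ) * x ^ (i + 1) := by
        have e1 : ∀ i ∈ range n, ∑ l ∈ Icc 1 (i + 1), (Pn d l : ℝ) * x ^ (i + 1)
            = ∑ l ∈ Ico 0 (i + 1), (Pn d (l + 1) : ℝ) * x ^ (i + 1) := by
          intro i _
          have : Icc 1 (i + 1) = Ico 1 (i + 2) := by
            ext a; simp [Nat.lt_succ_iff]
          rw [this, Finset.sum_Ico_eq_sum_range]
          rw [show i + 2 - 1 = i + 1 by omega, Finset.range_eq_Ico]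
          exact Finset.sum_congr rfl fun l _ => by rw [Nat.add_comm 1 l]
        rw [Finset.sum_congr rfl e1, Finset.range_eq_Ico,
          ← Finset.sum_Ico_Ico_comm 0 n (fun l i => (Pn d (l + 1) : ℝ) * x ^ (i + 1))]
      have inner_le : ∀ l ∈ range n, ∑ i ∈ Ico l n, (Pn d (l + 1) : ℝ) * x ^ (i + 1)
          ≤ (Pn d (l + 1) : ℝ) * (x ^ (l + 1) * (1 - x)⁻¹) := by
        intro l hl
        rw [← Finset.mul_sum]
        refine mul_le_mul_of_nonneg_left ?_ (by positivity)
        have : ∀ i ∈ Ico l n, x ^ (i + 1) = x ^ (l + 1) * x ^ (i - l) := by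
          intro i hi
          rw [Finset.mem_Ico] at hi
          rw [← pow_add]
          congr 1
          omega
        rw [Finset.sum_congr rfl this, ← Finset.mul_sum]
        have : ∑ i ∈ Ico l n, x ^ (i - l) = ∑ k ∈ range (n - l), x ^ k := by
          rw [Finset.sum_Ico_eq_sum_range]
          exact Finset.sum_congr rfl fun k _ => by rw [show l + k - l = k by omega]
        rw [this]
        exact mul_le_mul_of_nonneg_left (geom_le hx0 hx1 _) (by positivity)
      have P2 : ∑ i ∈ range n, (d : ℝ) * ∑ l ∈ Icc 1 (i + 1), (Pn d l : ℝ) * x ^ (i + 1)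
          ≤ (d : ℝ) * ((1 - x)⁻¹ * ((d - 1).factorial * (((1 - x) ^ d)⁻¹ - 1))) := by
        rw [← Finset.mul_sum]
        refine mul_le_mul_of_nonneg_left ?_ (by positivity)
        rw [swap]
        calc ∑ l ∈ range n, ∑ i ∈ Ico l n, (Pn d (l + 1) : ℝ) * x ^ (i + 1)
            ≤ ∑ l ∈ range n, (Pn d (l + 1) : ℝ) * (x ^ (l + 1) * (1 - x)⁻¹) :=
              Finset.sum_le_sum inner_le
          _ = (1 - x)⁻¹ * ∑ l ∈ range n, (Pn d (l + 1) : ℝ) * x ^ (l + 1) := by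
              rw [Finset.mul_sum]; exact Finset.sum_congr rfl fun l _ => by ring
          _ ≤ (1 - x)⁻¹ * ((d - 1).factorial * (((1 - x) ^ d)⁻¹ - 1)) :=
              mul_le_mul_of_nonneg_left (ih n) (by positivity)
      have hcomb := add_le_add P1 P2
      refine hcomb.trans ?_
      -- algebra: d! ((1-x)⁻¹ - 1) + d (1-x)⁻¹ (d-1)! (((1-x)^d)⁻¹ - 1) = d! (((1-x)^(d+1))⁻¹ - 1)
      have hfac : (d : ℝ) * (d - 1).factorial = d.factorial := by
        rw [← Nat.cast_mul, Nat.mul_factorial_pred (by omega)]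
      have hd1 : (d + 1 - 1) = d := by omega
      rw [hd1]
      have hpow : (0:ℝ) < (1 - x) ^ d := by positivity
      rw [← sub_nonneg]
      have expand2 : (d.factorial : ℝ) * (((1 - x) ^ (d + 1))⁻¹ - 1)
          - ((d.factorial : ℝ) * ((1 - x)⁻¹ - 1)
            + (d : ℝ) * ((1 - x)⁻¹ * ((d - 1).factorial * (((1 - x) ^ d)⁻¹ - 1)))) = 0 := by
        rw [← hfac]
        field_simp
        ring
      linarith [expand2]

lemma count_le (c_d : ℕ → ℕ) (n : ℕ) (t : ℝ) (ht : 0 < t) :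
    (partCount c_d n : ℝ)
      ≤ exp (t * n) * ∏ i ∈ Icc 1 n, ((1 - exp (-(t * i)))⁻¹) ^ (c_d i) := by
  classical
  haveI : Finite {i : ℕ // 0 < i ∧ i ≤ n} := by
    refine Finite.of_injective
      (fun i : {i : ℕ // 0 < i ∧ i ≤ n} => (⟨i.1, Nat.lt_succ_of_le i.2.2⟩ : Fin (n+1))) ?_
    intro a b h
    exact Subtype.ext (by simpa [Fin.mk.injEq] using h)
  haveI instI : Fintype {i : ℕ // 0 < i ∧ i ≤ n} := Fintype.ofFinite _
  set D := (Σ i : {i : ℕ // 0 < i ∧ i ≤ n}, Fin (c_d i.1)) with hD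
  let emb : D → Letter c_d := fun x => ⟨⟨x.1.1, x.1.2.1⟩, x.2⟩
  have emb_inj : Function.Injective emb := by
    rintro ⟨⟨i, hi⟩, a⟩ ⟨⟨j, hj⟩, b⟩ h
    have h' : (⟨⟨i, hi.1⟩, a⟩ : Σ i : {i : ℕ // 0 < i}, Fin (c_d i.1)) = ⟨⟨j, hj.1⟩, b⟩ := h
    obtain ⟨h1, h2⟩ := Sigma.mk.inj_iff.mp h'
    have hij : i = j := congrArg Subtype.val h1
    subst hij
    have hab : a = b := eq_of_heq h2
    subst hab
    rfl
  set S := {m : Letter c_d →₀ ℕ // msetDegree m = n} with hS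
  have deg_eq : ∀ m : Letter c_d →₀ ℕ,
      msetDegree m = ∑ ℓ ∈ m.support, m ℓ * ℓ.1.1 := fun m => rfl
  have deg_le : ∀ m : S, ∀ ℓ : Letter c_d, m.1 ℓ * ℓ.1.1 ≤ n := by
    intro m ℓ
    by_cases h : m.1 ℓ = 0
    · simp [h]
    · have hℓ : ℓ ∈ m.1.support := Finsupp.mem_support_iff.2 h
      have h1 := Finset.single_le_sum (f := fun ℓ' => m.1 ℓ' * ℓ'.1.1)
        (fun i _ => Nat.zero_le _) hℓ
      rw [← deg_eq, m.2] at h1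
      exact h1
  have mult_le : ∀ m : S, ∀ ℓ : Letter c_d, m.1 ℓ ≤ n := by
    intro m ℓ
    have h1 := deg_le m ℓ
    have h2 : m.1 ℓ ≤ m.1 ℓ * ℓ.1.1 := Nat.le_mul_of_pos_right _ ℓ.1.2
    omega
  have zero_of : ∀ m : S, ∀ ℓ : Letter c_d, n < ℓ.1.1 → m.1 ℓ = 0 := by
    intro m ℓ hℓ
    have h1 := deg_le m ℓ
    by_contra h
    have h2 : ℓ.1.1 ≤ m.1 ℓ * ℓ.1.1 := Nat.le_mul_of_pos_left _ (by omega)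
    omega
  set J : S → (D → Fin (n+1)) :=
    fun m x => ⟨m.1 (emb x), Nat.lt_succ_of_le (mult_le m (emb x))⟩ with hJ
  have J_inj : Function.Injective J := by
    intro m m' h
    refine Subtype.ext (Finsupp.ext fun ℓ => ?_)
    obtain ⟨⟨i, hipos⟩, a⟩ := ℓ
    by_cases hin : i ≤ n
    · exact congrArg Fin.val (congrFun h (⟨⟨i, hipos, hin⟩, a⟩ : D))
    · have hni : n < i := by omega
      rw [zero_of m ⟨⟨i, hipos⟩, a⟩ hni, zero_of m' ⟨⟨i, hipos⟩, a⟩ hni]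
  haveI : Finite S := Finite.of_injective J J_inj
  haveI : Fintype S := Fintype.ofFinite S
  set W : (D → Fin (n+1)) → ℝ :=
    fun g => ∏ x : D, exp (-(t * (((g x : ℕ) * x.1.1 : ℕ) : ℝ))) with hW
  have hW0 : ∀ g, 0 ≤ W g := fun g => Finset.prod_nonneg fun x _ => (exp_pos _).le
  have hsum : ∀ m : S, ∑ x : D, m.1 (emb x) * x.1.1 = n := by
    intro m
    have e1 : ∑ x : D, m.1 (emb x) * x.1.1
        = ∑ ℓ ∈ Finset.univ.image emb, m.1 ℓ * ℓ.1.1 := by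
      rw [Finset.sum_image (fun a _ b _ h => emb_inj h)]
    have hsub : m.1.support ⊆ Finset.univ.image emb := by
      intro ℓ hℓ
      have hne : m.1 ℓ ≠ 0 := Finsupp.mem_support_iff.1 hℓ
      have hle : ℓ.1.1 ≤ n := by
        by_contra hc
        exact hne (zero_of m ℓ (by omega))
      rw [Finset.mem_image]
      exact ⟨⟨⟨ℓ.1.1, ℓ.1.2, hle⟩, ℓ.2⟩, Finset.mem_univ _, rfl⟩
    have e2 : ∑ ℓ ∈ Finset.univ.image emb, m.1 ℓ * ℓ.1.1
        = ∑ ℓ ∈ m.1.support, m.1 ℓ * ℓ.1.1 := by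
      refine (Finset.sum_subset hsub ?_).symm
      intro ℓ _ hℓ
      rw [Finsupp.notMem_support_iff.1 hℓ, zero_mul]
    rw [e1, e2, ← deg_eq, m.2]
  have hWm : ∀ m : S, W (J m) = exp (-(t * n)) := by
    intro m
    show (∏ x : D, exp (-(t * (((m.1 (emb x) : ℕ) * x.1.1 : ℕ) : ℝ)))) = exp (-(t * n))
    rw [← Real.exp_sum]
    congr 1
    calc ∑ x : D, -(t * (((m.1 (emb x) : ℕ) * x.1.1 : ℕ) : ℝ))
        = -(t * ((∑ x : D, m.1 (emb x) * x.1.1 : ℕ) : ℝ)) := by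
          rw [Nat.cast_sum, Finset.mul_sum, ← Finset.sum_neg_distrib]
      _ = -(t * n) := by rw [hsum m]
  have hpc : (partCount c_d n : ℝ) = (Fintype.card S : ℝ) := by
    have : partCount c_d n = Fintype.card S := Nat.card_eq_fintype_card
    rw [this]
  have step1 : (partCount c_d n : ℝ) * exp (-(t * n)) = ∑ m : S, W (J m) := by
    calc (partCount c_d n : ℝ) * exp (-(t * n))
        = ∑ _m : S, exp (-(t * n)) := by
          rw [Finset.sum_const, Finset.card_univ, nsmul_eq_mul, hpc]
      _ = ∑ m : S, W (J m) := Finset.sum_congr rfl fun m _ => (hWm m).symm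
  have step2 : ∑ m : S, W (J m) ≤ ∑ g : D → Fin (n+1), W g := by
    calc ∑ m : S, W (J m) = ∑ g ∈ Finset.univ.image J, W g :=
          (Finset.sum_image (fun a _ b _ h => J_inj h)).symm
      _ ≤ ∑ g : D → Fin (n+1), W g :=
          Finset.sum_le_sum_of_subset_of_nonneg (Finset.subset_univ _) (fun g _ _ => hW0 g)
  have step3 : ∑ g : D → Fin (n+1), W g
      = ∏ x : D, ∑ k : Fin (n+1), exp (-(t * (((k : ℕ) * x.1.1 : ℕ) : ℝ))) := by
    rw [Finset.prod_univ_sum]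
    rw [Fintype.piFinset_univ]
  have step4 : ∀ x : D, ∑ k : Fin (n+1), exp (-(t * (((k : ℕ) * x.1.1 : ℕ) : ℝ)))
      ≤ (1 - exp (-(t * x.1.1)))⁻¹ := by
    intro x
    have hx1 : (1 : ℝ) ≤ (x.1.1 : ℝ) := by exact_mod_cast x.1.2.1
    have hti : 0 < t * (x.1.1 : ℝ) := mul_pos ht (by linarith)
    have hr1 : exp (-(t * (x.1.1 : ℝ))) < 1 := by
      rw [exp_lt_one_iff]; linarith
    have e : ∀ k : Fin (n+1), exp (-(t * (((k : ℕ) * x.1.1 : ℕ) : ℝ)))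
        = exp (-(t * (x.1.1 : ℝ))) ^ (k : ℕ) := by
      intro k
      rw [← Real.exp_nat_mul]
      congr 1
      push_cast
      ring
    rw [Finset.sum_congr rfl (fun k _ => e k), Fin.sum_univ_eq_sum_range]
    exact geom_le (by positivity) hr1 (n+1)
  have step5 : ∏ x : D, (1 - exp (-(t * x.1.1)))⁻¹
      = ∏ i ∈ Icc 1 n, ((1 - exp (-(t * i)))⁻¹) ^ (c_d i) := by
    rw [← Finset.univ_sigma_univ, Finset.prod_sigma]
    have e1 : ∀ i : {i : ℕ // 0 < i ∧ i ≤ n},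
        (∏ _a : Fin (c_d i.1), (1 - exp (-(t * i.1)))⁻¹)
        = ((1 - exp (-(t * i.1)))⁻¹) ^ (c_d i.1) := by
      intro i
      rw [Finset.prod_const, Finset.card_univ, Fintype.card_fin]
    rw [Finset.prod_congr rfl (fun i _ => e1 i)]
    refine Finset.prod_bij (fun (i : {i : ℕ // 0 < i ∧ i ≤ n}) _ => i.1) ?_ ?_ ?_ ?_
    · intro a _
      rw [Finset.mem_Icc]
      exact ⟨a.2.1, a.2.2⟩
    · intro a _ b _ h
      exact Subtype.ext h
    · intro b hb
      rw [Finset.mem_Icc] at hb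
      exact ⟨⟨b, hb.1, hb.2⟩, Finset.mem_univ _, rfl⟩
    · intro a _
      rfl
  have chain : (partCount c_d n : ℝ) * exp (-(t * n))
      ≤ ∏ i ∈ Icc 1 n, ((1 - exp (-(t * i)))⁻¹) ^ (c_d i) := by
    rw [step1, ← step5]
    refine (step2.trans ?_)
    rw [step3]
    exact Finset.prod_le_prod (fun x _ => Finset.sum_nonneg fun k _ => (exp_pos _).le)
      (fun x _ => step4 x)
  calc (partCount c_d n : ℝ)
      = (partCount c_d n : ℝ) * exp (-(t * n)) * exp (t * n) := by
        rw [mul_assoc, ← exp_add]; simp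
    _ ≤ (∏ i ∈ Icc 1 n, ((1 - exp (-(t * i)))⁻¹) ^ (c_d i)) * exp (t * n) :=
        mul_le_mul_of_nonneg_right chain (exp_pos _).le
    _ = exp (t * n) * ∏ i ∈ Icc 1 n, ((1 - exp (-(t * i)))⁻¹) ^ (c_d i) := by ring


lemma summable_zeta (d : ℕ) (hd : 1 ≤ d) :
    Summable (fun k : ℕ => 1 / ((k : ℝ) + 1) ^ (d + 1)) := by
  have b0 : Summable (fun k : ℕ => 1 / (k : ℝ) ^ (d + 1)) :=
    summable_one_div_nat_pow.mpr (by omega)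
  have b1 := (summable_nat_add_iff 1).mpr b0
  refine b1.congr fun k => ?_
  push_cast
  ring_nf

lemma prod_le_exp (d : ℕ) (hd : 1 ≤ d) (c : ℝ) (hc : 0 < c) (c_d : ℕ → ℕ)
    (hcd : ∀ i : ℕ, 1 ≤ i → (c_d i : ℝ) ≤ c * ∏ j ∈ Finset.Ico 1 d, ((i : ℝ) + j))
    (n : ℕ) (t : ℝ) (ht : 0 < t) :
    ∏ i ∈ Icc 1 n, ((1 - exp (-(t * i)))⁻¹) ^ (c_d i)
      ≤ exp (c * (d - 1).factorial * sSup (pSet d)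
          * (∑' k : ℕ, 1 / ((k : ℝ) + 1) ^ (d + 1)) / t ^ d) := by
  set p := sSup (pSet d) with hp
  set Z := ∑' k : ℕ, 1 / ((k : ℝ) + 1) ^ (d + 1) with hZ
  have hyi : ∀ i : ℕ, 1 ≤ i → 0 < 1 - exp (-(t * i)) := by
    intro i hi
    have : (0:ℝ) < t * i := mul_pos ht (by exact_mod_cast hi)
    exact one_sub_exp_neg_pos this
  -- Step A : rewrite as exponential of a sum of logs
  have stepA : ∏ i ∈ Icc 1 n, ((1 - exp (-(t * i)))⁻¹) ^ (c_d i)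
      = exp (∑ i ∈ Icc 1 n, (c_d i : ℝ) * (-Real.log (1 - exp (-(t * i))))) := by
    rw [Real.exp_sum]
    refine Finset.prod_congr rfl fun i hi => ?_
    have h1 : 0 < 1 - exp (-(t * i)) := hyi i (Finset.mem_Icc.mp hi).1
    have e1 : (1 - exp (-(t * i)))⁻¹ = exp (-Real.log (1 - exp (-(t * i)))) := by
      rw [← Real.exp_log (inv_pos.2 h1), Real.log_inv]
    rw [e1, ← Real.exp_nat_mul]
  rw [stepA]
  rw [Real.exp_le_exp]
  -- per-i HasSum
  have habs : ∀ i : ℕ, 1 ≤ i → |exp (-(t * i))| < 1 := by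
    intro i hi
    rw [abs_of_pos (exp_pos _), exp_lt_one_iff]
    have : (0:ℝ) < t * i := mul_pos ht (by exact_mod_cast hi)
    linarith
  have Hi : ∀ i ∈ Icc 1 n, HasSum
      (fun k : ℕ => (c_d i : ℝ) * (exp (-(t * i)) ^ (k + 1) / (k + 1)))
      ((c_d i : ℝ) * (-Real.log (1 - exp (-(t * i))))) := by
    intro i hi
    exact (hasSum_pow_div_log_of_abs_lt_one (habs i (Finset.mem_Icc.mp hi).1)).mul_left _
  have Htot : HasSum
      (fun k : ℕ => ∑ i ∈ Icc 1 n, (c_d i : ℝ) * (exp (-(t * i)) ^ (k + 1) / (k + 1)))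
      (∑ i ∈ Icc 1 n, (c_d i : ℝ) * (-Real.log (1 - exp (-(t * i))))) :=
    hasSum_sum Hi
  set g : ℕ → ℝ := fun k => (c * (d - 1).factorial * p / t ^ d) * (1 / ((k : ℝ) + 1) ^ (d + 1))
    with hg
  have hgsummable : Summable g := (summable_zeta d hd).mul_left _
  -- per-k bound
  have hklem : ∀ k : ℕ,
      ∑ i ∈ Icc 1 n, (c_d i : ℝ) * (exp (-(t * i)) ^ (k + 1) / (k + 1)) ≤ g k := by
    intro k
    set s : ℝ := t * (k + 1) with hs
    have hspos : 0 < s := by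
      have : (0:ℝ) < (k:ℝ) + 1 := by positivity
      exact mul_pos ht this
    set x : ℝ := exp (-s) with hx
    have hx0 : 0 ≤ x := (exp_pos _).le
    have hx1 : x < 1 := by
      rw [hx, exp_lt_one_iff]; linarith
    have hpow : ∀ i : ℕ, exp (-(t * i)) ^ (k + 1) = x ^ i := by
      intro i
      rw [hx, ← Real.exp_nat_mul, ← Real.exp_nat_mul]
      congr 1
      push_cast
      ring
    have e2 : ∀ i ∈ Icc 1 n, (c_d i : ℝ) * (exp (-(t * i)) ^ (k + 1) / (k + 1))
        = (c_d i : ℝ) * x ^ i / (k + 1) := by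
      intro i _
      rw [hpow i]
      ring
    rw [Finset.sum_congr rfl e2, ← Finset.sum_div]
    -- bound numerator
    have hnum : ∑ i ∈ Icc 1 n, (c_d i : ℝ) * x ^ i
        ≤ c * ((d - 1).factorial * (((1 - x) ^ d)⁻¹ - 1)) := by
      have t1 : ∑ i ∈ Icc 1 n, (c_d i : ℝ) * x ^ i
          ≤ ∑ i ∈ Icc 1 n, c * (Pn d i : ℝ) * x ^ i := by
        refine Finset.sum_le_sum fun i hi => ?_
        have hi1 : 1 ≤ i := (Finset.mem_Icc.mp hi).1
        have hPn : (Pn d i : ℝ) = ∏ j ∈ Finset.Ico 1 d, ((i : ℝ) + j) := by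
          rw [Pn]
          push_cast
          rfl
        have := hcd i hi1
        rw [← hPn] at this
        exact mul_le_mul_of_nonneg_right this (by positivity)
      have t2 : ∑ i ∈ Icc 1 n, c * (Pn d i : ℝ) * x ^ i
          = c * ∑ i ∈ range n, (Pn d (i + 1) : ℝ) * x ^ (i + 1) := by
        rw [Finset.mul_sum]
        rw [show Icc 1 n = Ico 1 (n + 1) by rfl]
        rw [Finset.sum_Ico_eq_sum_range]
        rw [show n + 1 - 1 = n by omega]
        exact Finset.sum_congr rfl fun i _ => by rw [Nat.add_comm 1 i]; ring
      exact (t1.trans_eq t2).trans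
        (mul_le_mul_of_nonneg_left (key_sum hx0 hx1 d hd n) hc.le)
    have hpsi : (((1 - x) ^ d)⁻¹ - 1) ≤ p / s ^ d := psi_le d hd hspos
    have hnum2 : ∑ i ∈ Icc 1 n, (c_d i : ℝ) * x ^ i ≤ c * ((d - 1).factorial * (p / s ^ d)) := by
      refine hnum.trans ?_
      refine mul_le_mul_of_nonneg_left ?_ hc.le
      exact mul_le_mul_of_nonneg_left hpsi (by positivity)
    have hk1 : (0:ℝ) < (k : ℝ) + 1 := by positivity
    have final : c * ((d - 1).factorial * (p / s ^ d)) / ((k:ℝ) + 1) = g k := by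
      rw [hg, hs]
      have : (t * ((k:ℝ) + 1)) ^ d = t ^ d * ((k:ℝ) + 1) ^ d := mul_pow t _ d
      rw [this]
      field_simp
      ring
    calc (∑ i ∈ Icc 1 n, (c_d i : ℝ) * x ^ i) / ((k:ℝ) + 1)
        ≤ c * ((d - 1).factorial * (p / s ^ d)) / ((k:ℝ) + 1) := by gcongr
      _ = g k := final
  have hle := Summable.tsum_le_tsum hklem Htot.summable hgsummable
  rw [← Htot.tsum_eq]
  refine le_trans hle ?_
  rw [hg, tsum_mul_left, ← hZ]
  exact le_of_eq (by ring)


lemma optimize (d : ℕ) (hd : 1 ≤ d) (A : ℝ) (hA : 0 < A) (n : ℕ) (hn : 1 ≤ n)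
    (t : ℝ) (htdef : t = (A / n) ^ ((1:ℝ)/(d+1))) :
    t * n + (A / d) / t ^ d
      = (((d : ℝ) + 1) / d * A ^ ((1:ℝ)/(d+1))) * (n : ℝ) ^ ((d : ℝ)/(d+1)) := by

  have hN : (0:ℝ) < (n:ℝ) := by exact_mod_cast hn
  have hd1 : (0:ℝ) < (d:ℝ) + 1 := by positivity
  have hd0 : (0:ℝ) < (d:ℝ) := by exact_mod_cast hd
  set e : ℝ := (1:ℝ)/(d+1) with he
  set u : ℝ := A ^ e with hu
  set v : ℝ := (n:ℝ) ^ ((d:ℝ)/(d+1)) with hv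
  have hupos : 0 < u := Real.rpow_pos_of_pos hA _
  have hvpos : 0 < v := Real.rpow_pos_of_pos hN _
  have hone : (1:ℝ) - e = (d:ℝ)/(d+1) := by
    rw [he]; field_simp; ring
  have h1 : t * n = u * v := by
    rw [htdef, he, Real.div_rpow hA.le hN.le, hu, hv, ← hone]
    rw [Real.rpow_sub hN, Real.rpow_one]
    field_simp
    rw [he]; ring
  have htd : t ^ d = (A ^ ((d:ℝ)/(d+1))) / v := by
    rw [htdef, he, ← Real.rpow_natCast ((A / n) ^ ((1:ℝ)/(d+1))) d, ← Real.rpow_mul (by positivity)]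
    have : e * (d:ℝ) = (d:ℝ)/(d+1) := by rw [he]; field_simp
    rw [this, Real.div_rpow hA.le hN.le, hv]
  have h2 : (1:ℝ) - (d:ℝ)/(d+1) = e := by rw [he]; field_simp; ring
  have hAu : A / A ^ ((d:ℝ)/(d+1)) = u := by
    calc A / A ^ ((d:ℝ)/(d+1)) = A ^ (1:ℝ) / A ^ ((d:ℝ)/(d+1)) := by rw [Real.rpow_one]
      _ = A ^ ((1:ℝ) - (d:ℝ)/(d+1)) := (Real.rpow_sub hA _ _).symm
      _ = u := by rw [h2, hu]
  have hAq : 0 < A ^ ((d:ℝ)/(d+1)) := Real.rpow_pos_of_pos hA _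
  have h3 : (A / d) / t ^ d = (1/(d:ℝ)) * (u * v) := by
    rw [htd]
    have e3 : (A / d) / (A ^ ((d:ℝ)/(d+1)) / v) = (A / A ^ ((d:ℝ)/(d+1))) * v / d := by
      field_simp
    rw [e3, hAu]
    ring
  rw [h1, h3]
  field_simp

end PC

/-- if the alphabet has `c_d(i) ≤ c (i+1)(i+2)⋯(i+d−1)` letters of degree
`i`, then the number `f(n)` of multisets of total degree `n` satisfies
`f(n) ≤ exp(β_d n^{d/(d+1)})` with the explicit constant `β_d`. -/
theorem partCount_le_exp
    (d : ℕ) (hd : 1 ≤ d) (c : ℝ) (hc : 0 < c) (c_d : ℕ → ℕ)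
    (hcd : ∀ i : ℕ, 1 ≤ i → (c_d i : ℝ) ≤ c * ∏ j ∈ Finset.Ico 1 d, ((i : ℝ) + j)) :
    ∀ n : ℕ,
      (partCount c_d n : ℝ)
        ≤ Real.exp
            ((((d : ℝ) + 1) / d *
              (c * d.factorial *
                (sSup {y : ℝ | ∃ x : ℝ, 0 < x ∧
                    y = x ^ (d + 1) * Real.exp (-x) / (1 - Real.exp (-x)) ^ (d + 1)}) *
                (∑' k : ℕ, 1 / ((k : ℝ) + 1) ^ (d + 1))) ^ ((1 : ℝ) / (d + 1))) *
              (n : ℝ) ^ ((d : ℝ) / (d + 1))) := by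
  intro n
  have hsetP : {y : ℝ | ∃ x : ℝ, 0 < x ∧
      y = x ^ (d + 1) * Real.exp (-x) / (1 - Real.exp (-x)) ^ (d + 1)} = PC.pSet d := rfl
  rw [hsetP]
  have hZ1 : (1:ℝ) ≤ ∑' k : ℕ, 1 / ((k : ℝ) + 1) ^ (d + 1) := by
    have h := Summable.le_tsum (PC.summable_zeta d hd) 0 (fun b _ => by positivity)
    simpa using h
  set Z := ∑' k : ℕ, 1 / ((k : ℝ) + 1) ^ (d + 1) with hZdef
  set A := c * (d.factorial : ℝ) * sSup (PC.pSet d) * Z with hAdef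
  have hZpos : (0:ℝ) < Z := lt_of_lt_of_le one_pos hZ1
  have hfacpos : (0:ℝ) < (d.factorial : ℝ) := by exact_mod_cast d.factorial_pos
  have hApos : 0 < A := by
    rw [hAdef]
    exact mul_pos (mul_pos (mul_pos hc hfacpos) (PC.pd_pos d)) hZpos
  have hdpos : (0:ℝ) < (d:ℝ) := by exact_mod_cast hd
  by_cases hn : n = 0
  · subst hn
    have h := PC.count_le c_d 0 1 one_pos
    have h0 : ((0:ℕ):ℝ) ^ ((d:ℝ)/(d+1)) = 0 := by
      rw [Nat.cast_zero]
      exact Real.zero_rpow (ne_of_gt (div_pos hdpos (by positivity)))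
    rw [h0, mul_zero, Real.exp_zero]
    simpa using h
  · have hn1 : 1 ≤ n := by omega
    have hNpos : (0:ℝ) < (n:ℝ) := by exact_mod_cast hn1
    set t := (A / (n:ℝ)) ^ ((1:ℝ)/(d+1)) with htdef
    have htpos : 0 < t := Real.rpow_pos_of_pos (div_pos hApos hNpos) _
    have h1 := PC.count_le c_d n t htpos
    have h2 := PC.prod_le_exp d hd c hc c_d hcd n t htpos
    have hfac : (d:ℝ) * ((d-1).factorial:ℝ) = (d.factorial:ℝ) := by
      exact_mod_cast congrArg (Nat.cast : ℕ → ℝ) (Nat.mul_factorial_pred (by omega))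
    have hBA : c * ((d-1).factorial:ℝ) * sSup (PC.pSet d) * Z / t ^ d
        = (A / (d:ℝ)) / t ^ d := by
      congr 1
      rw [hAdef, eq_div_iff (ne_of_gt hdpos)]
      linear_combination c * sSup (PC.pSet d) * Z * hfac
    rw [hBA] at h2
    have h3 : (partCount c_d n : ℝ) ≤ Real.exp (t * n + (A / (d:ℝ)) / t ^ d) := by
      rw [Real.exp_add]
      calc (partCount c_d n : ℝ)
          ≤ Real.exp (t * n) * ∏ i ∈ Finset.Icc 1 n,
              ((1 - Real.exp (-(t * i)))⁻¹) ^ (c_d i) := h1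
        _ ≤ Real.exp (t * n) * Real.exp ((A / (d:ℝ)) / t ^ d) :=
            mul_le_mul_of_nonneg_left h2 (Real.exp_pos _).le
    have hopt := PC.optimize d hd A hApos n hn1 t htdef
    rw [hopt] at h3
    exact h3
end

section
/- Fix an integer d ≥ 1 and a constant c > 0, and let c_d : {1,2,3,…} → ℕ satisfy c_d(i) ≤ c·(i+1)(i+2)⋯(i+d−1) for all i ≥ 1 (for d = 1 the empty product equals 1, i.e. c_d(i) ≤ c). Then there exists a constant β_d > 0 (depending only on c and d, e.g. β_d = ((d+1)/d)(c·d!·p_d·ζ(d+1))^{1/(d+1)} with p_d = sup_{x>0} x^{d+1}e^{−x}/(1−e^{−x})^{d+1}) such that for all positive integers N and D, the number P(N,D,d) of multisets consisting of at most N letters with total degree at most D satisfies P(N,D,d) ≤ D · exp(β_d · D^{d/(d+1)}). In particular the bound is independent of N. -/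
open scoped BigOperators

/-- Size (number of letters, counted with multiplicity) of a multiset of letters. -/
def msetSize {c_d : ℕ → ℕ} (m : Letter c_d →₀ ℕ) : ℕ :=
  m.sum fun _ k => k

/-- `paramCount c_d N D` = number of multisets of at most `N` letters with total degree
at most `D`. -/
noncomputable def paramCount (c_d : ℕ → ℕ) (N D : ℕ) : ℕ :=
  Nat.card {m : Letter c_d →₀ ℕ // msetSize m ≤ N ∧ msetDegree m ≤ D}


section Aux
open Real Finset


lemma one_sub_exp_pos (u : ℝ) (hu : 0 < u) : 0 < 1 - Real.exp (-u) := by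
  have h1 : Real.exp (-u) < 1 := by rw [Real.exp_lt_one_iff]; linarith
  linarith

lemma ratio_le (u : ℝ) (hu : 0 < u) :
    Real.exp (-u) * (1 - Real.exp (-u))⁻¹ ≤ u⁻¹ := by
  have h2 := one_sub_exp_pos u hu
  rw [mul_inv_le_iff₀ h2, inv_mul_eq_div, le_div_iff₀ hu]
  have h3 := Real.add_one_le_exp u
  have hepos := Real.exp_pos (-u)
  have h4 : Real.exp u * Real.exp (-u) = 1 := by rw [← Real.exp_add]; simp
  nlinarith

lemma pow_le_factorial_mul_exp (x : ℝ) (hx : 0 ≤ x) (m : ℕ) :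
    x ^ m ≤ (m.factorial : ℝ) * Real.exp x := by
  have h := Real.sum_le_exp_of_nonneg hx (m + 1)
  have h2 : x ^ m / (m.factorial : ℝ) ≤ ∑ i ∈ Finset.range (m+1), x ^ i / i.factorial :=
    Finset.single_le_sum (f := fun i => x ^ i / (i.factorial : ℝ))
      (fun i _ => by positivity) (by simp)
  have hm : (0:ℝ) < m.factorial := by positivity
  rw [div_le_iff₀ hm] at h2
  calc x ^ m ≤ Real.exp x * m.factorial :=
        h2.trans (mul_le_mul_of_nonneg_right h (le_of_lt hm))
    _ = (m.factorial : ℝ) * Real.exp x := by ring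

lemma sum_pow_Icc_le (r : ℝ) (h0 : 0 ≤ r) (h1 : r < 1) (D : ℕ) :
    ∑ i ∈ Finset.Icc 1 D, r ^ i ≤ r * (1 - r)⁻¹ := by
  have hg : Summable (fun i : ℕ => r ^ i) := summable_geometric_of_lt_one h0 h1
  have hs : Summable (fun i : ℕ => r ^ (i+1)) := by
    simpa [pow_succ'] using hg.mul_left r
  have h2 : ∑ i ∈ Finset.Icc 1 D, r ^ i = ∑ i ∈ Finset.range D, r ^ (i+1) := by
    induction D with
    | zero => simp
    | succ n ih =>
        rw [Finset.sum_Icc_succ_top (by omega), ih, Finset.sum_range_succ]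
  rw [h2]
  calc ∑ i ∈ Finset.range D, r ^ (i+1) ≤ ∑' i : ℕ, r ^ (i+1) :=
        Summable.sum_le_tsum _ (fun i _ => by positivity) hs
    _ = r * (1-r)⁻¹ := by
        simp_rw [pow_succ']
        rw [tsum_mul_left, tsum_geometric_of_lt_one h0 h1]


-- inner sum bound
lemma inner_sum_le (d : ℕ) (hd : 1 ≤ d) (s : ℝ) (hs : 0 < s) (D : ℕ) :
    ∑ i ∈ Finset.Icc 1 D, (i:ℝ)^(d-1) * Real.exp (-(s*i))
      ≤ ((d-1).factorial : ℝ) * 2^d / s^d := by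
  have hr0 : (0:ℝ) ≤ Real.exp (-(s/2)) := (Real.exp_pos _).le
  have hr1 : Real.exp (-(s/2)) < 1 := by
    rw [Real.exp_lt_one_iff]; linarith
  have key : ∀ i ∈ Finset.Icc 1 D, (i:ℝ)^(d-1) * Real.exp (-(s*i))
      ≤ (2/s)^(d-1) * ((d-1).factorial : ℝ) * Real.exp (-(s/2)) ^ i := by
    intro i hi
    have hi1 : (1:ℝ) ≤ (i:ℝ) := by
      simp only [Finset.mem_Icc] at hi; exact_mod_cast hi.1
    have hx : (0:ℝ) ≤ s * i / 2 := by positivity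
    have h1 : (s*i/2)^(d-1) ≤ ((d-1).factorial : ℝ) * Real.exp (s*i/2) :=
      pow_le_factorial_mul_exp _ hx _
    have h2 : (i:ℝ)^(d-1) ≤ (2/s)^(d-1) * (((d-1).factorial : ℝ) * Real.exp (s*i/2)) := by
      calc (i:ℝ)^(d-1) = (2/s)^(d-1) * (s*i/2)^(d-1) := by
            rw [← mul_pow]; field_simp
        _ ≤ _ := by
            apply mul_le_mul_of_nonneg_left h1 (by positivity)
    have h3 : Real.exp (s*i/2) * Real.exp (-(s*i)) = Real.exp (-(s/2)) ^ i := by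
      rw [← Real.exp_add, ← Real.exp_nat_mul]
      congr 1; ring
    calc (i:ℝ)^(d-1) * Real.exp (-(s*i))
        ≤ ((2/s)^(d-1) * (((d-1).factorial : ℝ) * Real.exp (s*i/2))) * Real.exp (-(s*i)) :=
          mul_le_mul_of_nonneg_right h2 (Real.exp_pos _).le
      _ = (2/s)^(d-1) * ((d-1).factorial : ℝ) * (Real.exp (s*i/2) * Real.exp (-(s*i))) := by ring
      _ = _ := by rw [h3]
  calc ∑ i ∈ Finset.Icc 1 D, (i:ℝ)^(d-1) * Real.exp (-(s*i))
      ≤ ∑ i ∈ Finset.Icc 1 D, (2/s)^(d-1) * ((d-1).factorial : ℝ) * Real.exp (-(s/2)) ^ i :=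
        Finset.sum_le_sum key
    _ = (2/s)^(d-1) * ((d-1).factorial : ℝ) * ∑ i ∈ Finset.Icc 1 D, Real.exp (-(s/2)) ^ i := by
        rw [Finset.mul_sum]
    _ ≤ (2/s)^(d-1) * ((d-1).factorial : ℝ) * (2/s) := by
        apply mul_le_mul_of_nonneg_left _ (by positivity)
        calc ∑ i ∈ Finset.Icc 1 D, Real.exp (-(s/2)) ^ i
            ≤ Real.exp (-(s/2)) * (1 - Real.exp (-(s/2)))⁻¹ := sum_pow_Icc_le _ hr0 hr1 D
          _ ≤ (s/2)⁻¹ := ratio_le _ (by positivity)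
          _ = 2/s := by rw [inv_div]
    _ = ((d-1).factorial : ℝ) * 2^d / s^d := by
        rw [div_pow]
        have hd' : d - 1 + 1 = d := by omega
        field_simp
        have e1 : (2:ℝ)^(d-1)*2 = 2^d := by rw [← pow_succ, hd']
        have e2 : s^(d-1)*s = s^d := by rw [← pow_succ, hd']
        rw [← e1, ← e2]; ring

lemma summable_inv_succ_pow {p : ℕ} (hp : 2 ≤ p) :
    Summable (fun k : ℕ => (((k:ℝ)+1)^p)⁻¹) := by
  have h : Summable (fun n : ℕ => 1 / (n : ℝ) ^ p) :=
    summable_one_div_nat_pow.mpr (by omega)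
  have := (summable_nat_add_iff 1).mpr h
  simpa [one_div, Nat.cast_add] using this

lemma sum_range_inv_sq_le (n : ℕ) :
    ∑ k ∈ Finset.range n, (((k:ℝ)+1)^2)⁻¹ ≤ 2 - 2/((n:ℝ)+1) := by
  induction n with
  | zero => norm_num
  | succ n ih =>
      rw [Finset.sum_range_succ]
      have hn : (0:ℝ) < (n:ℝ) + 1 := by positivity
      have hn2 : (0:ℝ) < (n:ℝ) + 2 := by positivity
      have key : (((n:ℝ)+1)^2)⁻¹ ≤ 2/((n:ℝ)+1) - 2/((n:ℝ)+2) := by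
        rw [div_sub_div _ _ (ne_of_gt hn) (ne_of_gt hn2), inv_le_iff_one_le_mul₀ (by positivity)]
        rw [div_mul_eq_mul_div, le_div_iff₀ (by positivity)]
        nlinarith
      push_cast
      have : ((n:ℝ)+1+1) = (n:ℝ)+2 := by ring
      rw [this]
      linarith
lemma tsum_inv_succ_pow_le {p : ℕ} (hp : 2 ≤ p) :
    ∑' k : ℕ, (((k:ℝ)+1)^p)⁻¹ ≤ 2 := by
  apply Summable.tsum_le_of_sum_le (summable_inv_succ_pow hp)
  intro s
  obtain ⟨n, hn⟩ := s.exists_nat_subset_range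
  calc ∑ k ∈ s, (((k:ℝ)+1)^p)⁻¹ ≤ ∑ k ∈ Finset.range n, (((k:ℝ)+1)^p)⁻¹ :=
        Finset.sum_le_sum_of_subset_of_nonneg hn (fun i _ _ => by positivity)
    _ ≤ ∑ k ∈ Finset.range n, (((k:ℝ)+1)^2)⁻¹ := by
        apply Finset.sum_le_sum
        intro i _
        apply inv_anti₀ (by positivity)
        apply pow_le_pow_right₀ (by linarith [Nat.cast_nonneg (α := ℝ) i])
        exact hp
    _ ≤ 2 - 2/((n:ℝ)+1) := sum_range_inv_sq_le n
    _ ≤ 2 := by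
        have : (0:ℝ) < (n:ℝ)+1 := by positivity
        have : 0 ≤ 2/((n:ℝ)+1) := by positivity
        linarith


lemma log_sum_le (d : ℕ) (hd : 1 ≤ d) (c : ℝ) (hc : 0 < c) (c_d : ℕ → ℕ)
    (hcd : ∀ i : ℕ, 1 ≤ i → (c_d i : ℝ) ≤ c * ∏ j ∈ Finset.Ico 1 d, ((i : ℝ) + j))
    (t : ℝ) (ht : 0 < t) (D : ℕ) :
    ∑ i ∈ Finset.Icc 1 D, (c_d i : ℝ) * (-Real.log (1 - Real.exp (-(t*i))))
      ≤ (c * (d:ℝ)^(d-1) * ((d-1).factorial : ℝ) * 2^(d+1)) / t^d := by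
  set C : ℝ := c * (d:ℝ)^(d-1) with hC
  have hCpos : 0 < C := by positivity
  -- c_d i ≤ C * i^(d-1)
  have hcd' : ∀ i : ℕ, 1 ≤ i → (c_d i : ℝ) ≤ C * (i:ℝ)^(d-1) := by
    intro i hi
    have hi1 : (1:ℝ) ≤ (i:ℝ) := by exact_mod_cast hi
    refine (hcd i hi).trans ?_
    have hprod : ∏ j ∈ Finset.Ico 1 d, ((i : ℝ) + j) ≤ ∏ j ∈ Finset.Ico 1 d, ((i:ℝ) * d) := by
      apply Finset.prod_le_prod
      · intro j _; positivity
      · intro j hj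
        simp only [Finset.mem_Ico] at hj
        have hj1 : (1:ℝ) ≤ (j:ℝ) := by exact_mod_cast hj.1
        have hjd : (j:ℝ) + 1 ≤ (d:ℝ) := by exact_mod_cast hj.2
        nlinarith
    rw [Finset.prod_const, Nat.card_Ico] at hprod
    calc c * ∏ j ∈ Finset.Ico 1 d, ((i : ℝ) + j) ≤ c * ((i:ℝ)*d)^(d-1) :=
          mul_le_mul_of_nonneg_left hprod hc.le
      _ = C * (i:ℝ)^(d-1) := by rw [hC, mul_pow]; ring
  -- per-i series
  have hx : ∀ i : ℕ, 1 ≤ i → Real.exp (-(t*i)) < 1 ∧ 0 < Real.exp (-(t*i)) := by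
    intro i hi
    have : (0:ℝ) < t * i := by
      have : (1:ℝ) ≤ (i:ℝ) := by exact_mod_cast hi
      nlinarith
    exact ⟨by rw [Real.exp_lt_one_iff]; linarith, Real.exp_pos _⟩
  have hser : ∀ i ∈ Finset.Icc 1 D,
      HasSum (fun k : ℕ => C * (i:ℝ)^(d-1) * (Real.exp (-(t*i)) ^ (k+1) / (k+1)))
        (C * (i:ℝ)^(d-1) * (-Real.log (1 - Real.exp (-(t*i))))) := by
    intro i hi
    have hi1 : 1 ≤ i := (Finset.mem_Icc.mp hi).1
    obtain ⟨hlt, hpos⟩ := hx i hi1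
    exact (hasSum_pow_div_log_of_abs_lt_one (by rw [abs_of_pos hpos]; exact hlt)).mul_left _
  -- bound by the C i^{d-1} version
  have step1 : ∑ i ∈ Finset.Icc 1 D, (c_d i : ℝ) * (-Real.log (1 - Real.exp (-(t*i))))
      ≤ ∑ i ∈ Finset.Icc 1 D, C * (i:ℝ)^(d-1) * (-Real.log (1 - Real.exp (-(t*i)))) := by
    apply Finset.sum_le_sum
    intro i hi
    have hi1 : 1 ≤ i := (Finset.mem_Icc.mp hi).1
    have hpos : (0:ℝ) < t * i := by
      have : (1:ℝ) ≤ (i:ℝ) := by exact_mod_cast hi1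
      nlinarith
    have hlog : 0 ≤ -Real.log (1 - Real.exp (-(t*i))) := by
      rw [neg_nonneg]
      apply Real.log_nonpos
      · linarith [one_sub_exp_pos (t*i) hpos]
      · have := Real.exp_pos (-(t*i)); linarith
    exact mul_le_mul_of_nonneg_right (hcd' i hi1) hlog
  -- swap sums
  have step2 : ∑ i ∈ Finset.Icc 1 D, C * (i:ℝ)^(d-1) * (-Real.log (1 - Real.exp (-(t*i))))
      = ∑' k : ℕ, ∑ i ∈ Finset.Icc 1 D,
          C * (i:ℝ)^(d-1) * (Real.exp (-(t*i)) ^ (k+1) / (k+1)) := by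
    rw [show ∑ i ∈ Finset.Icc 1 D, C * (i:ℝ)^(d-1) * (-Real.log (1 - Real.exp (-(t*i))))
        = ∑ i ∈ Finset.Icc 1 D, ∑' k : ℕ, C * (i:ℝ)^(d-1) * (Real.exp (-(t*i)) ^ (k+1) / (k+1))
      from Finset.sum_congr rfl fun i hi => (hser i hi).tsum_eq.symm]
    exact (Summable.tsum_finsetSum (fun i hi => (hser i hi).summable)).symm
  -- bound the tsum
  have hsummL : Summable (fun k : ℕ => ∑ i ∈ Finset.Icc 1 D,
      C * (i:ℝ)^(d-1) * (Real.exp (-(t*i)) ^ (k+1) / (k+1))) :=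
    summable_sum (fun i hi => (hser i hi).summable)
  have hsummR : Summable (fun k : ℕ =>
      (C * ((d-1).factorial : ℝ) * 2^d / t^d) * (((k:ℝ)+1)^(d+1))⁻¹) :=
    (summable_inv_succ_pow (by omega)).mul_left _
  have step3 : ∀ k : ℕ, ∑ i ∈ Finset.Icc 1 D,
      C * (i:ℝ)^(d-1) * (Real.exp (-(t*i)) ^ (k+1) / (k+1))
      ≤ (C * ((d-1).factorial : ℝ) * 2^d / t^d) * (((k:ℝ)+1)^(d+1))⁻¹ := by
    intro k
    have hk1 : (0:ℝ) < (k:ℝ) + 1 := by positivity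
    have hs : 0 < t * ((k:ℝ)+1) := by positivity
    have hrw : ∀ i : ℕ, Real.exp (-(t*i)) ^ (k+1) = Real.exp (-((t*((k:ℝ)+1))*i)) := by
      intro i
      rw [← Real.exp_nat_mul]
      congr 1
      push_cast
      ring
    calc ∑ i ∈ Finset.Icc 1 D, C * (i:ℝ)^(d-1) * (Real.exp (-(t*i)) ^ (k+1) / (k+1))
        = (C / ((k:ℝ)+1)) * ∑ i ∈ Finset.Icc 1 D, (i:ℝ)^(d-1) * Real.exp (-((t*((k:ℝ)+1))*i)) := by
          rw [Finset.mul_sum]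
          apply Finset.sum_congr rfl
          intro i _
          rw [hrw i]
          push_cast
          ring
      _ ≤ (C / ((k:ℝ)+1)) * (((d-1).factorial : ℝ) * 2^d / (t*((k:ℝ)+1))^d) := by
          apply mul_le_mul_of_nonneg_left (inner_sum_le d hd _ hs D) (by positivity)
      _ = (C * ((d-1).factorial : ℝ) * 2^d / t^d) * (((k:ℝ)+1)^(d+1))⁻¹ := by
          rw [mul_pow, pow_succ]
          field_simp
  have step4 : ∑' k : ℕ, ∑ i ∈ Finset.Icc 1 D,
      C * (i:ℝ)^(d-1) * (Real.exp (-(t*i)) ^ (k+1) / (k+1))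
      ≤ (C * ((d-1).factorial : ℝ) * 2^d / t^d) * ∑' k : ℕ, (((k:ℝ)+1)^(d+1))⁻¹ := by
    rw [← tsum_mul_left]
    exact Summable.tsum_le_tsum step3 hsummL hsummR
  have step5 : (C * ((d-1).factorial : ℝ) * 2^d / t^d) * ∑' k : ℕ, (((k:ℝ)+1)^(d+1))⁻¹
      ≤ (C * ((d-1).factorial : ℝ) * 2^d / t^d) * 2 := by
    apply mul_le_mul_of_nonneg_left (tsum_inv_succ_pow_le (by omega)) (by positivity)
  calc ∑ i ∈ Finset.Icc 1 D, (c_d i : ℝ) * (-Real.log (1 - Real.exp (-(t*i))))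
      ≤ ∑ i ∈ Finset.Icc 1 D, C * (i:ℝ)^(d-1) * (-Real.log (1 - Real.exp (-(t*i)))) := step1
    _ = _ := step2
    _ ≤ _ := step4
    _ ≤ (C * ((d-1).factorial : ℝ) * 2^d / t^d) * 2 := step5
    _ = (c * (d:ℝ)^(d-1) * ((d-1).factorial : ℝ) * 2^(d+1)) / t^d := by
        rw [hC, pow_succ]
        ring





section Counting

variable {c_d : ℕ → ℕ} {D : ℕ}

lemma term_le_degree (m : Letter c_d →₀ ℕ) (ℓ : Letter c_d) :
    m ℓ * ℓ.1.1 ≤ msetDegree m := by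
  by_cases h : m ℓ = 0
  · simp [h]
  · exact Finset.single_le_sum (f := fun a => m a * a.1.1) (fun a _ => Nat.zero_le _)
      (Finsupp.mem_support_iff.mpr h)

lemma mult_le (m : Letter c_d →₀ ℕ) (hm : msetDegree m ≤ D) (ℓ : Letter c_d) :
    m ℓ ≤ D :=
  le_trans (Nat.le_mul_of_pos_right _ ℓ.1.2) (le_trans (term_le_degree m ℓ) hm)

lemma zero_of_big (m : Letter c_d →₀ ℕ) (hm : msetDegree m ≤ D) (ℓ : Letter c_d)
    (h : D < ℓ.1.1) : m ℓ = 0 := by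
  by_contra h0
  have h1 : 1 ≤ m ℓ := Nat.one_le_iff_ne_zero.mpr h0
  have := term_le_degree m ℓ
  have : ℓ.1.1 ≤ D := le_trans (le_trans (Nat.le_mul_of_pos_left _ h1) this) hm
  omega

/-- index type for letters of degree between 1 and D -/
def Idx (c_d : ℕ → ℕ) (D : ℕ) : Type := Σ i : (Finset.Icc 1 D : Finset ℕ), Fin (c_d i.1)

instance : Fintype (Idx c_d D) := by unfold Idx; infer_instance
instance : DecidableEq (Idx c_d D) := by unfold Idx; exact inferInstance

def letter (x : Idx c_d D) : Letter c_d :=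
  ⟨⟨x.1.1, by have := x.1.2; simp only [Finset.mem_Icc] at this; omega⟩, x.2⟩

lemma counting (c_d : ℕ → ℕ) (N D : ℕ) (t : ℝ) (ht : 0 < t) :
    (paramCount c_d N D : ℝ) ≤
      Real.exp (t*D) * ∏ i ∈ Finset.Icc 1 D, ((1 - Real.exp (-(t*i)))⁻¹)^(c_d i) := by
  classical
  set ι := Idx c_d D with hι
  set cond : (ι → Fin (D+1)) → Prop := fun f => ∑ x : ι, (f x : ℕ) * x.1.1 ≤ D with hcond
  -- injection
  have hinj : ∃ Φ : {m : Letter c_d →₀ ℕ // msetSize m ≤ N ∧ msetDegree m ≤ D} →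
      {f : ι → Fin (D+1) // cond f}, Function.Injective Φ := by
    refine ⟨fun ⟨m, hm⟩ => ⟨fun x => ⟨m (letter x), Nat.lt_succ_of_le (mult_le m hm.2 _)⟩, ?_⟩, ?_⟩
    · -- the degree condition
      have himg : m.support ⊆ Finset.univ.image (letter (c_d := c_d) (D := D)) := by
        intro ℓ hℓ
        have hne : m ℓ ≠ 0 := Finsupp.mem_support_iff.mp hℓ
        have hle : ℓ.1.1 ≤ D := by
          by_contra hgt
          exact hne (zero_of_big m hm.2 ℓ (by omega))
        obtain ⟨⟨i, hi⟩, a⟩ := ℓ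
        refine Finset.mem_image.mpr ⟨⟨⟨i, Finset.mem_Icc.mpr ⟨hi, hle⟩⟩, a⟩, Finset.mem_univ _, rfl⟩
      have hletinj : Function.Injective (letter (c_d := c_d) (D := D)) := by
        rintro ⟨⟨i, hi⟩, a⟩ ⟨⟨j, hj⟩, b⟩ h
        unfold letter at h
        obtain ⟨h1, h2⟩ := Sigma.mk.inj_iff.mp h
        obtain rfl : i = j := congrArg Subtype.val h1
        rw [heq_eq_eq] at h2
        subst h2
        rfl
      calc ∑ x : ι, m (letter x) * x.1.1
          = ∑ x : ι, m (letter x) * (letter x).1.1 := rfl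
        _ = ∑ ℓ ∈ Finset.univ.image (letter (c_d := c_d) (D := D)), m ℓ * ℓ.1.1 :=
            (Finset.sum_image (f := fun ℓ : Letter c_d => m ℓ * ℓ.1.1)
              (fun x _ y _ h => hletinj h)).symm
        _ = ∑ ℓ ∈ m.support, m ℓ * ℓ.1.1 :=
            (Finset.sum_subset himg (fun ℓ _ hℓ => by
              simp [Finsupp.notMem_support_iff.mp hℓ])).symm
        _ = msetDegree m := rfl
        _ ≤ D := hm.2
    · -- injectivity
      rintro ⟨m₁, hm₁⟩ ⟨m₂, hm₂⟩ h
      simp only [Subtype.mk.injEq] at h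
      have hval : ∀ x : ι, m₁ (letter x) = m₂ (letter x) := by
        intro x
        have h2 := congrFun h x
        exact congrArg Fin.val h2
      apply Subtype.ext
      ext ℓ
      by_cases hle : ℓ.1.1 ≤ D
      · obtain ⟨⟨i, hi⟩, a⟩ := ℓ
        exact hval ⟨⟨i, Finset.mem_Icc.mpr ⟨hi, hle⟩⟩, a⟩
      · rw [zero_of_big m₁ hm₁.2 ℓ (by omega), zero_of_big m₂ hm₂.2 ℓ (by omega)]
  obtain ⟨Φ, hΦ⟩ := hinj
  have h1 : paramCount c_d N D ≤ Nat.card {f : ι → Fin (D+1) // cond f} :=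
    Nat.card_le_card_of_injective Φ hΦ
  have h2 : Nat.card {f : ι → Fin (D+1) // cond f}
      = (Finset.univ.filter cond).card := by
    rw [Nat.card_eq_fintype_card, Fintype.card_subtype]
  -- weighted count
  have hw : ∀ f : ι → Fin (D+1), f ∈ Finset.univ.filter cond →
      (1:ℝ) ≤ Real.exp (t * ((D:ℝ) - ∑ x : ι, ((f x : ℕ):ℝ) * (x.1.1:ℝ))) := by
    intro f hf
    rw [Finset.mem_filter] at hf
    have hc : (∑ x : ι, ((f x : ℕ):ℝ) * (x.1.1:ℝ)) ≤ (D:ℝ) := by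
      have := hf.2
      rw [hcond] at this
      calc (∑ x : ι, ((f x : ℕ):ℝ) * (x.1.1:ℝ))
          = ((∑ x : ι, (f x : ℕ) * x.1.1 : ℕ) : ℝ) := by push_cast; rfl
        _ ≤ (D:ℝ) := by exact_mod_cast this
    rw [Real.one_le_exp_iff]
    have : 0 ≤ (D:ℝ) - ∑ x : ι, ((f x : ℕ):ℝ) * (x.1.1:ℝ) := by linarith
    positivity
  -- expand exp into a product
  have hsplit : ∀ f : ι → Fin (D+1),
      Real.exp (t * ((D:ℝ) - ∑ x : ι, ((f x : ℕ):ℝ) * (x.1.1:ℝ)))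
      = Real.exp (t*D) * ∏ x : ι, Real.exp (-(t * ((f x : ℕ):ℝ) * (x.1.1:ℝ))) := by
    intro f
    rw [← Real.exp_sum, ← Real.exp_add]
    congr 1
    have e : ∑ x : ι, -(t * ((f x : ℕ):ℝ) * (x.1.1:ℝ))
        = -(t * ∑ x : ι, ((f x : ℕ):ℝ) * (x.1.1:ℝ)) := by
      rw [Finset.sum_neg_distrib, Finset.mul_sum]
      congr 1
      exact Finset.sum_congr rfl fun x _ => by ring
    rw [e]
    ring
  -- swap sum and product
  have hswap : ∑ f : ι → Fin (D+1), ∏ x : ι, Real.exp (-(t * ((f x : ℕ):ℝ) * (x.1.1:ℝ)))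
      = ∏ x : ι, ∑ k : Fin (D+1), Real.exp (-(t * ((k : ℕ):ℝ) * (x.1.1:ℝ))) := by
    rw [Finset.prod_univ_sum (t := fun _ : ι => (Finset.univ : Finset (Fin (D+1))))
      (f := fun x k => Real.exp (-(t * ((k : ℕ):ℝ) * (x.1.1:ℝ))))]
    rw [Fintype.piFinset_univ]
  -- geometric factor bound
  have hfac : ∀ x : ι, ∑ k : Fin (D+1), Real.exp (-(t * ((k : ℕ):ℝ) * (x.1.1:ℝ)))
      ≤ (1 - Real.exp (-(t * (x.1.1:ℝ))))⁻¹ := by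
    intro x
    have hdegpos : (0:ℝ) < (x.1.1:ℝ) := by
      have := x.1.2; simp only [Finset.mem_Icc] at this
      exact_mod_cast Nat.lt_of_lt_of_le Nat.zero_lt_one this.1
    set r : ℝ := Real.exp (-(t * (x.1.1:ℝ))) with hr
    have hr0 : 0 ≤ r := (Real.exp_pos _).le
    have hr1 : r < 1 := by
      rw [hr, Real.exp_lt_one_iff]
      nlinarith
    have hterm : ∀ k : ℕ, Real.exp (-(t * (k:ℝ) * (x.1.1:ℝ))) = r ^ k := by
      intro k
      rw [hr, ← Real.exp_nat_mul]
      congr 1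
      ring
    calc ∑ k : Fin (D+1), Real.exp (-(t * ((k : ℕ):ℝ) * (x.1.1:ℝ)))
        = ∑ k ∈ Finset.range (D+1), r ^ k := by
          rw [Fin.sum_univ_eq_sum_range (fun k => Real.exp (-(t * (k:ℝ) * (x.1.1:ℝ))))]
          exact Finset.sum_congr rfl fun k _ => hterm k
      _ ≤ ∑' k : ℕ, r ^ k :=
          Summable.sum_le_tsum _ (fun k _ => by positivity) (summable_geometric_of_lt_one hr0 hr1)
      _ = (1 - r)⁻¹ := tsum_geometric_of_lt_one hr0 hr1
  -- the product over the sigma type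
  have hprod : ∏ x : ι, (1 - Real.exp (-(t * (x.1.1:ℝ))))⁻¹
      = ∏ i ∈ Finset.Icc 1 D, ((1 - Real.exp (-(t*i)))⁻¹)^(c_d i) := by
    rw [show (∏ x : ι, (1 - Real.exp (-(t * (x.1.1:ℝ))))⁻¹)
        = ∏ x ∈ (Finset.univ.sigma fun _ : (Finset.Icc 1 D : Finset ℕ) =>
            (Finset.univ : Finset (Fin (c_d _)))), (1 - Real.exp (-(t * (x.1.1:ℝ))))⁻¹
      from by rw [Finset.univ_sigma_univ]; rfl]
    rw [Finset.prod_sigma]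
    rw [← Finset.prod_coe_sort (Finset.Icc 1 D) (fun i => ((1 - Real.exp (-(t*i)))⁻¹)^(c_d i))]
    apply Finset.prod_congr rfl
    intro i _
    simp [Finset.prod_const]
  -- assemble
  have hfilter : ((Finset.univ.filter cond).card : ℝ)
      ≤ Real.exp (t*D) * ∏ i ∈ Finset.Icc 1 D, ((1 - Real.exp (-(t*i)))⁻¹)^(c_d i) := by
    calc ((Finset.univ.filter cond).card : ℝ)
        = ∑ _f ∈ Finset.univ.filter cond, (1:ℝ) := by
          rw [Finset.sum_const]; simp
      _ ≤ ∑ f ∈ Finset.univ.filter cond,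
            Real.exp (t * ((D:ℝ) - ∑ x : ι, ((f x : ℕ):ℝ) * (x.1.1:ℝ))) :=
          Finset.sum_le_sum hw
      _ ≤ ∑ f : ι → Fin (D+1),
            Real.exp (t * ((D:ℝ) - ∑ x : ι, ((f x : ℕ):ℝ) * (x.1.1:ℝ))) :=
          Finset.sum_le_sum_of_subset_of_nonneg (Finset.filter_subset _ _)
            (fun f _ _ => (Real.exp_pos _).le)
      _ = Real.exp (t*D) * ∑ f : ι → Fin (D+1),
            ∏ x : ι, Real.exp (-(t * ((f x : ℕ):ℝ) * (x.1.1:ℝ))) := by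
          rw [Finset.mul_sum]
          exact Finset.sum_congr rfl fun f _ => hsplit f
      _ = Real.exp (t*D) * ∏ x : ι, ∑ k : Fin (D+1),
            Real.exp (-(t * ((k : ℕ):ℝ) * (x.1.1:ℝ))) := by rw [hswap]
      _ ≤ Real.exp (t*D) * ∏ x : ι, (1 - Real.exp (-(t * (x.1.1:ℝ))))⁻¹ := by
          apply mul_le_mul_of_nonneg_left _ (Real.exp_pos _).le
          apply Finset.prod_le_prod
          · intro x _
            apply Finset.sum_nonneg
            intro k _
            exact (Real.exp_pos _).le
          · intro x _
            exact hfac x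
      _ = _ := by rw [hprod]
  calc (paramCount c_d N D : ℝ)
      ≤ ((Finset.univ.filter cond).card : ℝ) := by exact_mod_cast h2 ▸ h1
    _ ≤ _ := hfilter

end Counting

end Aux

/-- there is `β_d > 0` depending only on `c` and `d` such that for every
alphabet with `c_d(i) ≤ c (i+1)⋯(i+d−1)` letters of degree `i`, and all `N, D ≥ 1`,
`P(N,D,d) ≤ D exp(β_d D^{d/(d+1)})`; in particular the bound is independent of `N`. -/
theorem paramCount_le_exp
    (d : ℕ) (hd : 1 ≤ d) (c : ℝ) (hc : 0 < c) :
    ∃ β : ℝ, 0 < β ∧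
      ∀ c_d : ℕ → ℕ,
        (∀ i : ℕ, 1 ≤ i → (c_d i : ℝ) ≤ c * ∏ j ∈ Finset.Ico 1 d, ((i : ℝ) + j)) →
        ∀ N D : ℕ, 0 < N → 0 < D →
          (paramCount c_d N D : ℝ)
            ≤ (D : ℝ) * Real.exp (β * (D : ℝ) ^ ((d : ℝ) / (d + 1))) := by
  set K : ℝ := c * (d:ℝ)^(d-1) * ((d-1).factorial : ℝ) * 2^(d+1) with hK
  have hKpos : 0 < K := by positivity
  refine ⟨1 + K, by positivity, ?_⟩
  intro c_d hcd N D hN hD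
  have hDpos : (0:ℝ) < D := by exact_mod_cast hD
  have hD1 : (1:ℝ) ≤ D := by exact_mod_cast hD
  set t : ℝ := (D:ℝ) ^ (-(1/((d:ℝ)+1))) with htdef
  have ht : 0 < t := Real.rpow_pos_of_pos hDpos _
  have hd1 : (0:ℝ) < (d:ℝ) + 1 := by positivity
  -- rewrite the product as an exponential
  have hprod : ∏ i ∈ Finset.Icc 1 D, ((1 - Real.exp (-(t*i)))⁻¹)^(c_d i)
      = Real.exp (∑ i ∈ Finset.Icc 1 D, (c_d i:ℝ) * (-Real.log (1 - Real.exp (-(t*i))))) := by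
    rw [Real.exp_sum]
    apply Finset.prod_congr rfl
    intro i hi
    have hi1 : 1 ≤ i := (Finset.mem_Icc.mp hi).1
    have hpos : (0:ℝ) < t * i := by
      have : (1:ℝ) ≤ (i:ℝ) := by exact_mod_cast hi1
      nlinarith
    have h1 : 0 < 1 - Real.exp (-(t*i)) := one_sub_exp_pos _ hpos
    rw [show ((c_d i:ℝ) * (-Real.log (1 - Real.exp (-(t*i)))))
        = (c_d i : ℕ) * (-Real.log (1 - Real.exp (-(t*i)))) from by push_cast; ring]
    rw [Real.exp_nat_mul, ← Real.log_inv, Real.exp_log (by positivity)]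
  -- exponent computations
  have hpow1 : t * (D:ℝ) = (D:ℝ) ^ ((d:ℝ)/(d+1)) := by
    rw [htdef]
    nth_rewrite 2 [show (D:ℝ) = (D:ℝ) ^ (1:ℝ) from (Real.rpow_one _).symm]
    rw [← Real.rpow_add hDpos]
    congr 1
    field_simp
    ring
  have hpow2 : K / t^d = K * (D:ℝ) ^ ((d:ℝ)/(d+1)) := by
    rw [htdef, ← Real.rpow_natCast ((D:ℝ) ^ (-(1/((d:ℝ)+1)))) d, ← Real.rpow_mul hDpos.le]
    rw [div_eq_mul_inv, ← Real.rpow_neg hDpos.le]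
    congr 1
    field_simp
  calc (paramCount c_d N D : ℝ)
      ≤ Real.exp (t*D) * ∏ i ∈ Finset.Icc 1 D, ((1 - Real.exp (-(t*i)))⁻¹)^(c_d i) :=
        counting c_d N D t ht
    _ = Real.exp (t*D) * Real.exp (∑ i ∈ Finset.Icc 1 D,
          (c_d i:ℝ) * (-Real.log (1 - Real.exp (-(t*i))))) := by rw [hprod]
    _ ≤ Real.exp (t*D) * Real.exp (K / t^d) := by
        apply mul_le_mul_of_nonneg_left _ (Real.exp_pos _).le
        exact Real.exp_le_exp.mpr (log_sum_le d hd c hc c_d hcd t ht D)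
    _ = Real.exp (t*D + K/t^d) := (Real.exp_add _ _).symm
    _ = Real.exp ((1+K) * (D:ℝ) ^ ((d:ℝ)/(d+1))) := by rw [hpow1, hpow2]; ring_nf
    _ ≤ (D:ℝ) * Real.exp ((1+K) * (D:ℝ) ^ ((d:ℝ)/(d+1))) := by
        nth_rewrite 1 [← one_mul (Real.exp _)]
        exact mul_le_mul_of_nonneg_right hD1 (Real.exp_pos _).le
end

section
/- Fix any function c_d : {1,2,3,…} → ℕ, and let f(n,m) denote the number of multisets consisting of exactly m letters with total degree exactly n, from an alphabet having exactly c_d(i) distinct letters of degree i for each i ≥ 1. Then for all n ≥ 0 and m ≥ 1, m · f(n,m) = Σ_{i ≥ 1, k ≥ 1, k·i ≤ n, k ≤ m} c_d(i) · f(n − k·i, m − k). -/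
open scoped BigOperators

/-- `partCount₂ c_d n m` = number of multisets of exactly `m` letters with total degree
exactly `n`. -/
noncomputable def partCount₂ (c_d : ℕ → ℕ) (n m : ℕ) : ℕ :=
  Nat.card {x : Letter c_d →₀ ℕ // msetDegree x = n ∧ msetSize x = m}

namespace PC2
variable {c_d : ℕ → ℕ}

lemma msetDegree_add (x y : Letter c_d →₀ ℕ) :
    msetDegree (x + y) = msetDegree x + msetDegree y :=
  Finsupp.sum_add_index' (fun _ => by simp) (fun ℓ a b => add_mul a b _)

lemma msetSize_add (x y : Letter c_d →₀ ℕ) :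
    msetSize (x + y) = msetSize x + msetSize y :=
  Finsupp.sum_add_index' (fun _ => rfl) (fun _ a b => rfl)

lemma msetDegree_single (ℓ : Letter c_d) (k : ℕ) :
    msetDegree (Finsupp.single ℓ k) = k * ℓ.1.1 := by
  simp [msetDegree, Finsupp.sum_single_index]

lemma msetSize_single (ℓ : Letter c_d) (k : ℕ) :
    msetSize (Finsupp.single ℓ k) = k := by
  simp [msetSize, Finsupp.sum_single_index]

lemma apply_mul_le_degree (x : Letter c_d →₀ ℕ) (ℓ : Letter c_d) :
    x ℓ * ℓ.1.1 ≤ msetDegree x := by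
  by_cases h : ℓ ∈ x.support
  · exact Finset.single_le_sum (f := fun ℓ => x ℓ * ℓ.1.1) (fun i _ => Nat.zero_le _) h
  · simp [Finsupp.notMem_support_iff.mp h]

lemma apply_le_size (x : Letter c_d →₀ ℕ) (ℓ : Letter c_d) :
    x ℓ ≤ msetSize x := by
  by_cases h : ℓ ∈ x.support
  · exact Finset.single_le_sum (f := fun ℓ => x ℓ) (fun i _ => Nat.zero_le _) h
  · simp [Finsupp.notMem_support_iff.mp h]

lemma finite_D (n : ℕ) : {ℓ : Letter c_d | ℓ.1.1 ≤ n}.Finite := by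
  set g : Letter c_d → ℕ × ℕ := fun ℓ => (ℓ.1.1, ℓ.2.1) with hg
  have hinj : Function.Injective g := by
    rintro ⟨⟨i, hi⟩, j⟩ ⟨⟨i', hi'⟩, j'⟩ h
    simp only [hg, Prod.mk.injEq] at h
    obtain ⟨h1, h2⟩ := h
    subst h1
    have : j = j' := Fin.ext h2
    subst this
    rfl
  have : {ℓ : Letter c_d | ℓ.1.1 ≤ n} ⊆ g ⁻¹' (Set.Iic n ×ˢ Set.Iio ((Finset.Iic n).sup c_d)) := by
    intro ℓ hℓ
    refine ⟨hℓ, ?_⟩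
    exact lt_of_lt_of_le ℓ.2.2 (Finset.le_sup (Finset.mem_Iic.mpr hℓ))
  exact Set.Finite.subset (Set.Finite.preimage hinj.injOn
    ((Set.finite_Iic n).prod (Set.finite_Iio _))) this

lemma finite_S (n m : ℕ) :
    {x : Letter c_d →₀ ℕ | msetDegree x = n ∧ msetSize x = m}.Finite := by
  classical
  set F := (finite_D (c_d := c_d) n).toFinset with hF
  set f : Letter c_d →₀ ℕ := ∑ ℓ ∈ F, Finsupp.single ℓ m with hf
  refine Set.Finite.subset (Set.finite_Iic f) ?_
  rintro x ⟨hd, hs⟩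
  intro ℓ
  by_cases h : x ℓ = 0
  · simp [h]
  · have h1 : 1 ≤ x ℓ := Nat.one_le_iff_ne_zero.mpr h
    have hdeg : ℓ.1.1 ≤ n := by
      calc ℓ.1.1 ≤ x ℓ * ℓ.1.1 := Nat.le_mul_of_pos_left _ h1
        _ ≤ msetDegree x := apply_mul_le_degree x ℓ
        _ = n := hd
    have hmem : ℓ ∈ F := by simp [hF, Set.Finite.mem_toFinset, hdeg]
    have : f ℓ = m := by
      rw [hf, Finset.sum_apply']
      rw [Finset.sum_eq_single ℓ]
      · simp
      · intro b _ hb; exact Finsupp.single_eq_of_ne' hb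
      · intro hb; exact absurd hmem hb
    rw [this]
    calc x ℓ ≤ msetSize x := apply_le_size x ℓ
      _ = m := hs


variable (c_d) in
noncomputable def Sf (n m : ℕ) : Finset (Letter c_d →₀ ℕ) :=
  (finite_S (c_d := c_d) n m).toFinset

lemma mem_Sf {n m : ℕ} {x : Letter c_d →₀ ℕ} :
    x ∈ Sf c_d n m ↔ msetDegree x = n ∧ msetSize x = m := by
  simp [Sf, Set.Finite.mem_toFinset]

lemma card_Sf (n m : ℕ) : (Sf c_d n m).card = partCount₂ c_d n m :=
  ((Nat.card_coe_set_eq _).trans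
    (Set.ncard_eq_toFinset_card _ (finite_S (c_d := c_d) n m))).symm

end PC2


open PC2 in
/-- recurrence with number of parts: for all `n ≥ 0` and `m ≥ 1`,
`m f(n,m) = ∑_{i,k ≥ 1, ki ≤ n, k ≤ m} c_d(i) f(n − ki, m − k)`. -/
theorem partCount₂_recurrence (c_d : ℕ → ℕ) (n m : ℕ) (hm : 1 ≤ m) :
    m * partCount₂ c_d n m =
      ∑ p ∈ (Finset.Icc 1 n ×ˢ Finset.Icc 1 m).filter
          (fun p : ℕ × ℕ => p.2 * p.1 ≤ n),
        c_d p.1 * partCount₂ c_d (n - p.2 * p.1) (m - p.2) := by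
  classical
  set F : Finset (Letter c_d) := (finite_D (c_d := c_d) n).toFinset with hF
  have hmemF : ∀ ℓ : Letter c_d, ℓ ∈ F ↔ ℓ.1.1 ≤ n := fun ℓ => by
    simp [hF, Set.Finite.mem_toFinset]
  set T : Finset ((Letter c_d →₀ ℕ) × Letter c_d × ℕ) :=
    ((Sf c_d n m) ×ˢ F ×ˢ Finset.Icc 1 m).filter (fun q => q.2.2 ≤ q.1 q.2.1) with hT
  have hmemT : ∀ q : (Letter c_d →₀ ℕ) × Letter c_d × ℕ,
      q ∈ T ↔ (msetDegree q.1 = n ∧ msetSize q.1 = m) ∧ q.2.1 ∈ F ∧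
        1 ≤ q.2.2 ∧ q.2.2 ≤ m ∧ q.2.2 ≤ q.1 q.2.1 := by
    intro q
    simp only [hT, Finset.mem_filter, Finset.mem_product, Finset.mem_Icc, mem_Sf]
    tauto
  -- Step 1 : T.card = m * partCount₂ c_d n m
  have h1 : T.card = m * partCount₂ c_d n m := by
    rw [hT, Finset.card_filter, Finset.sum_product]
    have key : ∀ x ∈ Sf c_d n m,
        (∑ q ∈ F ×ˢ Finset.Icc 1 m, if q.2 ≤ x q.1 then (1 : ℕ) else 0) = m := by
      intro x hx
      obtain ⟨hd, hs⟩ := mem_Sf.mp hx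
      rw [Finset.sum_product]
      have step : ∀ ℓ ∈ F, (∑ k ∈ Finset.Icc 1 m, if k ≤ x ℓ then (1 : ℕ) else 0) = x ℓ := by
        intro ℓ _
        rw [← Finset.card_filter]
        have hxl : x ℓ ≤ m := hs ▸ apply_le_size x ℓ
        have : (Finset.Icc 1 m).filter (fun k => k ≤ x ℓ) = Finset.Icc 1 (x ℓ) := by
          ext k; simp only [Finset.mem_filter, Finset.mem_Icc]; omega
        rw [this, Nat.card_Icc]; omega
      rw [Finset.sum_congr rfl step]
      have hsub : x.support ⊆ F := by
        intro ℓ hℓ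
        have h1 : 1 ≤ x ℓ := Nat.one_le_iff_ne_zero.mpr (Finsupp.mem_support_iff.mp hℓ)
        rw [hmemF]
        calc ℓ.1.1 ≤ x ℓ * ℓ.1.1 := Nat.le_mul_of_pos_left _ h1
          _ ≤ msetDegree x := apply_mul_le_degree x ℓ
          _ = n := hd
      rw [← Finsupp.sum_of_support_subset x hsub (fun _ k => k) (fun _ _ => rfl)]
      exact hs
    calc (∑ x ∈ Sf c_d n m, ∑ q ∈ F ×ˢ Finset.Icc 1 m,
            if (x, q).2.2 ≤ (x, q).1 (x, q).2.1 then (1 : ℕ) else 0)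
        = ∑ x ∈ Sf c_d n m, (m : ℕ) := Finset.sum_congr rfl (fun x hx => key x hx)
      _ = (Sf c_d n m).card * m := by rw [Finset.sum_const, smul_eq_mul]
      _ = m * partCount₂ c_d n m := by rw [card_Sf, mul_comm]
  -- Step 2 : T.card = RHS
  have h2 : T.card =
      ∑ p ∈ (Finset.Icc 1 n ×ˢ Finset.Icc 1 m).filter
          (fun p : ℕ × ℕ => p.2 * p.1 ≤ n),
        c_d p.1 * partCount₂ c_d (n - p.2 * p.1) (m - p.2) := by
    have hmaps : ∀ q ∈ T, ((fun q : (Letter c_d →₀ ℕ) × Letter c_d × ℕ =>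
        (q.2.1.1.1, q.2.2)) q) ∈ (Finset.Icc 1 n ×ˢ Finset.Icc 1 m).filter
          (fun p : ℕ × ℕ => p.2 * p.1 ≤ n) := by
      intro q hq
      rw [hmemT] at hq
      obtain ⟨⟨hd, hs⟩, hℓF, hk1, hkm, hkx⟩ := hq
      have hi1 : 1 ≤ q.2.1.1.1 := q.2.1.1.2
      have hkin : q.2.2 * q.2.1.1.1 ≤ n := by
        calc q.2.2 * q.2.1.1.1 ≤ q.1 q.2.1 * q.2.1.1.1 := Nat.mul_le_mul_right _ hkx
          _ ≤ msetDegree q.1 := apply_mul_le_degree _ _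
          _ = n := hd
      have hin : q.2.1.1.1 ≤ n := le_trans (Nat.le_mul_of_pos_left _ hk1) hkin
      simp only [Finset.mem_filter, Finset.mem_product, Finset.mem_Icc]
      exact ⟨⟨⟨hi1, hin⟩, hk1, hkm⟩, hkin⟩
    rw [Finset.card_eq_sum_card_fiberwise hmaps]
    refine Finset.sum_congr rfl ?_
    rintro ⟨i, k⟩ hp
    simp only [Finset.mem_filter, Finset.mem_product, Finset.mem_Icc] at hp
    obtain ⟨⟨⟨hi1, hin⟩, hk1, hkm⟩, hkin⟩ := hp
    have hi0 : 0 < i := hi1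
    set Fi : Finset (Letter c_d) := F.filter (fun ℓ => ℓ.1.1 = i) with hFidef
    have hFi : Fi.card = c_d i := by
      have : Fi.card = (Finset.univ : Finset (Fin (c_d i))).card := by
        refine Finset.card_bij' (fun ℓ hℓ => (⟨ℓ.2.1, ?_⟩ : Fin (c_d i)))
          (fun j _ => (⟨⟨i, hi0⟩, j⟩ : Letter c_d)) ?_ ?_ ?_ ?_
        · have := (Finset.mem_filter.mp hℓ).2
          simpa [this] using ℓ.2.2
        · intro a ha; exact Finset.mem_univ _
        · intro j _
          refine Finset.mem_filter.mpr ⟨(hmemF _).mpr ?_, rfl⟩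
          exact hin
        · rintro ⟨⟨i', hi'⟩, j'⟩ hℓ
          have h2 : i' = i := (Finset.mem_filter.mp hℓ).2
          subst h2
          rfl
        · intro j _; rfl
      rw [this, Finset.card_univ, Fintype.card_fin]
    have hfiber : (T.filter fun q => (q.2.1.1.1, q.2.2) = (i, k)).card
        = (Fi ×ˢ Sf c_d (n - k * i) (m - k)).card := by
      refine Finset.card_nbij' (fun q => (q.2.1, q.1 - Finsupp.single q.2.1 k))
        (fun r => (r.2 + Finsupp.single r.1 k, r.1, k)) ?_ ?_ ?_ ?_
      · rintro ⟨x, ℓ, k'⟩ hq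
        change (x, ℓ, k') ∈ T.filter (fun q => (q.2.1.1.1, q.2.2) = (i, k)) at hq
        simp only [Finset.mem_filter, Prod.mk.injEq] at hq
        obtain ⟨hqT, hik, hkk⟩ := hq
        subst hkk
        rw [hmemT] at hqT
        obtain ⟨⟨hd, hs⟩, hℓF, hk1', hkm', hkx⟩ := hqT
        have hle : Finsupp.single ℓ k' ≤ x := Finsupp.single_le_iff.mpr hkx
        have hcan : x - Finsupp.single ℓ k' + Finsupp.single ℓ k' = x :=
          tsub_add_cancel_of_le hle
        have hdeg : msetDegree (x - Finsupp.single ℓ k') = n - k' * i := by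
          have h := congrArg msetDegree hcan
          rw [msetDegree_add, msetDegree_single, hik, hd] at h
          omega
        have hsize : msetSize (x - Finsupp.single ℓ k') = m - k' := by
          have h := congrArg msetSize hcan
          rw [msetSize_add, msetSize_single, hs] at h
          omega
        exact Finset.mem_product.mpr ⟨Finset.mem_filter.mpr ⟨hℓF, hik⟩,
          mem_Sf.mpr ⟨hdeg, hsize⟩⟩
      · rintro ⟨ℓ, y⟩ hr
        change (ℓ, y) ∈ Fi ×ˢ Sf c_d (n - k * i) (m - k) at hr
        simp only [hFidef, Finset.mem_product, Finset.mem_filter] at hr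
        obtain ⟨⟨hℓF, hik⟩, hy⟩ := hr
        obtain ⟨hyd, hys⟩ := mem_Sf.mp hy
        have hxd : msetDegree (y + Finsupp.single ℓ k) = n := by
          rw [msetDegree_add, msetDegree_single, hyd, hik]; omega
        have hxs : msetSize (y + Finsupp.single ℓ k) = m := by
          rw [msetSize_add, msetSize_single, hys]; omega
        have hxk : k ≤ (y + Finsupp.single ℓ k) ℓ := by
          simp [Finsupp.add_apply, Finsupp.single_eq_same]
        refine Finset.mem_filter.mpr ⟨(hmemT _).mpr ⟨⟨hxd, hxs⟩, hℓF, hk1, hkm, hxk⟩, ?_⟩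
        simp [hik]
      · rintro ⟨x, ℓ, k'⟩ hq
        change (x, ℓ, k') ∈ T.filter (fun q => (q.2.1.1.1, q.2.2) = (i, k)) at hq
        simp only [Finset.mem_filter, Prod.mk.injEq] at hq
        obtain ⟨hqT, hik, hkk⟩ := hq
        subst hkk
        rw [hmemT] at hqT
        have hle : Finsupp.single ℓ k' ≤ x := Finsupp.single_le_iff.mpr hqT.2.2.2.2
        simp [tsub_add_cancel_of_le hle]
      · rintro ⟨ℓ, y⟩ _
        simp
    rw [hfiber, Finset.card_product, hFi, card_Sf]
  rw [← h1, h2]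
end

section
/- For a real γ ≥ 0 and integers n ≥ 0, k ≥ 1, p ≥ 0, q ≥ 0, define S(n,k,γ,p,q) := Σ_{i=1}^{⌊n/k⌋} (n − ik + γ)^p · i^q. Then S(n,k,γ,p,q) ≤ β(q,p,k,γ) · (n+γ)^{p+q+1} / ((p+1)(p+2)⋯(p+q+1)), where β(0,p,k,γ) = 1, β(q,0,k,γ) = q!·2^{q+1}, and β(q,p,k,γ) = q!/k^{q+1} + (p^p q^q (p+q+1)) / (k^q (1+γ) (p+q)^p) whenever p ≥ 1 and q ≥ 1. -/
open scoped BigOperators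


lemma fact_prod_range (p q : ℕ) :
    q.factorial * ∏ j ∈ Finset.range (p + 1), (q + 1 + j) = (p + q + 1).factorial := by
  induction p with
  | zero => simp [Nat.factorial_succ, Nat.mul_comm]
  | succ p ih =>
      rw [Finset.prod_range_succ, ← Nat.mul_assoc, ih]
      have e : p + 1 + q + 1 = (p + q + 1) + 1 := by ring
      rw [e, Nat.factorial_succ (p + q + 1)]
      ring

lemma real_beta (p q : ℕ) {A : ℝ} (hA : 0 < A) :
    ∫ x in (0:ℝ)..A, x ^ q * (A - x) ^ p
      = q.factorial * p.factorial / (p + q + 1).factorial * A ^ (p + q + 1) := by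
  have h := Complex.betaIntegral_scaled ((q : ℂ) + 1) ((p : ℂ) + 1) hA
  rw [Complex.betaIntegral_eval_nat_add_one_right (by simp; positivity) p] at h
  simp only [add_sub_cancel_right] at h
  have hint : ∫ x in (0:ℝ)..A, (x : ℂ) ^ ((q : ℂ)) * ((A : ℂ) - x) ^ ((p : ℂ))
      = ((∫ x in (0:ℝ)..A, x ^ q * (A - x) ^ p : ℝ) : ℂ) := by
    rw [← intervalIntegral.integral_ofReal]
    congr 1
    ext x
    push_cast
    rw [Complex.cpow_natCast, Complex.cpow_natCast]
  rw [hint] at h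
  have hprod : ∏ j ∈ Finset.range (p + 1), ((q : ℂ) + 1 + j)
      = ((∏ j ∈ Finset.range (p + 1), (q + 1 + j) : ℕ) : ℂ) := by
    push_cast; ring_nf
  rw [hprod] at h
  have hpow : ((A : ℂ)) ^ ((q : ℂ) + 1 + ((p : ℂ) + 1) - 1) = ((A ^ (p + q + 1) : ℝ) : ℂ) := by
    have : (q : ℂ) + 1 + ((p : ℂ) + 1) - 1 = ((p + q + 1 : ℕ) : ℂ) := by push_cast; ring
    rw [this, Complex.cpow_natCast]
    push_cast; ring
  rw [hpow] at h
  have := congrArg Complex.re h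
  rw [← Complex.ofReal_natCast, ← Complex.ofReal_natCast, ← Complex.ofReal_div,
    ← Complex.ofReal_mul, Complex.ofReal_re, Complex.ofReal_re] at this
  rw [this]
  have hq : (q.factorial : ℝ) ≠ 0 := by positivity
  have hfp : ((∏ j ∈ Finset.range (p + 1), (q + 1 + j) : ℕ) : ℝ) ≠ 0 := by
    positivity
  have key : (q.factorial : ℝ) * (∏ j ∈ Finset.range (p + 1), (q + 1 + j) : ℕ)
      = (p + q + 1).factorial := by
    rw [← Nat.cast_mul, fact_prod_range]
  have hprodR : (∏ x ∈ Finset.range (p + 1), ((q : ℝ) + 1 + x))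
      = ((∏ j ∈ Finset.range (p + 1), (q + 1 + j) : ℕ) : ℝ) := by
    push_cast; ring
  field_simp
  rw [← key]
  ring



lemma fact_prod_Icc (p q : ℕ) :
    p.factorial * ∏ j ∈ Finset.Icc 1 (q + 1), (p + j) = (p + q + 1).factorial := by
  induction q with
  | zero => simp [Nat.factorial_succ, Nat.mul_comm]
  | succ q ih =>
      rw [Finset.prod_Icc_succ_top (by omega : 1 ≤ q + 1 + 1), ← Nat.mul_assoc, ih]
      have e : p + (q + 1) + 1 = (p + q + 1) + 1 := by ring
      rw [e, Nat.factorial_succ (p + q + 1)]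
      ring

-- geometric ≤ arithmetic convex combination helper
lemma rpow_pow_comb {a b : ℝ} (ha : 0 ≤ a) (hb : 0 ≤ b) {s t x : ℝ} (hs : 0 ≤ s) (ht : 0 ≤ t)
    (hst : s + t = 1) (hx : s * a + t * b = x) (m : ℕ) :
    (a ^ m : ℝ) ^ s * (b ^ m : ℝ) ^ t ≤ x ^ m := by
  have hgm : a ^ s * b ^ t ≤ x := by
    rw [← hx]
    exact Real.geom_mean_le_arith_mean2_weighted hs ht ha hb hst
  have h1 : (a ^ m : ℝ) ^ s = (a ^ s) ^ m := by
    rw [← Real.rpow_natCast a m, ← Real.rpow_mul ha, mul_comm,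
      Real.rpow_mul ha, Real.rpow_natCast]
  have h2 : (b ^ m : ℝ) ^ t = (b ^ t) ^ m := by
    rw [← Real.rpow_natCast b m, ← Real.rpow_mul hb, mul_comm,
      Real.rpow_mul hb, Real.rpow_natCast]
  rw [h1, h2, ← mul_pow]
  exact pow_le_pow_left₀ (by positivity) hgm m

/-- quasiconcavity of `x ^ q * (A - K x) ^ p` on `[0, A/K]`. -/
lemma qc (p q : ℕ) {A K a b x : ℝ} (hK : 0 ≤ K) (ha : 0 ≤ a) (hax : a ≤ x) (hxb : x ≤ b)
    (hbA : K * b ≤ A) :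
    min (a ^ q * (A - K * a) ^ p) (b ^ q * (A - K * b) ^ p) ≤ x ^ q * (A - K * x) ^ p := by
  have hx0 : 0 ≤ x := le_trans ha hax
  have hb0 : 0 ≤ b := le_trans hx0 hxb
  have hvb : 0 ≤ A - K * b := by linarith
  have hvx : 0 ≤ A - K * x := by nlinarith
  have hva : 0 ≤ A - K * a := by nlinarith
  rcases eq_or_lt_of_le (le_trans hax hxb) with hab | hab
  · have : a = x := le_antisymm hax (by rw [hab]; exact hxb)
    rw [← this]
    exact min_le_left _ _
  set M := min (a ^ q * (A - K * a) ^ p) (b ^ q * (A - K * b) ^ p) with hM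
  have hM0 : 0 ≤ M := le_min (mul_nonneg (pow_nonneg ha q) (pow_nonneg hva p))
    (mul_nonneg (pow_nonneg hb0 q) (pow_nonneg hvb p))
  rcases eq_or_lt_of_le hM0 with hM0' | hM0'
  · rw [← hM0']
    exact mul_nonneg (pow_nonneg hx0 q) (pow_nonneg hvx p)
  set t : ℝ := (x - a) / (b - a) with htdef
  have hba : 0 < b - a := by linarith
  have ht : 0 ≤ t := div_nonneg (by linarith) hba.le
  have ht1 : t ≤ 1 := by rw [htdef, div_le_one hba]; linarith
  have hst : (1 - t) + t = 1 := by ring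
  have hxcomb : (1 - t) * a + t * b = x := by
    rw [htdef]; field_simp; ring
  have hvcomb : (1 - t) * (A - K * a) + t * (A - K * b) = A - K * x := by
    rw [htdef]; field_simp; ring
  have h1 : (a ^ q : ℝ) ^ (1 - t) * (b ^ q : ℝ) ^ t ≤ x ^ q :=
    rpow_pow_comb ha hb0 (by linarith) ht hst hxcomb q
  have h2 : ((A - K * a) ^ p : ℝ) ^ (1 - t) * ((A - K * b) ^ p : ℝ) ^ t ≤ (A - K * x) ^ p :=
    rpow_pow_comb hva hvb (by linarith) ht hst hvcomb p
  have hMle : M ≤ (a ^ q * (A - K * a) ^ p) ^ (1 - t) * (b ^ q * (A - K * b) ^ p) ^ t := by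
    calc M = M ^ (1 - t) * M ^ t := by
            rw [← Real.rpow_add hM0', hst, Real.rpow_one]
      _ ≤ _ := by
            apply mul_le_mul (Real.rpow_le_rpow hM0 (min_le_left _ _) (by linarith))
              (Real.rpow_le_rpow hM0 (min_le_right _ _) ht) (by positivity) (by positivity)
  refine le_trans hMle ?_
  rw [Real.mul_rpow (by positivity) (by positivity), Real.mul_rpow (by positivity) (by positivity)]
  calc (a ^ q) ^ (1-t) * ((A - K * a) ^ p) ^ (1-t) * ((b ^ q) ^ t * ((A - K * b) ^ p) ^ t)
      = ((a ^ q) ^ (1-t) * (b ^ q) ^ t) * (((A - K * a) ^ p) ^ (1-t) * ((A - K * b) ^ p) ^ t) := by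
        ring
    _ ≤ x ^ q * (A - K * x) ^ p := by
        apply mul_le_mul h1 h2 (by positivity) (by positivity)

/-- AM-GM maximum bound for `x ^ q * (A - K x) ^ p`. -/
lemma maxpt (p q : ℕ) (hp : 1 ≤ p) (hq : 1 ≤ q) {A K x : ℝ} (hx : 0 ≤ x) (hK : 0 < K)
    (hxA : K * x ≤ A) :
    x ^ q * (A - K * x) ^ p
      ≤ (p : ℝ) ^ p * (q : ℝ) ^ q * A ^ (p + q) / (K ^ q * ((p : ℝ) + q) ^ (p + q)) := by
  have hA : 0 ≤ A := le_trans (by positivity) hxA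
  have hN : (0:ℝ) < (p : ℝ) + q := by positivity
  set u : ℝ := K * x with hu
  set v : ℝ := A - K * x with hv
  have hu0 : 0 ≤ u := by positivity
  have hv0 : 0 ≤ v := by linarith
  set w1 : ℝ := (q : ℝ) / ((p : ℝ) + q) with hw1
  set w2 : ℝ := (p : ℝ) / ((p : ℝ) + q) with hw2
  have hw10 : 0 < w1 := by positivity
  have hw20 : 0 < w2 := by positivity
  have hgm : (u / w1) ^ w1 * (v / w2) ^ w2 ≤ A :=
    calc (u / w1) ^ w1 * (v / w2) ^ w2
        ≤ w1 * (u / w1) + w2 * (v / w2) :=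
          Real.geom_mean_le_arith_mean2_weighted hw10.le hw20.le (by positivity) (by positivity)
            (by rw [hw1, hw2]; field_simp; ring)
      _ = u + v := by field_simp
      _ = A := by rw [hu, hv]; ring
  have hpow : ((u / w1) ^ w1 * (v / w2) ^ w2) ^ (p + q) ≤ A ^ (p + q) :=
    pow_le_pow_left₀ (by positivity) hgm _
  have hexp1 : ((u / w1) ^ w1) ^ (p + q) = (u / w1) ^ q := by
    rw [← Real.rpow_natCast ((u / w1) ^ w1) (p + q), ← Real.rpow_mul (by positivity)]
    have e : w1 * ((p + q : ℕ) : ℝ) = ((q : ℕ) : ℝ) := by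
      rw [hw1]; push_cast; field_simp
    rw [e, Real.rpow_natCast]
  have hexp2 : ((v / w2) ^ w2) ^ (p + q) = (v / w2) ^ p := by
    rw [← Real.rpow_natCast ((v / w2) ^ w2) (p + q), ← Real.rpow_mul (by positivity)]
    have e : w2 * ((p + q : ℕ) : ℝ) = ((p : ℕ) : ℝ) := by
      rw [hw2]; push_cast; field_simp
    rw [e, Real.rpow_natCast]
  rw [mul_pow, hexp1, hexp2] at hpow
  rw [le_div_iff₀ (by positivity)]
  have h3 : (u / w1) ^ q * (v / w2) ^ p * ((q:ℝ) ^ q * (p:ℝ) ^ p)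
      ≤ A ^ (p + q) * ((q:ℝ) ^ q * (p:ℝ) ^ p) :=
    mul_le_mul_of_nonneg_right hpow (by positivity)
  have hqne : ((q:ℝ)) ≠ 0 := by positivity
  have hpne : ((p:ℝ)) ≠ 0 := by positivity
  have e1 : (u / w1) ^ q = u ^ q * ((p:ℝ) + q) ^ q / (q:ℝ) ^ q := by
    rw [hw1, div_div_eq_mul_div, div_pow, mul_pow]
  have e2 : (v / w2) ^ p = v ^ p * ((p:ℝ) + q) ^ p / (p:ℝ) ^ p := by
    rw [hw2, div_div_eq_mul_div, div_pow, mul_pow]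
  calc x ^ q * (A - K * x) ^ p * (K ^ q * ((p:ℝ) + q) ^ (p + q))
      = (u / w1) ^ q * (v / w2) ^ p * ((q:ℝ) ^ q * (p:ℝ) ^ p) := by
        rw [e1, e2, hu, pow_add ((p:ℝ) + q)]
        field_simp
        ring
    _ ≤ A ^ (p + q) * ((q:ℝ) ^ q * (p:ℝ) ^ p) := h3
    _ = (p : ℝ) ^ p * (q : ℝ) ^ q * A ^ (p + q) := by ring

lemma pow_tele (p : ℕ) {x y : ℝ} (hx : 0 ≤ x) (hxy : x ≤ y) :
    ((p : ℝ) + 1) * x ^ p * (y - x) ≤ y ^ (p + 1) - x ^ (p + 1) := by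
  rw [← geom_sum₂_mul y x (p + 1)]
  apply mul_le_mul_of_nonneg_right ?_ (by linarith)
  have key : ∀ i ∈ Finset.range (p + 1), x ^ p ≤ y ^ i * x ^ (p + 1 - 1 - i) := by
    intro i hi
    have hi' : i ≤ p := by
      have := Finset.mem_range.mp hi; omega
    have e : p + 1 - 1 - i = p - i := by omega
    rw [e]
    calc x ^ p = x ^ i * x ^ (p - i) := by rw [← pow_add]; congr 1; omega
      _ ≤ y ^ i * x ^ (p - i) :=
          mul_le_mul_of_nonneg_right (pow_le_pow_left₀ hx hxy i) (pow_nonneg hx _)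
  calc ((p : ℝ) + 1) * x ^ p = ∑ _i ∈ Finset.range (p + 1), x ^ p := by
        rw [Finset.sum_const, Finset.card_range, nsmul_eq_mul]; push_cast; ring
    _ ≤ _ := Finset.sum_le_sum key


lemma fact_prod_Icc_real (p q : ℕ) :
    (p.factorial : ℝ) * ∏ j ∈ Finset.Icc 1 (q + 1), ((p:ℝ) + (j:ℕ))
      = ((p + q + 1).factorial : ℝ) := by
  rw [← fact_prod_Icc p q]
  push_cast
  ring

/-- `S(n,k,γ,p,q) = ∑_{i=1}^{⌊n/k⌋} (n − ik + γ)^p i^q`. -/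
noncomputable def Ssum (n k : ℕ) (γ : ℝ) (p q : ℕ) : ℝ :=
  ∑ i ∈ Finset.Icc 1 (n / k), ((n : ℝ) - i * k + γ) ^ p * (i : ℝ) ^ q

/-- The prefactor `β(q,p,k,γ)`. -/
noncomputable def betaPrefactor (q p k : ℕ) (γ : ℝ) : ℝ :=
  if q = 0 then 1
  else if p = 0 then (q.factorial : ℝ) * 2 ^ (q + 1)
  else (q.factorial : ℝ) / k ^ (q + 1) +
    (p : ℝ) ^ p * (q : ℝ) ^ q * ((p : ℝ) + q + 1) /
      ((k : ℝ) ^ q * (1 + γ) * ((p : ℝ) + q) ^ p)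

/-- `S(n,k,γ,p,q) ≤ β(q,p,k,γ) (n+γ)^{p+q+1} / ((p+1)⋯(p+q+1))`. -/
theorem Ssum_le (n k p q : ℕ) (hk : 1 ≤ k) (γ : ℝ) (hγ : 0 ≤ γ) :
    Ssum n k γ p q
      ≤ betaPrefactor q p k γ * ((n : ℝ) + γ) ^ (p + q + 1) /
          ∏ j ∈ Finset.Icc 1 (q + 1), ((p : ℝ) + j) := by
  have hK0 : (0:ℝ) < (k:ℝ) := by exact_mod_cast Nat.lt_of_lt_of_le Nat.zero_lt_one hk
  have hD0 : (0:ℝ) < ∏ j ∈ Finset.Icc 1 (q + 1), ((p : ℝ) + j) := by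
    apply Finset.prod_pos
    intro j hj
    have h1 : 1 ≤ j := (Finset.mem_Icc.mp hj).1
    have : (1:ℝ) ≤ (j:ℝ) := by exact_mod_cast h1
    positivity
  have hA0 : (0:ℝ) ≤ (n:ℝ) + γ := by positivity
  have hik : ∀ i : ℕ, i ≤ n / k → (i:ℝ) * k ≤ (n:ℝ) := by
    intro i hi
    have h : i * k ≤ n := (Nat.le_div_iff_mul_le (by omega)).mp hi
    exact_mod_cast h
  rcases Nat.eq_zero_or_pos q with hq0 | hq0
  · -- q = 0 case : telescoping
    subst hq0
    rw [Ssum]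
    simp only [betaPrefactor, if_pos rfl]
    set m := n / k with hm
    have hDval : ∏ j ∈ Finset.Icc 1 (0 + 1 : ℕ), ((p : ℝ) + j) = (p : ℝ) + 1 := by
      norm_num
    rw [hDval]
    set b : ℕ → ℝ := fun i => ((n:ℝ) - i * k + γ) ^ (p + 1) with hb
    have hsum : (∑ i ∈ Finset.Icc 1 m, ((n : ℝ) - i * k + γ) ^ p * (i : ℝ) ^ 0)
        = ∑ i ∈ Finset.range m, ((n : ℝ) - (1 + i : ℕ) * k + γ) ^ p := by
      rw [← Finset.Ico_add_one_right_eq_Icc, Finset.sum_Ico_eq_sum_range]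
      simp
    have hstep : ∀ i ∈ Finset.range m,
        ((p:ℝ) + 1) * ((n : ℝ) - (1 + i : ℕ) * k + γ) ^ p ≤ b i - b (i + 1) := by
      intro i hi
      have him : i + 1 ≤ m := Finset.mem_range.mp hi
      have h1 : ((i:ℝ) + 1) * k ≤ (n:ℝ) := by
        have := hik (i + 1) him
        push_cast at this
        linarith
      have hx0 : (0:ℝ) ≤ (n:ℝ) - ((i:ℝ) + 1) * k + γ := by linarith
      have hxy : (n:ℝ) - ((i:ℝ) + 1) * k + γ ≤ (n:ℝ) - (i:ℝ) * k + γ := by nlinarith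
      have ht := pow_tele p hx0 hxy
      have hyx : ((n:ℝ) - (i:ℝ) * k + γ) - ((n:ℝ) - ((i:ℝ) + 1) * k + γ) = (k:ℝ) := by ring
      rw [hyx] at ht
      have hone : ((p:ℝ) + 1) * ((n : ℝ) - ((i:ℝ) + 1) * k + γ) ^ p * 1
          ≤ ((p:ℝ) + 1) * ((n : ℝ) - ((i:ℝ) + 1) * k + γ) ^ p * k := by
        apply mul_le_mul_of_nonneg_left _ (by positivity)
        · exact_mod_cast hk
      have hcast : ((1 + i : ℕ) : ℝ) = (i:ℝ) + 1 := by push_cast; ring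
      rw [hb]
      push_cast
      calc ((p:ℝ) + 1) * ((n : ℝ) - (1 + (i:ℝ)) * k + γ) ^ p
          = ((p:ℝ) + 1) * ((n : ℝ) - ((i:ℝ) + 1) * k + γ) ^ p * 1 := by ring_nf
        _ ≤ ((p:ℝ) + 1) * ((n : ℝ) - ((i:ℝ) + 1) * k + γ) ^ p * k := hone
        _ ≤ ((n:ℝ) - (i:ℝ) * k + γ) ^ (p+1) - ((n:ℝ) - ((i:ℝ) + 1) * k + γ) ^ (p+1) := ht
        _ = ((n:ℝ) - (i:ℝ) * k + γ) ^ (p+1) - ((n:ℝ) - ((i:ℝ) + 1) * k + γ) ^ (p+1) := rfl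
    have htel : ∑ i ∈ Finset.range m, (b i - b (i + 1)) = b 0 - b m :=
      Finset.sum_range_sub' b m
    have hsum2 : ((p:ℝ) + 1) * ∑ i ∈ Finset.range m, ((n : ℝ) - (1 + i : ℕ) * k + γ) ^ p
        ≤ b 0 - b m := by
      rw [Finset.mul_sum]
      rw [← htel]
      exact Finset.sum_le_sum hstep
    have hbm : 0 ≤ b m := by
      rw [hb]
      have := hik m le_rfl
      have : (0:ℝ) ≤ (n:ℝ) - m * k + γ := by linarith
      positivity
    have hb0 : b 0 = ((n:ℝ) + γ) ^ (p + 1) := by rw [hb]; norm_num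
    rw [hsum]
    rw [le_div_iff₀ (by positivity : (0:ℝ) < (p:ℝ) + 1)]
    have := hsum2
    rw [hb0] at hsum2
    calc (∑ i ∈ Finset.range m, ((n : ℝ) - (1 + i : ℕ) * k + γ) ^ p) * ((p:ℝ) + 1)
        = ((p:ℝ) + 1) * ∑ i ∈ Finset.range m, ((n : ℝ) - (1 + i : ℕ) * k + γ) ^ p := by ring
      _ ≤ ((n:ℝ) + γ) ^ (p + 1) - b m := hsum2
      _ ≤ ((n:ℝ) + γ) ^ (p + 1) := by linarith
      _ = 1 * ((n : ℝ) + γ) ^ (p + 0 + 1) := by norm_num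
  rcases Nat.eq_zero_or_pos p with hp0 | hp0
  · -- p = 0 case : crude bound
    subst hp0
    rw [Ssum]
    simp only [betaPrefactor, if_neg hq0.ne', Nat.cast_zero, if_true]
    simp only [Nat.cast_zero] at hD0
    set m := n / k with hm
    have h1 : (∑ i ∈ Finset.Icc 1 m, ((n : ℝ) - i * k + γ) ^ 0 * (i : ℝ) ^ q)
        ≤ ∑ _i ∈ Finset.Icc 1 m, ((m:ℝ)) ^ q := by
      apply Finset.sum_le_sum
      intro i hi
      have him : i ≤ m := (Finset.mem_Icc.mp hi).2
      have : (i:ℝ) ≤ (m:ℝ) := by exact_mod_cast him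
      simpa using pow_le_pow_left₀ (by positivity) this q
    have h2 : ∑ _i ∈ Finset.Icc 1 m, ((m:ℝ)) ^ q = (m:ℝ) ^ (q + 1) := by
      rw [Finset.sum_const, Nat.card_Icc]
      simp [pow_succ, mul_comm]
    have h3 : ((m:ℝ)) ^ (q + 1) ≤ ((n:ℝ) + γ) ^ (q + 1) := by
      apply pow_le_pow_left₀ (by positivity)
      have : (m:ℝ) ≤ (n:ℝ) := by exact_mod_cast Nat.div_le_self n k
      linarith
    have hDval : ∏ j ∈ Finset.Icc 1 (q + 1), ((0:ℝ) + (j:ℕ)) = ((q+1).factorial : ℝ) := by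
      have := fact_prod_Icc_real 0 q
      simpa using this
    rw [hDval, le_div_iff₀ (by rw [← hDval]; exact hD0)]
    have h4 : ((q:ℝ) + 1) ≤ 2 ^ (q + 1) := by
      exact_mod_cast (Nat.lt_two_pow_self (n := q + 1)).le
    have h5 : ((q+1).factorial : ℝ) = ((q:ℝ) + 1) * q.factorial := by
      rw [Nat.factorial_succ]; push_cast; ring
    have h6 : (0:ℝ) ≤ ((n:ℝ) + γ) ^ (q + 1) := by positivity
    have h7 : (0:ℝ) < (q.factorial : ℝ) := by exact_mod_cast q.factorial_pos
    calc (∑ i ∈ Finset.Icc 1 m, ((n : ℝ) - i * k + γ) ^ 0 * (i : ℝ) ^ q) * ((q+1).factorial : ℝ)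
        ≤ ((n:ℝ) + γ) ^ (q + 1) * ((q+1).factorial : ℝ) := by
          apply mul_le_mul_of_nonneg_right _ (by positivity)
          exact le_trans h1 (le_trans (le_of_eq h2) h3)
      _ = ((q:ℝ) + 1) * (q.factorial : ℝ) * ((n:ℝ) + γ) ^ (q + 1) := by rw [h5]; ring
      _ ≤ 2 ^ (q + 1) * (q.factorial : ℝ) * ((n:ℝ) + γ) ^ (q + 1) := by
          apply mul_le_mul_of_nonneg_right _ h6
          apply mul_le_mul_of_nonneg_right h4 h7.le
      _ = (q.factorial : ℝ) * 2 ^ (q + 1) * ((n : ℝ) + γ) ^ (0 + q + 1) := by ring_nf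
  -- main case
  rw [Ssum]
  simp only [betaPrefactor, if_neg hq0.ne', if_neg hp0.ne']
  set m := n / k with hm
  set A : ℝ := (n:ℝ) + γ with hAdef
  set K : ℝ := (k:ℝ) with hKdef
  set D : ℝ := ∏ j ∈ Finset.Icc 1 (q + 1), ((p : ℝ) + (j:ℕ)) with hDdef
  rcases Nat.eq_zero_or_pos m with hm0 | hm1
  · -- empty sum
    rw [hm0]
    rw [show Finset.Icc 1 0 = (∅ : Finset ℕ) from rfl, Finset.sum_empty]
    apply div_nonneg _ hD0.le
    apply mul_nonneg _ (pow_nonneg hA0 _)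
    apply add_nonneg
    · exact div_nonneg (Nat.cast_nonneg _) (pow_pos hK0 (q+1)).le
    · apply div_nonneg (by positivity)
      exact mul_nonneg (mul_nonneg (pow_pos hK0 q).le (by linarith))
        (pow_nonneg (by positivity) p)
  -- now m ≥ 1 so k ≤ n
  have hkn : k ≤ n := (Nat.one_le_div_iff (by omega)).mp hm1
  have hn1 : (1:ℝ) ≤ (n:ℝ) := by exact_mod_cast le_trans hk hkn
  have hA1 : 1 + γ ≤ A := by rw [hAdef]; linarith
  have hApos : (0:ℝ) < A := by linarith
  set f : ℝ → ℝ := fun x => x ^ q * (A - K * x) ^ p with hf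
  have hfc : Continuous f := by rw [hf]; fun_prop
  have hii : ∀ a b : ℝ, IntervalIntegrable f MeasureTheory.volume a b := fun a b =>
    hfc.intervalIntegrable a b
  have hKi : ∀ i : ℕ, i ≤ m → K * (i:ℝ) ≤ A := by
    intro i hi
    have := hik i hi
    rw [hKdef, hAdef, mul_comm]
    linarith
  have hqcf : ∀ a b x : ℝ, 0 ≤ a → a ≤ x → x ≤ b → K * b ≤ A →
      min (f a) (f b) ≤ f x := by
    intro a b x h1 h2 h3 h4
    exact qc p q hK0.le h1 h2 h3 h4
  -- rewrite the sum in terms of f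
  have hSf : (∑ i ∈ Finset.Icc 1 m, ((n : ℝ) - i * k + γ) ^ p * (i : ℝ) ^ q)
      = ∑ i ∈ Finset.range m, f (((1 + i : ℕ) : ℝ)) := by
    rw [← Finset.Ico_add_one_right_eq_Icc, Finset.sum_Ico_eq_sum_range]
    rw [Nat.add_one_sub_one]
    apply Finset.sum_congr rfl
    intro i _
    rw [hf]
    push_cast
    ring
  -- the argmax over the integer grid
  obtain ⟨j, hjmem, hjmax⟩ := Finset.exists_max_image (Finset.Icc 1 m)
    (fun i : ℕ => f i) ⟨1, Finset.mem_Icc.mpr ⟨le_rfl, hm1⟩⟩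
  have hj1 : 1 ≤ j := (Finset.mem_Icc.mp hjmem).1
  have hjm : j ≤ m := (Finset.mem_Icc.mp hjmem).2
  -- step bounds
  have hconst : ∀ c : ℕ, (∫ _x in ((c:ℕ):ℝ)..(((c+1:ℕ)):ℝ), f ((c:ℕ):ℝ)) = f c := by
    intro c
    rw [intervalIntegral.integral_const]
    push_cast
    simp
  have hup : ∀ c : ℕ, 1 ≤ c → c + 1 ≤ j → f ((c:ℕ):ℝ) ≤ ∫ x in ((c:ℕ):ℝ)..(((c+1:ℕ)):ℝ), f x := by
    intro c hc1 hcj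
    have hcm : c + 1 ≤ m := le_trans hcj hjm
    have hfcj : f ((c:ℕ):ℝ) ≤ f ((j:ℕ):ℝ) := hjmax c (Finset.mem_Icc.mpr ⟨hc1, by omega⟩)
    have hstep : f ((c:ℕ):ℝ) ≤ f (((c+1:ℕ)):ℝ) := by
      have h := hqcf ((c:ℕ):ℝ) ((j:ℕ):ℝ) (((c+1:ℕ)):ℝ) (by positivity)
        (by push_cast; linarith) (by exact_mod_cast hcj) (hKi j hjm)
      rw [min_eq_left hfcj] at h
      exact h
    have hlow : ∀ x ∈ Set.Icc ((c:ℕ):ℝ) (((c+1:ℕ)):ℝ), f ((c:ℕ):ℝ) ≤ f x := by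
      intro x hx
      have h := hqcf ((c:ℕ):ℝ) (((c+1:ℕ)):ℝ) x (by positivity) hx.1 hx.2
        (hKi (c+1) hcm)
      rw [min_eq_left hstep] at h
      exact h
    calc f ((c:ℕ):ℝ) = ∫ _x in ((c:ℕ):ℝ)..(((c+1:ℕ)):ℝ), f ((c:ℕ):ℝ) := (hconst c).symm
      _ ≤ ∫ x in ((c:ℕ):ℝ)..(((c+1:ℕ)):ℝ), f x := by
          apply intervalIntegral.integral_mono_on (by push_cast; linarith)
            intervalIntegrable_const (hii _ _) hlow
  have hdown : ∀ d : ℕ, j ≤ d → d + 1 ≤ m →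
      f (((d+1:ℕ)):ℝ) ≤ ∫ x in ((d:ℕ):ℝ)..(((d+1:ℕ)):ℝ), f x := by
    intro d hjd hdm
    have hfd1 : f (((d+1:ℕ)):ℝ) ≤ f ((j:ℕ):ℝ) := hjmax (d+1) (Finset.mem_Icc.mpr ⟨by omega, hdm⟩)
    have hstep : f (((d+1:ℕ)):ℝ) ≤ f ((d:ℕ):ℝ) := by
      have h := hqcf ((j:ℕ):ℝ) (((d+1:ℕ)):ℝ) ((d:ℕ):ℝ) (by positivity)
        (by exact_mod_cast hjd) (by push_cast; linarith) (hKi (d+1) hdm)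
      rw [min_eq_right hfd1] at h
      exact h
    have hlow : ∀ x ∈ Set.Icc ((d:ℕ):ℝ) (((d+1:ℕ)):ℝ), f (((d+1:ℕ)):ℝ) ≤ f x := by
      intro x hx
      have h := hqcf ((d:ℕ):ℝ) (((d+1:ℕ)):ℝ) x (by positivity) hx.1 hx.2 (hKi (d+1) hdm)
      rw [min_eq_right hstep] at h
      exact h
    have hcst : (∫ _x in ((d:ℕ):ℝ)..(((d+1:ℕ)):ℝ), f (((d+1:ℕ)):ℝ)) = f ((d+1:ℕ)) := by
      rw [intervalIntegral.integral_const]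
      push_cast
      simp
    calc f (((d+1:ℕ)):ℝ) = ∫ _x in ((d:ℕ):ℝ)..(((d+1:ℕ)):ℝ), f (((d+1:ℕ)):ℝ) := hcst.symm
      _ ≤ ∫ x in ((d:ℕ):ℝ)..(((d+1:ℕ)):ℝ), f x := by
          apply intervalIntegral.integral_mono_on (by push_cast; linarith)
            intervalIntegrable_const (hii _ _) hlow
  -- split the sum at the argmax
  have hsplit : ∑ i ∈ Finset.range m, f (((1 + i : ℕ)):ℝ)
      = (∑ i ∈ Finset.range (j-1), f (((1 + i : ℕ)):ℝ))
        + ∑ i ∈ Finset.Ico (j-1) m, f (((1 + i : ℕ)):ℝ) :=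
    (Finset.sum_range_add_sum_Ico _ (by omega)).symm
  have hsplit2 : ∑ i ∈ Finset.Ico (j-1) m, f (((1 + i : ℕ)):ℝ)
      = (∑ i ∈ Finset.range (m - j), f (((j + (i+1) : ℕ)):ℝ)) + f ((j:ℕ):ℝ) := by
    rw [Finset.sum_Ico_eq_sum_range]
    have e : m - (j - 1) = (m - j) + 1 := by omega
    rw [e, Finset.sum_range_succ']
    congr 1
    · apply Finset.sum_congr rfl
      intro i _
      congr 1
      exact_mod_cast congrArg (Nat.cast (R := ℝ)) (by omega : 1 + (j - 1 + (i + 1)) = j + (i+1))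
    · congr 1
      exact_mod_cast congrArg (Nat.cast (R := ℝ)) (by omega : 1 + (j - 1 + 0) = j)
  have hB1 : ∑ i ∈ Finset.range (j-1), f (((1 + i : ℕ)):ℝ)
      ≤ ∫ x in (1:ℝ)..((j:ℕ):ℝ), f x := by
    have htel := intervalIntegral.sum_integral_adjacent_intervals
      (a := fun i : ℕ => (((1 + i : ℕ)):ℝ)) (n := j - 1) (μ := MeasureTheory.volume) (f := f)
      (fun t _ => hii _ _)
    have hb : ∑ i ∈ Finset.range (j-1), f (((1 + i : ℕ)):ℝ)
        ≤ ∑ i ∈ Finset.range (j-1), ∫ x in (((1 + i : ℕ)):ℝ)..(((1 + (i+1) : ℕ)):ℝ), f x := by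
      apply Finset.sum_le_sum
      intro i hi
      have hij : (1 + i) + 1 ≤ j := by have := Finset.mem_range.mp hi; omega
      exact hup (1+i) (by omega) hij
    refine le_trans hb (le_of_eq ?_)
    rw [htel]
    beta_reduce
    have e0 : (((1 + 0 : ℕ) : ℕ):ℝ) = (1:ℝ) := by norm_num
    have e1 : (((1 + (j-1) : ℕ)):ℝ) = ((j:ℕ):ℝ) :=
      congrArg (Nat.cast (R := ℝ)) (by omega)
    rw [e0, e1]
  have hB2 : ∑ i ∈ Finset.range (m - j), f (((j + (i+1) : ℕ)):ℝ)
      ≤ ∫ x in ((j:ℕ):ℝ)..((m:ℕ):ℝ), f x := by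
    have htel := intervalIntegral.sum_integral_adjacent_intervals
      (a := fun i : ℕ => (((j + i : ℕ)):ℝ)) (n := m - j) (μ := MeasureTheory.volume) (f := f)
      (fun t _ => hii _ _)
    have hb : ∑ i ∈ Finset.range (m - j), f (((j + (i+1) : ℕ)):ℝ)
        ≤ ∑ i ∈ Finset.range (m - j), ∫ x in (((j + i : ℕ)):ℝ)..(((j + (i+1) : ℕ)):ℝ), f x := by
      apply Finset.sum_le_sum
      intro i hi
      have hdm : (j + i) + 1 ≤ m := by have := Finset.mem_range.mp hi; omega
      exact hdown (j + i) (by omega) hdm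
    refine le_trans hb (le_of_eq ?_)
    rw [htel]
    beta_reduce
    have e0 : (((j + 0 : ℕ)):ℝ) = ((j:ℕ):ℝ) := by norm_num
    have e1 : (((j + (m-j) : ℕ)):ℝ) = ((m:ℕ):ℝ) :=
      congrArg (Nat.cast (R := ℝ)) (by omega)
    rw [e0, e1]
  have hjoin : (∫ x in (1:ℝ)..((j:ℕ):ℝ), f x) + ∫ x in ((j:ℕ):ℝ)..((m:ℕ):ℝ), f x
      = ∫ x in (1:ℝ)..((m:ℕ):ℝ), f x :=
    intervalIntegral.integral_add_adjacent_intervals (hii _ _) (hii _ _)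
  -- peak bound
  have hmax : f ((j:ℕ):ℝ)
      ≤ (p : ℝ) ^ p * (q : ℝ) ^ q * A ^ (p + q) / (K ^ q * ((p : ℝ) + q) ^ (p + q)) :=
    maxpt p q hp0 hq0 (by positivity) hK0 (hKi j hjm)
  -- everything so far
  have hS1 : (∑ i ∈ Finset.Icc 1 m, ((n : ℝ) - i * k + γ) ^ p * (i : ℝ) ^ q)
      ≤ (∫ x in (1:ℝ)..((m:ℕ):ℝ), f x)
        + (p : ℝ) ^ p * (q : ℝ) ^ q * A ^ (p + q) / (K ^ q * ((p : ℝ) + q) ^ (p + q)) := by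
    rw [hSf, hsplit, hsplit2, ← hjoin]
    have := add_le_add (add_le_add hB1 hB2) hmax
    linarith
  -- nonnegativity of f on [0, A/K]
  have hfnn : ∀ x : ℝ, 0 ≤ x → K * x ≤ A → 0 ≤ f x := by
    intro x h1 h2
    rw [hf]
    have h3 : 0 ≤ A - K * x := by linarith
    positivity
  have h1M : (1:ℝ) ≤ ((m:ℕ):ℝ) := by exact_mod_cast hm1
  have hmM : ((m:ℕ):ℝ) ≤ A / K := by
    rw [le_div_iff₀ hK0]
    have h := hKi m le_rfl
    linarith [mul_comm K ((m:ℕ):ℝ)]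
  have hext : (∫ x in (1:ℝ)..((m:ℕ):ℝ), f x) ≤ ∫ x in (0:ℝ)..(A/K), f x := by
    have e : ∫ x in (0:ℝ)..(A/K), f x
        = (∫ x in (0:ℝ)..(1:ℝ), f x) + ((∫ x in (1:ℝ)..((m:ℕ):ℝ), f x)
          + ∫ x in ((m:ℕ):ℝ)..(A/K), f x) := by
      rw [intervalIntegral.integral_add_adjacent_intervals (hii _ _) (hii _ _),
        intervalIntegral.integral_add_adjacent_intervals (hii _ _) (hii _ _)]
    have h01 : 0 ≤ ∫ x in (0:ℝ)..(1:ℝ), f x := by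
      apply intervalIntegral.integral_nonneg zero_le_one
      intro u hu
      apply hfnn u hu.1
      have h2 : K * u ≤ K * ((m:ℕ):ℝ) :=
        mul_le_mul_of_nonneg_left (le_trans hu.2 h1M) hK0.le
      linarith [hKi m le_rfl]
    have hm' : 0 ≤ ∫ x in ((m:ℕ):ℝ)..(A/K), f x := by
      apply intervalIntegral.integral_nonneg hmM
      intro u hu
      apply hfnn u (le_trans (by positivity) hu.1)
      rw [mul_comm]
      exact (le_div_iff₀ hK0).mp hu.2
    linarith [e]
  -- value of the full integral
  have hval : (∫ x in (0:ℝ)..(A/K), f x)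
      = (q.factorial : ℝ) * p.factorial / ((p+q+1).factorial) * A ^ (p+q+1) / K ^ (q+1) := by
    have e1 : ∀ x : ℝ, f x = (K ^ q)⁻¹ * ((K*x) ^ q * (A - K*x) ^ p) := by
      intro x
      rw [hf]
      field_simp [mul_pow]
      ring
    calc ∫ x in (0:ℝ)..(A/K), f x
        = ∫ x in (0:ℝ)..(A/K), (K ^ q)⁻¹ * ((K*x) ^ q * (A - K*x) ^ p) := by
          apply intervalIntegral.integral_congr
          intro x _
          exact e1 x
      _ = (K ^ q)⁻¹ * ∫ x in (0:ℝ)..(A/K), (K*x) ^ q * (A - K*x) ^ p := by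
          rw [intervalIntegral.integral_const_mul]
      _ = (K ^ q)⁻¹ * (K⁻¹ * ∫ t in (K*0:ℝ)..(K*(A/K)), t ^ q * (A - t) ^ p) := by
          rw [show (∫ x in (0:ℝ)..(A/K), (K*x) ^ q * (A - K*x) ^ p)
              = K⁻¹ • ∫ t in (K*0:ℝ)..(K*(A/K)), t ^ q * (A - t) ^ p from
            intervalIntegral.integral_comp_mul_left (fun t => t ^ q * (A - t) ^ p) hK0.ne',
            smul_eq_mul]
      _ = (q.factorial : ℝ) * p.factorial / ((p+q+1).factorial) * A ^ (p+q+1) / K ^ (q+1) := by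
          rw [mul_zero, mul_div_cancel₀ _ hK0.ne', real_beta p q hApos, pow_succ]
          field_simp
          ring
  -- final arithmetic
  have hfact : (p.factorial : ℝ) * D = ((p + q + 1).factorial : ℝ) := by
    rw [hDdef]; exact fact_prod_Icc_real p q
  set N : ℝ := (p:ℝ) + q with hN
  have hN0 : (0:ℝ) < N := by rw [hN]; positivity
  have hγ1 : (0:ℝ) < 1 + γ := by linarith
  have hVR1 : (q.factorial : ℝ) * p.factorial / ((p+q+1).factorial) * A ^ (p+q+1) / K ^ (q+1)
      = (q.factorial : ℝ) / K ^ (q + 1) * A ^ (p + q + 1) / D := by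
    rw [← hfact]
    have hp' : (p.factorial : ℝ) ≠ 0 := by positivity
    field_simp
  have hprodle : D ≤ N ^ q * (N + 1) := by
    rw [hDdef, Finset.prod_Icc_succ_top (by omega : 1 ≤ q + 1)]
    have hle1 : ∏ j ∈ Finset.Icc 1 q, ((p:ℝ) + (j:ℕ)) ≤ N ^ q := by
      have h := Finset.prod_le_prod (s := Finset.Icc 1 q)
        (f := fun j : ℕ => ((p:ℝ) + (j:ℕ))) (g := fun _ : ℕ => N)
        (fun j _ => by positivity)
        (fun j hj => by
          have h2 := (Finset.mem_Icc.mp hj).2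
          show (p:ℝ) + (j:ℕ) ≤ N
          rw [hN]
          have h3 : (j:ℝ) ≤ (q:ℝ) := by exact_mod_cast h2
          linarith)
      rw [Finset.prod_const, Nat.card_Icc] at h
      simpa using h
    have hle2 : (p:ℝ) + ((q+1:ℕ):ℝ) ≤ N + 1 := by rw [hN]; push_cast; linarith
    apply mul_le_mul hle1 hle2 (by positivity) (by positivity)
  have hMxR2 : (p : ℝ) ^ p * (q : ℝ) ^ q * A ^ (p + q) / (K ^ q * N ^ (p + q))
      ≤ (p : ℝ) ^ p * (q : ℝ) ^ q * (N + 1) / (K ^ q * (1 + γ) * N ^ p)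
          * A ^ (p + q + 1) / D := by
    rw [div_mul_eq_mul_div, div_div]
    rw [div_le_div_iff₀ (by positivity) (by positivity)]
    have hD0' : (0:ℝ) ≤ D := hD0.le
    calc (p : ℝ) ^ p * (q : ℝ) ^ q * A ^ (p + q) * (K ^ q * (1 + γ) * N ^ p * D)
        = ((p : ℝ) ^ p * (q : ℝ) ^ q * A ^ (p + q) * K ^ q * N ^ p) * ((1 + γ) * D) := by
          ring
      _ ≤ ((p : ℝ) ^ p * (q : ℝ) ^ q * A ^ (p + q) * K ^ q * N ^ p) * (A * (N ^ q * (N + 1))) := by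
          apply mul_le_mul_of_nonneg_left (mul_le_mul hA1 hprodle hD0' hApos.le) (by positivity)
      _ = (p : ℝ) ^ p * (q : ℝ) ^ q * (N + 1) * A ^ (p + q + 1) * (K ^ q * N ^ (p + q)) := by
          rw [pow_add N p q, pow_succ A (p + q)]
          ring
  rw [add_mul, add_div]
  calc (∑ i ∈ Finset.Icc 1 m, ((n : ℝ) - i * k + γ) ^ p * (i : ℝ) ^ q)
      ≤ (∫ x in (1:ℝ)..((m:ℕ):ℝ), f x)
        + (p : ℝ) ^ p * (q : ℝ) ^ q * A ^ (p + q) / (K ^ q * N ^ (p + q)) := hS1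
    _ ≤ ((q.factorial : ℝ) * p.factorial / ((p+q+1).factorial) * A ^ (p+q+1) / K ^ (q+1))
        + (p : ℝ) ^ p * (q : ℝ) ^ q * A ^ (p + q) / (K ^ q * N ^ (p + q)) := by
        apply add_le_add_left (le_of_le_of_eq hext hval)
    _ ≤ (q.factorial : ℝ) / K ^ (q + 1) * A ^ (p + q + 1) / D
        + (p : ℝ) ^ p * (q : ℝ) ^ q * (N + 1) / (K ^ q * (1 + γ) * N ^ p)
          * A ^ (p + q + 1) / D := add_le_add (le_of_eq hVR1) hMxR2
end

section
/- Let d ≥ 1 be an integer and define β(0,p,k,γ) = 1, β(q,0,k,γ) = q!·2^{q+1}, and β(q,p,k,γ) = q!/k^{q+1} + (p^p q^q (p+q+1)) / (k^q (1+γ) (p+q)^p) for integers p, q ≥ 1, k ≥ 1 and real γ ≥ 0. Let α₁ = 1 and, for d ≥ 2, α_d = max{(d−1)!·2^d, (d−1)! + d(d−1)^{d−1}}. Then for all integers m ≥ 1 and 1 ≤ k ≤ m, and any constant c₂ ≥ 1, one has β(d−1, d(m−k), k, c₂(m−k)^{(d+1)/d}) ≤ α_d. -/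
open scoped BigOperators

/-- The constant `α_d`: `α₁ = 1` and, for `d ≥ 2`,
`α_d = max{(d−1)!·2^d, (d−1)! + d(d−1)^{d−1}}`. -/
noncomputable def alphaConst (d : ℕ) : ℝ :=
  if d = 1 then 1
  else max (((d - 1).factorial : ℝ) * 2 ^ d)
    (((d - 1).factorial : ℝ) + d * ((d : ℝ) - 1) ^ (d - 1))

lemma bernoulli_key (Q : ℝ) (p : ℕ) (hp : p ≠ 0) (hQ : 0 ≤ Q) :
    (1 + Q) * (p : ℝ) ^ p ≤ ((p : ℝ) + Q) ^ p := by
  have hP : (0:ℝ) < p := by positivity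
  have h0 : (0:ℝ) ≤ Q / p := by positivity
  have h := one_add_mul_le_pow (by linarith : (-2:ℝ) ≤ Q / (p:ℝ)) p
  have hmul : (p : ℝ) * (Q / p) = Q := by field_simp
  calc (1 + Q) * (p:ℝ)^p = (1 + (p:ℝ) * (Q/p)) * (p:ℝ)^p := by rw [hmul]
    _ ≤ (1 + Q/p)^p * (p:ℝ)^p := by
        apply mul_le_mul_of_nonneg_right h (by positivity)
    _ = ((1 + Q/p) * p)^p := by rw [mul_pow]
    _ = ((p:ℝ) + Q)^p := by rw [show (1 + Q/(p:ℝ)) * p = p + Q by field_simp]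

/-- for all `m ≥ 1`, `1 ≤ k ≤ m` and `c₂ ≥ 1`, the prefactor satisfies
`β(d−1, d(m−k), k, c₂ (m−k)^{(d+1)/d}) ≤ α_d`. -/
theorem betaPrefactor_le_alphaConst
    (d : ℕ) (hd : 1 ≤ d) (c₂ : ℝ) (hc₂ : 1 ≤ c₂)
    (m k : ℕ) (hm : 1 ≤ m) (hk1 : 1 ≤ k) (hkm : k ≤ m) :
    betaPrefactor (d - 1) (d * (m - k)) k
        (c₂ * ((m - k : ℕ) : ℝ) ^ (((d : ℝ) + 1) / d))
      ≤ alphaConst d := by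
  rcases eq_or_lt_of_le hd with h1 | hd2
  · -- d = 1
    rw [betaPrefactor, alphaConst, if_pos h1.symm, if_pos (by omega)]
  · -- d ≥ 2
    have hd2' : 2 ≤ d := hd2
    have hq : d - 1 ≠ 0 := by omega
    rw [alphaConst, if_neg (by omega)]
    rcases eq_or_lt_of_le hkm with hmk | hlt
    · -- k = m : p = 0
      have hp0 : d * (m - k) = 0 := by
        have : m - k = 0 := by omega
        rw [this, Nat.mul_zero]
      rw [betaPrefactor, if_neg hq, hp0, if_pos rfl]
      refine le_trans ?_ (le_max_left _ _)
      rw [show d - 1 + 1 = d from by omega]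
    · -- k < m
      set t := m - k with ht
      have htpos : 1 ≤ t := by omega
      have hp : d * t ≠ 0 := by positivity
      rw [betaPrefactor, if_neg hq, if_neg hp]
      refine le_trans ?_ (le_max_right _ _)
      set q := d - 1 with hqdef
      set p := d * t with hpdef
      have hK1 : (1:ℝ) ≤ (k:ℝ) := by exact_mod_cast hk1
      have hKq : (1:ℝ) ≤ (k:ℝ) ^ q := one_le_pow₀ hK1
      have hT1 : (1:ℝ) ≤ (t:ℝ) := by exact_mod_cast htpos
      have hQcast : ((q:ℕ):ℝ) = (d:ℝ) - 1 := by
        rw [hqdef]; push_cast [Nat.cast_sub hd]; ring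
      have hQ1 : (1:ℝ) ≤ (q:ℝ) := by rw [hQcast]; exact_mod_cast by omega
      -- bound γ from below by t
      set γ := c₂ * ((t : ℕ) : ℝ) ^ (((d : ℝ) + 1) / d) with hγdef
      have hdpos : (0:ℝ) < d := by positivity
      have he1 : (1:ℝ) ≤ ((d:ℝ) + 1) / d := by
        rw [le_div_iff₀ hdpos]; linarith
      have hγT : (t:ℝ) ≤ γ := by
        have h1 : (t:ℝ) = ((t:ℕ):ℝ) ^ (1:ℝ) := by rw [Real.rpow_one]
        have h2 : ((t:ℕ):ℝ) ^ (1:ℝ) ≤ ((t:ℕ):ℝ) ^ (((d:ℝ)+1)/d) :=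
          Real.rpow_le_rpow_of_exponent_le hT1 he1
        calc (t:ℝ) = ((t:ℕ):ℝ) ^ (1:ℝ) := h1
          _ ≤ ((t:ℕ):ℝ) ^ (((d:ℝ)+1)/d) := h2
          _ ≤ c₂ * ((t:ℕ):ℝ) ^ (((d:ℝ)+1)/d) :=
              le_mul_of_one_le_left
                (Real.rpow_nonneg (by positivity) _) hc₂
      have hγ0 : (0:ℝ) ≤ γ := le_trans (by linarith) hγT
      -- the two summand bounds
      have hfirst : ((q.factorial : ℝ)) / (k:ℝ) ^ (q + 1) ≤ (q.factorial : ℝ) :=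
        div_le_self (by positivity) (one_le_pow₀ hK1)
      have hPQpos : (0:ℝ) < ((p:ℝ) + q) ^ p := by positivity
      have hDpos : (0:ℝ) < (k:ℝ) ^ q * (1 + γ) * ((p:ℝ) + q) ^ p := by positivity
      have hB := bernoulli_key ((q:ℕ):ℝ) p hp (by linarith)
      have hPQ1 : (p:ℝ) + (q:ℝ) + 1 = (1 + (q:ℝ)) * (1 + (t:ℝ)) := by
        have hpcast : ((p:ℕ):ℝ) = (d:ℝ) * t := by rw [hpdef]; push_cast; ring
        rw [hpcast, hQcast]; ring
      have hsecond : (p : ℝ) ^ p * (q : ℝ) ^ q * ((p : ℝ) + q + 1) /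
          ((k : ℝ) ^ q * (1 + γ) * ((p : ℝ) + q) ^ p) ≤ (d:ℝ) * ((d:ℝ) - 1) ^ q := by
        rw [div_le_iff₀ hDpos]
        have hQq0 : (0:ℝ) ≤ (q:ℝ)^q := by positivity
        have step1 : (p : ℝ) ^ p * (q : ℝ) ^ q * ((p : ℝ) + q + 1)
            ≤ (q:ℝ)^q * ((1 + γ) * ((p:ℝ) + q) ^ p) := by
          rw [hPQ1]
          have h1 : (1 + (q:ℝ)) * (p:ℝ)^p * (1 + (t:ℝ)) ≤ ((p:ℝ)+q)^p * (1 + γ) := by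
            apply mul_le_mul hB (by linarith) (by linarith) (by positivity)
          calc (p:ℝ)^p * (q:ℝ)^q * ((1 + (q:ℝ)) * (1 + (t:ℝ)))
              = (q:ℝ)^q * ((1 + (q:ℝ)) * (p:ℝ)^p * (1 + (t:ℝ))) := by ring
            _ ≤ (q:ℝ)^q * (((p:ℝ)+q)^p * (1 + γ)) :=
                mul_le_mul_of_nonneg_left h1 hQq0
            _ = (q:ℝ)^q * ((1 + γ) * ((p:ℝ)+q)^p) := by ring
        have hd1 : (1:ℝ) ≤ (d:ℝ) := by exact_mod_cast hd
        calc (p : ℝ) ^ p * (q : ℝ) ^ q * ((p : ℝ) + q + 1)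
            ≤ (q:ℝ)^q * ((1 + γ) * ((p:ℝ) + q) ^ p) := step1
          _ ≤ (d:ℝ) * ((d:ℝ)-1)^q * ((k:ℝ)^q * (1 + γ) * ((p:ℝ) + q) ^ p) := by
              rw [← hQcast]
              have hdK : (1:ℝ) ≤ (d:ℝ) * (k:ℝ)^q := by nlinarith
              have hnn : (0:ℝ) ≤ (q:ℝ)^q * ((1 + γ) * ((p:ℝ) + q) ^ p) := by
                apply mul_nonneg hQq0
                apply mul_nonneg (by linarith) hPQpos.le
              calc (q:ℝ)^q * ((1 + γ) * ((p:ℝ) + q) ^ p)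
                  ≤ ((d:ℝ) * (k:ℝ)^q) * ((q:ℝ)^q * ((1 + γ) * ((p:ℝ) + q) ^ p)) :=
                    le_mul_of_one_le_left hnn hdK
                _ = (d:ℝ) * (q:ℝ)^q * ((k:ℝ)^q * (1 + γ) * ((p:ℝ) + q) ^ p) := by ring
      calc (q.factorial : ℝ) / (k:ℝ) ^ (q + 1) +
            (p : ℝ) ^ p * (q : ℝ) ^ q * ((p : ℝ) + q + 1) /
              ((k : ℝ) ^ q * (1 + γ) * ((p : ℝ) + q) ^ p)
          ≤ (q.factorial : ℝ) + (d:ℝ) * ((d:ℝ) - 1) ^ q := add_le_add hfirst hsecond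
        _ = ((d-1).factorial : ℝ) + (d:ℝ) * ((d:ℝ) - 1) ^ (d-1) := rfl
end

section
/- Let Ω ⊂ ℝ^d, and let constants C₀, η, α, c > 0 and p ≥ 1 be given. Let f be a real-valued function on the finite multisets of Ω. Suppose that for each N ≥ 2 there are a constant V_{0N} ∈ ℝ and symmetric functions V_{nN} : Ω^n → ℝ (1 ≤ n ≤ N) such that the function f_N([x₁,…,x_M]) := V_{0N} + Σ_{n=1}^N Σ_{1 ≤ j₁ < … < j_n ≤ M} V_{nN}(x_{j₁},…,x_{j_n}) satisfies |f(𝐱) − f_N(𝐱)| ≤ C₀ e^{−ηN} for every finite multiset 𝐱 of Ω; and suppose that for each n, N, D there are functions V_{nND} : Ω^n → ℝ with |V_{nN}(x₁,…,x_n) − V_{nND}(x₁,…,x_n)| ≤ C₀ c^n e^{−αD} for all x₁,…,x_n ∈ Ω. Define f_{N,D} like f_N but with V_{nND} in place of V_{nN}. Then there exist constants c₁, C > 0 (depending only on C₀, η, α, c, p) such that, taking D = ⌈c₁ N log N⌉, for all N ≥ 2 and all finite multisets 𝐱 = [x₁,…,x_M] of Ω with M ≤ N^p, |f(𝐱) −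 f_{N,D}(𝐱)| ≤ C e^{−ηN}. -/
open scoped BigOperators

/-- The cluster (many-body) expansion
`V₀ + ∑_{n=1}^N ∑_{j₁<…<j_n} V_n(x_{j₁},…,x_{j_n})`, where the `n = 0` term is the
constant `V 0`; the inner sum runs over `n`-element subsets of `{1,…,M}` enumerated in
increasing order. -/
noncomputable def clusterSum (d M : ℕ) (x : Fin M → (Fin d → ℝ))
    (V : (n : ℕ) → (Fin n → (Fin d → ℝ)) → ℝ) (N : ℕ) : ℝ :=
  ∑ n ∈ Finset.range (N + 1),
    ∑ s ∈ (Finset.powersetCard n (Finset.univ : Finset (Fin M))).attach,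
      V n (fun i =>
        x ((s.1.orderIsoOfFin ((Finset.mem_powersetCard.mp s.2).2) i).1))

/-- error estimate for the cluster expansion of a multiset function with
polynomially-approximated body-ordered components, with degree `D = ⌈c₁ N log N⌉`. -/
theorem multiset_cluster_expansion_rate
    (d : ℕ) (Ω : Set (Fin d → ℝ)) (C₀ η α c p : ℝ)
    (hC₀ : 0 < C₀) (hη : 0 < η) (hα : 0 < α) (hc : 0 < c) (hp : 1 ≤ p)
    (f : Multiset (Fin d → ℝ) → ℝ)
    (V : (n N : ℕ) → (Fin n → (Fin d → ℝ)) → ℝ)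
    (VD : (n N D : ℕ) → (Fin n → (Fin d → ℝ)) → ℝ)
    (hVsym : ∀ n N : ℕ, ∀ σ : Equiv.Perm (Fin n), ∀ y : Fin n → (Fin d → ℝ),
      (∀ i, y i ∈ Ω) → V n N (y ∘ σ) = V n N y)
    (hbody : ∀ N : ℕ, 2 ≤ N → ∀ M : ℕ, ∀ x : Fin M → (Fin d → ℝ),
      (∀ j, x j ∈ Ω) →
      |f (Multiset.map x Finset.univ.val) - clusterSum d M x (fun n => V n N) N|
        ≤ C₀ * Real.exp (-η * N))
    (hVD : ∀ n N D : ℕ, ∀ y : Fin n → (Fin d → ℝ), (∀ i, y i ∈ Ω) →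
      |V n N y - VD n N D y| ≤ C₀ * c ^ n * Real.exp (-α * D)) :
    ∃ c₁ C : ℝ, 0 < c₁ ∧ 0 < C ∧
      ∀ N : ℕ, 2 ≤ N → ∀ M : ℕ, ∀ x : Fin M → (Fin d → ℝ),
        (∀ j, x j ∈ Ω) → (M : ℝ) ≤ (N : ℝ) ^ p →
        |f (Multiset.map x Finset.univ.val) -
            clusterSum d M x (fun n => VD n N ⌈c₁ * N * Real.log N⌉₊) N|
          ≤ C * Real.exp (-η * N) := by
  have hlog2 : 0 < Real.log 2 := Real.log_pos one_lt_two
  set K := Real.log (max c 1) with hKdef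
  have hK0 : 0 ≤ K := Real.log_nonneg (le_max_right _ _)
  have hA : 0 < 1 + K + η := by linarith
  have hc₁pos : 0 < ((1 + K + η) / Real.log 2 + p) / α := by
    apply div_pos _ hα
    have h := div_pos hA hlog2
    linarith
  refine ⟨((1 + K + η) / Real.log 2 + p) / α, 2 * C₀, hc₁pos, by linarith, ?_⟩
  intro N hN M x hx hM
  set c₁ := ((1 + K + η) / Real.log 2 + p) / α with hc₁def
  set D := ⌈c₁ * N * Real.log N⌉₊ with hDdef
  set E := Real.exp (-α * D) with hEdef
  have hE0 : 0 < E := Real.exp_pos _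
  have hN2 : (2:ℝ) ≤ N := by exact_mod_cast hN
  have hN1 : (1:ℝ) ≤ N := by linarith
  have hL : Real.log 2 ≤ Real.log N := Real.log_le_log (by norm_num) hN2
  have hL0 : 0 < Real.log N := lt_of_lt_of_le hlog2 hL
  set B := (N:ℝ) ^ p * max c 1 with hBdef
  have hNp1 : (1:ℝ) ≤ (N:ℝ) ^ p := Real.one_le_rpow hN1 (by linarith)
  have hB1 : (1:ℝ) ≤ B := by
    have := mul_le_mul hNp1 (le_max_right c 1) one_pos.le (by linarith)
    simpa using this
  have hB0 : 0 < B := lt_of_lt_of_le one_pos hB1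
  -- difference of cluster sums
  have hdiff : |clusterSum d M x (fun n => V n N) N - clusterSum d M x (fun n => VD n N D) N|
      ≤ ∑ n ∈ Finset.range (N + 1), (M.choose n : ℝ) * (C₀ * c ^ n * E) := by
    unfold clusterSum
    rw [← Finset.sum_sub_distrib]
    refine (Finset.abs_sum_le_sum_abs _ _).trans (Finset.sum_le_sum ?_)
    intro n _
    rw [← Finset.sum_sub_distrib]
    refine (Finset.abs_sum_le_sum_abs _ _).trans ?_
    have hcard : (Finset.powersetCard n (Finset.univ : Finset (Fin M))).attach.card
        = M.choose n := by
      simp [Finset.card_attach, Finset.card_powersetCard]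
    refine le_trans (Finset.sum_le_sum
      (fun s _ => hVD n N D _ (fun i => hx _))) ?_
    rw [Finset.sum_const, hcard, nsmul_eq_mul, hEdef]
  -- numeric bound on the sum
  have hsum : ∑ n ∈ Finset.range (N + 1), (M.choose n : ℝ) * (C₀ * c ^ n * E)
      ≤ ((N:ℝ) + 1) * (B ^ N * (C₀ * E)) := by
    have hterm : ∀ n ∈ Finset.range (N + 1),
        (M.choose n : ℝ) * (C₀ * c ^ n * E) ≤ B ^ N * (C₀ * E) := by
      intro n hn
      have h1 : (M.choose n : ℝ) ≤ (M:ℝ) ^ n := by exact_mod_cast Nat.choose_le_pow M n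
      have h2 : (M:ℝ) ^ n ≤ ((N:ℝ) ^ p) ^ n := pow_le_pow_left₀ (Nat.cast_nonneg M) hM n
      have h3 : c ^ n ≤ (max c 1) ^ n := pow_le_pow_left₀ hc.le (le_max_left _ _) n
      have h4 : (M.choose n : ℝ) * c ^ n ≤ B ^ N := by
        calc (M.choose n : ℝ) * c ^ n ≤ ((N:ℝ) ^ p) ^ n * (max c 1) ^ n :=
              mul_le_mul (h1.trans h2) h3 (pow_nonneg hc.le n) (by positivity)
          _ = B ^ n := (mul_pow _ _ n).symm
          _ ≤ B ^ N := pow_le_pow_right₀ hB1 (Nat.lt_succ_iff.mp (Finset.mem_range.mp hn))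
      have h5 : 0 ≤ C₀ * E := by positivity
      calc (M.choose n : ℝ) * (C₀ * c ^ n * E)
          = ((M.choose n : ℝ) * c ^ n) * (C₀ * E) := by ring
        _ ≤ B ^ N * (C₀ * E) := mul_le_mul_of_nonneg_right h4 h5
    calc ∑ n ∈ Finset.range (N + 1), (M.choose n : ℝ) * (C₀ * c ^ n * E)
        ≤ ∑ _n ∈ Finset.range (N + 1), B ^ N * (C₀ * E) := Finset.sum_le_sum hterm
      _ = ((N:ℝ) + 1) * (B ^ N * (C₀ * E)) := by
          rw [Finset.sum_const, Finset.card_range, nsmul_eq_mul]; push_cast; ring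
  -- exponential bound
  have hfinal : ((N:ℝ) + 1) * (B ^ N * (C₀ * E)) ≤ C₀ * Real.exp (-η * N) := by
    have hD : c₁ * N * Real.log N ≤ (D:ℝ) := Nat.le_ceil _
    have hEle : E ≤ Real.exp (-(α * (c₁ * N * Real.log N))) := by
      rw [hEdef]
      apply Real.exp_le_exp.mpr
      have := mul_le_mul_of_nonneg_left hD hα.le
      linarith
    have hlogB : Real.log B = p * Real.log N + K := by
      rw [hBdef, Real.log_mul (by positivity) (by positivity),
        Real.log_rpow (by positivity), hKdef]
    have hBN : B ^ N = Real.exp ((N:ℝ) * Real.log B) := by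
      rw [← Real.exp_log (pow_pos hB0 N), Real.log_pow]
    have hNexp : ((N:ℝ) + 1) ≤ Real.exp N := Real.add_one_le_exp (N:ℝ)
    have key : (N:ℝ) + (N:ℝ) * Real.log B + (-(α * (c₁ * N * Real.log N))) ≤ -η * N := by
      rw [hlogB]
      have hαc₁ : α * c₁ = (1 + K + η) / Real.log 2 + p := by
        rw [hc₁def]; field_simp
      have key2 : (1 + K + η) * (N:ℝ) ≤ ((1 + K + η) / Real.log 2) * ((N:ℝ) * Real.log N) := by
        rw [div_mul_eq_mul_div, le_div_iff₀ hlog2]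
        nlinarith [mul_le_mul_of_nonneg_left hL (by positivity : (0:ℝ) ≤ (1 + K + η) * N)]
      have hexpand : α * (c₁ * N * Real.log N)
          = ((1 + K + η) / Real.log 2) * ((N:ℝ) * Real.log N) + p * ((N:ℝ) * Real.log N) := by
        have : α * (c₁ * N * Real.log N) = (α * c₁) * (N * Real.log N) := by ring
        rw [this, hαc₁]; ring
      rw [hexpand]; nlinarith
    calc ((N:ℝ) + 1) * (B ^ N * (C₀ * E))
        = C₀ * (((N:ℝ) + 1) * B ^ N * E) := by ring
      _ ≤ C₀ * Real.exp ((N:ℝ) + (N:ℝ) * Real.log B + (-(α * (c₁ * N * Real.log N)))) := by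
          apply mul_le_mul_of_nonneg_left _ hC₀.le
          rw [Real.exp_add, Real.exp_add, hBN]
          exact mul_le_mul (mul_le_mul hNexp le_rfl (by positivity) (Real.exp_pos _).le)
            hEle hE0.le (by positivity)
      _ ≤ C₀ * Real.exp (-η * N) :=
          mul_le_mul_of_nonneg_left (Real.exp_le_exp.mpr key) hC₀.le
  have h1 := hbody N hN M x hx
  have htri := abs_sub_le (f (Multiset.map x Finset.univ.val))
    (clusterSum d M x (fun n => V n N) N)
    (clusterSum d M x (fun n => VD n N D) N)
  have h2 := hdiff.trans (hsum.trans hfinal)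
  calc |f (Multiset.map x Finset.univ.val) - clusterSum d M x (fun n => VD n N D) N|
      ≤ _ := htri
    _ ≤ C₀ * Real.exp (-η * N) + C₀ * Real.exp (-η * N) := add_le_add h1 h2
    _ = 2 * C₀ * Real.exp (-η * N) := by ring
end
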